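/- arXiv:1705.08823 — 10 statements merged into one kernel-verified Lean document; each statement's English description precedes it below -/
import Mathlib

section
/- Under the stated assumptions, for each t ∈ [0,r) and each x ∈ Ω there exists a unique real number τ(t,x) ≥ 0 satisfying ∫_{t−τ(t,x)}^{t} f(A(s,·))(x) ds = ∫_{−τ₀(x)}^{0} f(φ(s,·))(x) ds, and moreover this unique value satisfies 0 ≤ τ(t,x) ≤ t + τ₀(x). -/
open scoped NNReal
open MeasureTheory intervalIntegral Set

/-- For each `t ∈ [0,r)` and each `x ∈ Ω` there exists a unique
`τ(t,x) ≥ 0` satisfying the integral equation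
`∫_{t−τ(t,x)}^{t} f(A(s,·))(x) ds = ∫_{−τ₀(x)}^{0} f(φ(s,·))(x) ds`,
and moreover the unique value satisfies `0 ≤ τ(t,x) ≤ t + τ₀(x)`. -/
theorem stmt_0
    {n : ℕ} (hn : 1 ≤ n)
    (Ω : Set (EuclideanSpace ℝ (Fin n))) (hΩ : IsCompact Ω) [CompactSpace Ω]
    (f : C(Ω, ℝ) → C(Ω, ℝ)) (Kf : ℝ≥0) (hf_lip : LipschitzWith Kf f)
    (hf_mono : ∀ u v : C(Ω, ℝ), u ≤ v → f v ≤ f u)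
    (Mbar : ℝ) (hMbar : 0 < Mbar)
    (hf_bdd : ∀ (ψ : C(Ω, ℝ)) (x : Ω), 0 < f ψ x ∧ f ψ x ≤ Mbar)
    (φ : ℝ → C(Ω, ℝ)) (hφcont : ContinuousOn φ (Set.Iic 0))
    (τ₀ : C(Ω, ℝ)) (hτ₀ : ∀ x, 0 ≤ τ₀ x)
    (r : EReal) (hr : 0 < r)
    (A : ℝ → C(Ω, ℝ)) (hAcont : ContinuousOn A {t : ℝ | (t : EReal) < r})
    (hA0 : ∀ t ≤ (0 : ℝ), A t = φ t) :
    ∀ t : ℝ, 0 ≤ t → (t : EReal) < r → ∀ x : Ω,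
      (∃! τ : ℝ, 0 ≤ τ ∧
        (∫ s in (t - τ)..t, f (A s) x) = ∫ s in (-(τ₀ x))..(0 : ℝ), f (φ s) x) ∧
      (∀ τ : ℝ, 0 ≤ τ →
        (∫ s in (t - τ)..t, f (A s) x) = (∫ s in (-(τ₀ x))..(0 : ℝ), f (φ s) x) →
        τ ≤ t + τ₀ x) := by
  intro t ht0 htr x
  set F : ℝ → ℝ := fun s => f (A s) x with hFdef
  have hFpos : ∀ s, 0 < F s := fun s => (hf_bdd (A s) x).1
  -- continuity of F on {s | s < r}
  have hFc : ContinuousOn F {s : ℝ | (s : EReal) < r} := by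
    have h1 : Continuous fun g : C(Ω, ℝ) => g x := continuous_eval_const x
    exact (h1.comp hf_lip.continuous).comp_continuousOn hAcont
  have hmemS : ∀ s : ℝ, s ≤ t → (s : EReal) < r := fun s hs =>
    lt_of_le_of_lt (EReal.coe_le_coe_iff.mpr hs) htr
  have hFcIic : ContinuousOn F (Set.Iic t) :=
    hFc.mono (fun s hs => hmemS s hs)
  have hint : ∀ a b : ℝ, a ≤ t → b ≤ t → IntervalIntegrable F volume a b := by
    intro a b ha hb
    apply (hFcIic.mono ?_).intervalIntegrable
    intro s hs
    have h2 : s ≤ a ⊔ b := hs.2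
    exact le_trans h2 (sup_le ha hb)
  have hsplit : ∀ a b : ℝ, a ≤ t → b ≤ t →
      (∫ s in a..b, F s) + (∫ s in b..t, F s) = ∫ s in a..t, F s := fun a b ha hb =>
    intervalIntegral.integral_add_adjacent_intervals (hint a b ha hb) (hint b t hb le_rfl)
  set g : ℝ → ℝ := fun τ => ∫ s in (t - τ)..t, F s with hgdef
  -- strict monotonicity of g on [0, ∞)
  have hmono : ∀ a b : ℝ, 0 ≤ a → a < b → g a < g b := by
    intro a b ha hab
    have h1 : t - b ≤ t := by linarith
    have h2 : t - a ≤ t := by linarith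
    have h3 := hsplit (t - b) (t - a) h1 h2
    have h4 : 0 < ∫ s in (t - b)..(t - a), F s :=
      intervalIntegral.intervalIntegral_pos_of_pos (hint _ _ h1 h2) hFpos (by linarith)
    simp only [hgdef]
    linarith
  set T : ℝ := t + τ₀ x with hTdef
  have hT0 : 0 ≤ T := by have := hτ₀ x; simp only [hTdef]; linarith
  have ha_le : -(τ₀ x) ≤ t := by have := hτ₀ x; linarith
  -- the target value c
  set c : ℝ := ∫ s in (-(τ₀ x))..(0 : ℝ), f (φ s) x with hcdef
  have hc_eq : c = ∫ s in (-(τ₀ x))..(0 : ℝ), F s := by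
    apply intervalIntegral.integral_congr
    intro s hs
    have hs0 : s ≤ 0 := le_trans hs.2 (sup_le (by have := hτ₀ x; linarith) le_rfl)
    simp only [hFdef, hA0 s hs0]
  have hc_nonneg : 0 ≤ c := by
    rw [hc_eq]
    exact intervalIntegral.integral_nonneg (by have := hτ₀ x; linarith)
      (fun u _ => (hFpos u).le)
  have hgT : c ≤ g T := by
    have hsT : t - T = -(τ₀ x) := by simp only [hTdef]; ring
    have h3 := hsplit (-(τ₀ x)) 0 ha_le ht0
    have h4 : 0 ≤ ∫ s in (0:ℝ)..t, F s :=
      intervalIntegral.integral_nonneg ht0 (fun u _ => (hFpos u).le)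
    simp only [hgdef, hsT]
    rw [hc_eq]
    linarith
  have hg0 : g 0 = 0 := by simp [hgdef]
  -- continuity of g on [0, T]
  have hP : ContinuousOn (fun u => ∫ s in (-(τ₀ x))..u, F s) (Set.uIcc (-(τ₀ x)) t) := by
    apply intervalIntegral.continuousOn_primitive_interval
    rw [Set.uIcc_of_le ha_le]
    exact (hFcIic.mono (fun s hs => hs.2)).integrableOn_Icc
  have hgcont : ContinuousOn g (Set.Icc 0 T) := by
    have hmaps : Set.MapsTo (fun τ => t - τ) (Set.Icc 0 T) (Set.uIcc (-(τ₀ x)) t) := by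
      intro τ hτ
      rw [Set.uIcc_of_le ha_le]
      constructor <;> [skip; skip] <;> simp only [hTdef] at hτ ⊢ <;>
        [linarith [hτ.2]; linarith [hτ.1]]
    have hcomp : ContinuousOn (fun τ => (∫ s in (-(τ₀ x))..t, F s)
        - ∫ s in (-(τ₀ x))..(t - τ), F s) (Set.Icc 0 T) :=
      continuousOn_const.sub (hP.comp (continuous_const.sub continuous_id).continuousOn hmaps)
    apply hcomp.congr
    intro τ hτ
    have h1 : t - τ ≤ t := by linarith [hτ.1]
    have h3 := hsplit (-(τ₀ x)) (t - τ) ha_le h1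
    simp only [hgdef]
    linarith
  -- IVT
  obtain ⟨τ, hτmem, hτeq⟩ : c ∈ g '' Set.Icc 0 T := by
    apply intermediate_value_Icc hT0 hgcont
    rw [hg0]
    exact ⟨hc_nonneg, hgT⟩
  -- bound
  have hbound : ∀ τ' : ℝ, 0 ≤ τ' → g τ' = c → τ' ≤ T := by
    intro τ' hτ'0 heq'
    by_contra h
    push_neg at h
    have := hmono T τ' hT0 h
    linarith [hgT]
  refine ⟨⟨τ, ⟨hτmem.1, hτeq⟩, ?_⟩, fun τ' hτ'0 heq' => hbound τ' hτ'0 heq'⟩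
  intro τ' ⟨hτ'0, heq'⟩
  have heq2 : g τ' = c := heq'
  rcases lt_trichotomy τ' τ with h | h | h
  · exact absurd (hmono τ' τ hτ'0 h) (by rw [heq2, hτeq]; exact lt_irrefl c)
  · exact h
  · exact absurd (hmono τ τ' hτmem.1 h) (by rw [heq2, hτeq]; exact lt_irrefl c)
end

section
/- Let τ(t,x) be, for each t ∈ [0,r) and x ∈ Ω, the unique nonnegative solution of ∫_{t−τ(t,x)}^{t} f(A(s,·))(x) ds = ∫_{−τ₀(x)}^{0} f(φ(s,·))(x) ds. Then for each fixed x ∈ Ω the map t ↦ t − τ(t,x) is non-decreasing on [0,r); that is, t₁ ≤ t₂ in [0,r) implies t₁ − τ(t₁,x) ≤ t₂ − τ(t₂,x). -/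
open scoped NNReal
open MeasureTheory intervalIntegral Set

/-- for each fixed x ∈ Ω the map t ↦ t − τ(t,x) is non-decreasing on [0,r). -/
theorem stmt_1
    {n : ℕ} (hn : 1 ≤ n)
    (Ω : Set (EuclideanSpace ℝ (Fin n))) (hΩ : IsCompact Ω) [CompactSpace Ω]
    (f : C(Ω, ℝ) → C(Ω, ℝ)) (Kf : ℝ≥0) (hf_lip : LipschitzWith Kf f)
    (hf_mono : ∀ u v : C(Ω, ℝ), u ≤ v → f v ≤ f u)
    (Mbar : ℝ) (hMbar : 0 < Mbar)
    (hf_bdd : ∀ (ψ : C(Ω, ℝ)) (x : Ω), 0 < f ψ x ∧ f ψ x ≤ Mbar)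
    (φ : ℝ → C(Ω, ℝ)) (hφcont : ContinuousOn φ (Set.Iic 0))
    (τ₀ : C(Ω, ℝ)) (hτ₀ : ∀ x, 0 ≤ τ₀ x)
    (r : EReal) (hr : 0 < r)
    (A : ℝ → C(Ω, ℝ)) (hAcont : ContinuousOn A {t : ℝ | (t : EReal) < r})
    (hA0 : ∀ t ≤ (0 : ℝ), A t = φ t)
    (τ : ℝ → Ω → ℝ)
    (hτ : ∀ t : ℝ, 0 ≤ t → (t : EReal) < r → ∀ x : Ω, 0 ≤ τ t x ∧
      (∫ s in (t - τ t x)..t, f (A s) x) = ∫ s in (-(τ₀ x))..(0 : ℝ), f (φ s) x) :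
    ∀ x : Ω, ∀ t₁ t₂ : ℝ, 0 ≤ t₁ → 0 ≤ t₂ → (t₁ : EReal) < r → (t₂ : EReal) < r →
      t₁ ≤ t₂ → t₁ - τ t₁ x ≤ t₂ - τ t₂ x := by
  intro x t₁ t₂ ht₁ ht₂ hr₁ hr₂ h12
  by_contra hcon
  push_neg at hcon
  set a₁ := t₁ - τ t₁ x with ha₁
  set a₂ := t₂ - τ t₂ x with ha₂
  obtain ⟨hτ₁, he₁⟩ := hτ t₁ ht₁ hr₁ x
  obtain ⟨hτ₂, he₂⟩ := hτ t₂ ht₂ hr₂ x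
  set g : ℝ → ℝ := fun s => f (A s) x with hg
  have hgcont : ContinuousOn g {t : ℝ | (t : EReal) < r} := by
    have h1 : Continuous fun ψ : C(Ω, ℝ) => ψ x := continuous_eval_const x
    exact h1.comp_continuousOn (hf_lip.continuous.comp_continuousOn hAcont)
  have hgpos : ∀ s, 0 < g s := fun s => (hf_bdd (A s) x).1
  have hsub : ∀ u v : ℝ, v ≤ t₂ → u ≤ v → Set.uIcc u v ⊆ {t : ℝ | (t : EReal) < r} := by
    intro u v hv huv s hs
    rw [Set.uIcc_of_le huv] at hs
    have : s ≤ t₂ := le_trans hs.2 hv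
    exact lt_of_le_of_lt (EReal.coe_le_coe_iff.mpr this) hr₂
  have ha₁t₁ : a₁ ≤ t₁ := by simp [ha₁, hτ₁]
  have ha₂t₂ : a₂ ≤ t₂ := by simp [ha₂, hτ₂]
  have hint : ∀ u v : ℝ, u ≤ v → v ≤ t₂ → IntervalIntegrable g MeasureTheory.volume u v :=
    fun u v huv hv => ((hgcont.mono (hsub u v hv huv))).intervalIntegrable
  have ha₁t₂ : a₁ ≤ t₂ := le_trans ha₁t₁ h12
  have ha₂a₁ : a₂ ≤ a₁ := le_of_lt hcon
  have I1 : IntervalIntegrable g MeasureTheory.volume a₂ a₁ := hint _ _ ha₂a₁ (le_trans ha₁t₁ h12)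
  have I2 : IntervalIntegrable g MeasureTheory.volume a₁ t₁ := hint _ _ ha₁t₁ (le_trans (le_refl _) h12)
  have I3 : IntervalIntegrable g MeasureTheory.volume t₁ t₂ := hint _ _ h12 le_rfl
  have I4 : IntervalIntegrable g MeasureTheory.volume a₁ t₂ := hint _ _ ha₁t₂ le_rfl
  have I5 : IntervalIntegrable g MeasureTheory.volume a₂ t₁ := hint _ _ (le_trans ha₂a₁ ha₁t₁) h12
  have hsplit : (∫ s in a₂..t₂, g s) = (∫ s in a₂..a₁, g s) + (∫ s in a₁..t₁, g s) + (∫ s in t₁..t₂, g s) := by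
    rw [intervalIntegral.integral_add_adjacent_intervals I1 I2,
      intervalIntegral.integral_add_adjacent_intervals I5 I3]
  have heq : (∫ s in a₂..t₂, g s) = (∫ s in a₁..t₁, g s) := he₂.trans he₁.symm
  have hpos1 : 0 < ∫ s in a₂..a₁, g s :=
    intervalIntegral_pos_of_pos_on I1 (fun s _ => hgpos s) hcon
  have hpos3 : 0 ≤ ∫ s in t₁..t₂, g s :=
    intervalIntegral.integral_nonneg h12 (fun s _ => le_of_lt (hgpos s))
  linarith [hsplit, heq, hpos1, hpos3]
end

section
/- Let τ(t,x) be, for each t ∈ [0,r) and x ∈ Ω, the unique nonnegative solution of ∫_{t−τ(t,x)}^{t} f(A(s,·))(x) ds = ∫_{−τ₀(x)}^{0} f(φ(s,·))(x) ds. Then for each fixed t ∈ [0,r) the map x ↦ τ(t,x) is continuous on Ω, i.e. τ(t,·) ∈ C(Ω). -/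
open scoped NNReal
open MeasureTheory intervalIntegral Set

/-- for each fixed t ∈ [0,r) the map x ↦ τ(t,x) is continuous on Ω. -/
theorem stmt_2
    {n : ℕ} (hn : 1 ≤ n)
    (Ω : Set (EuclideanSpace ℝ (Fin n))) (hΩ : IsCompact Ω) [CompactSpace Ω]
    (f : C(Ω, ℝ) → C(Ω, ℝ)) (Kf : ℝ≥0) (hf_lip : LipschitzWith Kf f)
    (hf_mono : ∀ u v : C(Ω, ℝ), u ≤ v → f v ≤ f u)
    (Mbar : ℝ) (hMbar : 0 < Mbar)
    (hf_bdd : ∀ (ψ : C(Ω, ℝ)) (x : Ω), 0 < f ψ x ∧ f ψ x ≤ Mbar)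
    (φ : ℝ → C(Ω, ℝ)) (hφcont : ContinuousOn φ (Set.Iic 0))
    (τ₀ : C(Ω, ℝ)) (hτ₀ : ∀ x, 0 ≤ τ₀ x)
    (r : EReal) (hr : 0 < r)
    (A : ℝ → C(Ω, ℝ)) (hAcont : ContinuousOn A {t : ℝ | (t : EReal) < r})
    (hA0 : ∀ t ≤ (0 : ℝ), A t = φ t)
    (τ : ℝ → Ω → ℝ)
    (hτ : ∀ t : ℝ, 0 ≤ t → (t : EReal) < r → ∀ x : Ω, 0 ≤ τ t x ∧
      (∫ s in (t - τ t x)..t, f (A s) x) = ∫ s in (-(τ₀ x))..(0 : ℝ), f (φ s) x) :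
    ∀ t : ℝ, 0 ≤ t → (t : EReal) < r → Continuous (fun x : Ω => τ t x) := by
  intro t ht htr
  -- truncated versions of `f ∘ A` and `f ∘ φ`, continuous on all of ℝ
  set g : ℝ → C(Ω, ℝ) := fun s => f (A (min s t)) with hg_def
  set h : ℝ → C(Ω, ℝ) := fun s => f (φ (min s 0)) with hh_def
  have hmin_mem : ∀ s : ℝ, min s t ∈ {u : ℝ | (u : EReal) < r} := by
    intro s
    have : ((min s t : ℝ) : EReal) ≤ (t : EReal) := EReal.coe_le_coe_iff.mpr (min_le_right _ _)
    exact lt_of_le_of_lt this htr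
  have hg_cont : Continuous g := by
    apply hf_lip.continuous.comp
    exact hAcont.comp_continuous (continuous_id.min continuous_const) hmin_mem
  have hh_cont : Continuous h := by
    apply hf_lip.continuous.comp
    exact hφcont.comp_continuous (continuous_id.min continuous_const)
      (fun s => min_le_right s 0)
  -- joint continuity of evaluations
  have hgj : Continuous fun p : Ω × ℝ => g p.2 p.1 := by
    have : Continuous fun p : Ω × ℝ => ((g p.2 : C(Ω, ℝ)), p.1) :=
      (hg_cont.comp continuous_snd).prodMk continuous_fst
    exact continuous_eval.comp this
  have hhj : Continuous fun p : Ω × ℝ => h p.2 p.1 := by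
    have : Continuous fun p : Ω × ℝ => ((h p.2 : C(Ω, ℝ)), p.1) :=
      (hh_cont.comp continuous_snd).prodMk continuous_fst
    exact continuous_eval.comp this
  have hg_pos : ∀ (s : ℝ) (x : Ω), 0 < g s x := fun s x => (hf_bdd _ x).1
  -- the family of integrals
  set G : ℝ → Ω → ℝ := fun θ x => ∫ s in (t - θ)..t, g s x with hG_def
  set R : Ω → ℝ := fun x => ∫ s in (-(τ₀ x))..(0 : ℝ), h s x with hR_def
  have hgi : ∀ (x : Ω) (a b : ℝ), IntervalIntegrable (fun s => g s x) volume a b := by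
    intro x a b
    exact (hgj.comp (continuous_const.prodMk continuous_id)).intervalIntegrable a b
  -- continuity of G θ and R
  have hGc : ∀ θ : ℝ, Continuous fun x : Ω => G θ x := by
    intro θ
    exact intervalIntegral.continuous_parametric_intervalIntegral_of_continuous
      (f := fun (x : Ω) (s : ℝ) => g s x) (μ := volume) (a₀ := t - θ)
      (by exact hgj.comp (continuous_fst.prodMk continuous_snd)) continuous_const
  have hRc : Continuous R := by
    have h1 : Continuous fun x : Ω => ∫ s in (0 : ℝ)..(-(τ₀ x)), h s x :=
      intervalIntegral.continuous_parametric_intervalIntegral_of_continuous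
        (f := fun (x : Ω) (s : ℝ) => h s x) (μ := volume) (a₀ := (0 : ℝ))
        (by exact hhj.comp (continuous_fst.prodMk continuous_snd)) (τ₀.continuous.neg)
    have : R = fun x => -(∫ s in (0 : ℝ)..(-(τ₀ x)), h s x) := by
      funext x
      rw [hR_def, intervalIntegral.integral_symm, neg_neg]
    rw [this]
    exact h1.neg
  -- monotonicity of G in θ
  have hGadd : ∀ (x : Ω) (a b : ℝ), G b x = (∫ s in (t - b)..(t - a), g s x) + G a x := by
    intro x a b
    rw [hG_def]
    exact (intervalIntegral.integral_add_adjacent_intervals (hgi x _ _) (hgi x _ _)).symm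
  have hGmono : ∀ (x : Ω) (a b : ℝ), a ≤ b → G a x ≤ G b x := by
    intro x a b hab
    rw [hGadd x a b]
    have : 0 ≤ ∫ s in (t - b)..(t - a), g s x :=
      intervalIntegral.integral_nonneg (by linarith) (fun s _ => (hg_pos s x).le)
    linarith
  have hGstrict : ∀ (x : Ω) (a b : ℝ), a < b → G a x < G b x := by
    intro x a b hab
    rw [hGadd x a b]
    have : 0 < ∫ s in (t - b)..(t - a), g s x :=
      intervalIntegral.intervalIntegral_pos_of_pos_on (hgi x _ _)
        (fun s _ => hg_pos s x) (by linarith)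
    linarith
  -- the defining equation, in terms of G and R
  have hEq : ∀ x : Ω, G (τ t x) x = R x := by
    intro x
    obtain ⟨hτnn, hτeq⟩ := hτ t ht htr x
    have e1 : (∫ s in (t - τ t x)..t, f (A s) x) = G (τ t x) x := by
      apply intervalIntegral.integral_congr
      intro s hs
      rw [Set.uIcc_of_le (by linarith)] at hs
      simp only [hG_def, hg_def]
      rw [min_eq_left hs.2]
    have e2 : (∫ s in (-(τ₀ x))..(0 : ℝ), f (φ s) x) = R x := by
      apply intervalIntegral.integral_congr
      intro s hs
      have h0 : 0 ≤ τ₀ x := hτ₀ x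
      rw [Set.uIcc_of_le (by linarith)] at hs
      simp only [hR_def, hh_def]
      rw [min_eq_left hs.2]
    rw [← e1, ← e2, hτeq]
  -- continuity
  rw [continuous_iff_continuousAt]
  intro x₀
  have hτnn : ∀ x : Ω, 0 ≤ τ t x := fun x => (hτ t ht htr x).1
  rw [Metric.continuousAt_iff']
  intro ε hε
  set θ₀ := τ t x₀ with hθ₀
  -- upper estimate
  have hup : ∀ᶠ x in nhds x₀, R x < G (θ₀ + ε) x := by
    have hpt : R x₀ < G (θ₀ + ε) x₀ := by
      rw [← hEq x₀]; exact hGstrict x₀ θ₀ (θ₀ + ε) (by linarith)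
    exact hRc.continuousAt.eventually_lt (hGc (θ₀ + ε)).continuousAt hpt
  have hlo : ∀ᶠ x in nhds x₀, θ₀ - ε < τ t x := by
    by_cases hcase : θ₀ - ε < 0
    · exact Filter.Eventually.of_forall fun x => lt_of_lt_of_le hcase (hτnn x)
    · push_neg at hcase
      have hpt : G (θ₀ - ε) x₀ < R x₀ := by
        rw [← hEq x₀]; exact hGstrict x₀ (θ₀ - ε) θ₀ (by linarith)
      have := (hGc (θ₀ - ε)).continuousAt.eventually_lt hRc.continuousAt hpt
      filter_upwards [this] with x hx
      by_contra hcon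
      push_neg at hcon
      have := hGmono x (τ t x) (θ₀ - ε) hcon
      rw [hEq x] at this
      linarith
  filter_upwards [hup, hlo] with x hx1 hx2
  have hxu : τ t x < θ₀ + ε := by
    by_contra hcon
    push_neg at hcon
    have := hGmono x (θ₀ + ε) (τ t x) hcon
    rw [hEq x] at this
    linarith
  rw [Real.dist_eq, abs_lt]
  constructor <;> [linarith; linarith]
end

section
/- Let τ(t,x) be, for each t ∈ [0,r) and x ∈ Ω, the unique nonnegative solution of ∫_{t−τ(t,x)}^{t} f(A(s,·))(x) ds = ∫_{−τ₀(x)}^{0} f(φ(s,·))(x) ds. Then for each fixed x ∈ Ω the map t ↦ τ(t,x) is continuously differentiable on [0,r) and satisfies the ordinary differential equation ∂_t τ(t,x) = 1 − f(A(t,·))(x)/f(A(t−τ(t,x),·))(x) for all t ∈ [0,r), together with the initial condition τ(0,x) = τ₀(x). -/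
open scoped NNReal
open MeasureTheory intervalIntegral Set Asymptotics Filter

/-- the unique nonnegative solution τ(t,x) of the integral equation is,
for each fixed x, continuously differentiable in t on [0,r), satisfies the ODE
∂ₜτ(t,x) = 1 − f(A(t,·))(x)/f(A(t−τ(t,x),·))(x) on [0,r), and τ(0,x) = τ₀(x). -/
theorem stmt_3
    {n : ℕ} (hn : 1 ≤ n)
    (Ω : Set (EuclideanSpace ℝ (Fin n))) (hΩ : IsCompact Ω) [CompactSpace Ω]
    (f : C(Ω, ℝ) → C(Ω, ℝ)) (Kf : ℝ≥0) (hf_lip : LipschitzWith Kf f)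
    (hf_mono : ∀ u v : C(Ω, ℝ), u ≤ v → f v ≤ f u)
    (Mbar : ℝ) (hMbar : 0 < Mbar)
    (hf_bdd : ∀ (ψ : C(Ω, ℝ)) (x : Ω), 0 < f ψ x ∧ f ψ x ≤ Mbar)
    (φ : ℝ → C(Ω, ℝ)) (hφcont : ContinuousOn φ (Set.Iic 0))
    (τ₀ : C(Ω, ℝ)) (hτ₀ : ∀ x, 0 ≤ τ₀ x)
    (r : EReal) (hr : 0 < r)
    (A : ℝ → C(Ω, ℝ)) (hAcont : ContinuousOn A {t : ℝ | (t : EReal) < r})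
    (hA0 : ∀ t ≤ (0 : ℝ), A t = φ t)
    (τ : ℝ → Ω → ℝ)
    (hτ : ∀ t : ℝ, 0 ≤ t → (t : EReal) < r → ∀ x : Ω, 0 ≤ τ t x ∧
      (∫ s in (t - τ t x)..t, f (A s) x) = ∫ s in (-(τ₀ x))..(0 : ℝ), f (φ s) x) :
    ∀ x : Ω,
      τ 0 x = τ₀ x ∧
      (∀ t : ℝ, 0 ≤ t → (t : EReal) < r →
        HasDerivWithinAt (fun s : ℝ => τ s x)
          (1 - f (A t) x / f (A (t - τ t x)) x)
          {s : ℝ | 0 ≤ s ∧ (s : EReal) < r} t) ∧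
      ContinuousOn (fun t : ℝ => 1 - f (A t) x / f (A (t - τ t x)) x)
        {s : ℝ | 0 ≤ s ∧ (s : EReal) < r} := by
  intro x
  set S : Set ℝ := {t : ℝ | (t : EReal) < r} with hS_def
  set D : Set ℝ := {s : ℝ | 0 ≤ s ∧ (s : EReal) < r} with hD_def
  have hS_open : IsOpen S := isOpen_Iio.preimage continuous_coe_real_ereal
  have hS_dc : ∀ {s t : ℝ}, s ≤ t → t ∈ S → s ∈ S := by
    intro s t hst ht
    exact lt_of_le_of_lt (EReal.coe_le_coe_iff.mpr hst) ht
  have h0S : (0 : ℝ) ∈ S := by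
    simp only [hS_def, Set.mem_setOf_eq, EReal.coe_zero]
    exact hr
  set h : ℝ → ℝ := fun s => f (A s) x with hh_def
  have hpos : ∀ s, 0 < h s := fun s => (hf_bdd (A s) x).1
  have hMb : ∀ s, h s ≤ Mbar := fun s => (hf_bdd (A s) x).2
  have hhcont : ContinuousOn h S := by
    have h1 : Continuous fun g : C(Ω, ℝ) => (f g) x :=
      (ContinuousEvalConst.continuous_eval_const x).comp hf_lip.continuous
    exact h1.comp_continuousOn hAcont
  have hInt : ∀ a ∈ S, ∀ b ∈ S, IntervalIntegrable h volume a b := by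
    intro a ha b hb
    apply (hhcont.mono ?_).intervalIntegrable
    intro s hs
    rcases le_total a b with hab | hab
    · rw [uIcc_of_le hab] at hs; exact hS_dc hs.2 hb
    · rw [uIcc_of_ge hab] at hs; exact hS_dc hs.2 ha
  set F : ℝ → ℝ := fun t => ∫ s in (0:ℝ)..t, h s with hF_def
  have hF_deriv : ∀ u ∈ S, HasDerivAt F (h u) u := by
    intro u hu
    exact intervalIntegral.integral_hasDerivAt_right (hInt 0 h0S u hu)
      (hhcont.stronglyMeasurableAtFilter hS_open u hu)
      (hhcont.continuousAt (hS_open.mem_nhds hu))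
  have hF_sub : ∀ a ∈ S, ∀ b ∈ S, F b - F a = ∫ s in a..b, h s := by
    intro a ha b hb
    exact intervalIntegral.integral_interval_sub_left (hInt 0 h0S b hb) (hInt 0 h0S a ha)
  have hF_lt : ∀ a ∈ S, ∀ b ∈ S, a < b → F a < F b := by
    intro a ha b hb hab
    have h1 := intervalIntegral.intervalIntegral_pos_of_pos_on (hInt a ha b hb)
      (fun s _ => hpos s) hab
    have h2 := hF_sub a ha b hb
    linarith
  have hF_le : ∀ a ∈ S, ∀ b ∈ S, a ≤ b → F a ≤ F b := by
    intro a ha b hb hab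
    rcases eq_or_lt_of_le hab with rfl | hab
    · exact le_rfl
    · exact (hF_lt a ha b hb hab).le
  have hF_inj : ∀ a ∈ S, ∀ b ∈ S, F a = F b → a = b := by
    intro a ha b hb hab
    by_contra hne
    rcases lt_or_gt_of_ne hne with hl | hl
    · exact absurd hab (hF_lt a ha b hb hl).ne
    · exact absurd hab.symm (hF_lt b hb a ha hl).ne
  have hτ₀S : (-(τ₀ x) : ℝ) ∈ S := hS_dc (neg_nonpos.mpr (hτ₀ x)) h0S
  set σ : ℝ → ℝ := fun s => s - τ s x with hσ_def
  have hDmem : ∀ s : ℝ, s ∈ D → 0 ≤ s ∧ (s : EReal) < r := fun s hs => hs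
  have hDS : ∀ s : ℝ, s ∈ D → s ∈ S := fun s hs => hs.2
  have hτnn : ∀ s ∈ D, 0 ≤ τ s x := fun s hs => (hτ s hs.1 hs.2 x).1
  have hσ_le : ∀ s ∈ D, σ s ≤ s := by
    intro s hs
    have := hτnn s hs
    simp only [hσ_def]
    linarith
  have hσS : ∀ s ∈ D, σ s ∈ S := fun s hs => hS_dc (hσ_le s hs) (hDS s hs)
  have hEq : ∀ t ∈ D, F (σ t) = F t - (F 0 - F (-(τ₀ x))) := by
    intro t ht
    obtain ⟨htpos, heq⟩ := hτ t ht.1 ht.2 x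
    have htS : t ∈ S := ht.2
    have hcS : σ t ∈ S := hσS t ht
    have hrhs : (∫ s in (-(τ₀ x))..(0:ℝ), f (φ s) x) = F 0 - F (-(τ₀ x)) := by
      rw [hF_sub _ hτ₀S _ h0S]
      apply intervalIntegral.integral_congr
      intro s hs
      have hs0 : s ≤ 0 := by
        rw [uIcc_of_le (neg_nonpos.mpr (hτ₀ x))] at hs; exact hs.2
      simp only [hh_def, hA0 s hs0]
    have hlhs : (∫ s in (t - τ t x)..t, f (A s) x) = F t - F (σ t) :=
      (hF_sub _ hcS _ htS).symm
    rw [hlhs, hrhs] at heq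
    linarith
  have h0D : (0:ℝ) ∈ D := ⟨le_rfl, h0S⟩
  have hpart1 : τ 0 x = τ₀ x := by
    have he := hEq 0 h0D
    have hσ0S : σ 0 ∈ S := hσS 0 h0D
    have := hF_inj _ hσ0S _ hτ₀S (by linarith)
    simp only [hσ_def] at this
    linarith
  have hσ_mono : ∀ s ∈ D, ∀ s' ∈ D, s ≤ s' → σ s ≤ σ s' := by
    intro s hs s' hs' hss
    by_contra hlt
    push_neg at hlt
    have h1 := hF_lt _ (hσS s' hs') _ (hσS s hs) hlt
    have h2 := hF_le _ (hDS s hs) _ (hDS s' hs') hss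
    have e1 := hEq s hs; have e2 := hEq s' hs'
    linarith
  have key : ∀ t ∈ D, HasDerivWithinAt σ (h t / h (σ t)) D t := by
    intro t ht
    obtain ⟨b, htb, hbr⟩ := EReal.lt_iff_exists_real_btwn.mp ht.2
    have htb' : t < b := EReal.coe_lt_coe_iff.mp htb
    have hbS : b ∈ S := hbr
    set a : ℝ := -(τ₀ x) with ha_def
    have hab : a ≤ b := by
      have h1 := hτ₀ x
      have h2 := ht.1
      simp only [ha_def]
      linarith
    have hKS : Icc a b ⊆ S := fun s hs => hS_dc hs.2 hbS
    have hσ0 : σ 0 = a := by simp [hσ_def, hpart1, ha_def]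
    have hσK : ∀ s ∈ D, s ≤ b → σ s ∈ Icc a b := by
      intro s hs hsb
      refine ⟨?_, le_trans (hσ_le s hs) hsb⟩
      rw [← hσ0]; exact hσ_mono 0 h0D s hs hs.1
    obtain ⟨z, hz, hzmin⟩ := isCompact_Icc.exists_isMinOn (nonempty_Icc.mpr hab)
      (hhcont.mono hKS)
    set m : ℝ := h z with hm_def
    have hm_pos : 0 < m := hpos z
    have hm : ∀ s ∈ Icc a b, m ≤ h s := fun s hs => hzmin hs
    have hlip1 : ∀ s ∈ D, s ≤ b → ∀ s' ∈ D, s' ≤ b → s' ≤ s →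
        σ s - σ s' ≤ (Mbar / m) * (s - s') := by
      intro s hs hsb s' hs' hsb' hss
      have hσle := hσ_mono s' hs' s hs hss
      have hK := hσK s hs hsb; have hK' := hσK s' hs' hsb'
      have hInt1 : IntervalIntegrable h volume (σ s') (σ s) :=
        hInt _ (hσS s' hs') _ (hσS s hs)
      have low : m * (σ s - σ s') ≤ ∫ u in (σ s')..(σ s), h u := by
        have := intervalIntegral.integral_mono_on hσle
          (_root_.intervalIntegrable_const (c := m)) hInt1
          (fun u hu => hm u ⟨le_trans hK'.1 hu.1, le_trans hu.2 hK.2⟩)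
        simpa [mul_comm] using this
      have hi2 : (∫ u in (σ s')..(σ s), h u) = ∫ u in s'..s, h u := by
        rw [← hF_sub _ (hσS s' hs') _ (hσS s hs), ← hF_sub _ (hDS s' hs') _ (hDS s hs),
          hEq s hs, hEq s' hs']
        ring
      have up : (∫ u in s'..s, h u) ≤ Mbar * (s - s') := by
        have := intervalIntegral.integral_mono_on hss (hInt _ (hDS s' hs') _ (hDS s hs))
          (_root_.intervalIntegrable_const (c := Mbar)) (fun u _ => hMb u)
        simpa [mul_comm] using this
      rw [hi2] at low
      have hfin := le_trans low up
      rw [div_mul_eq_mul_div, le_div_iff₀ hm_pos]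
      nlinarith
    set L : ℝ := Mbar / m with hL_def
    have hL_pos : 0 < L := div_pos hMbar hm_pos
    have hlip : ∀ s ∈ D, s ≤ b → |σ s - σ t| ≤ L * |s - t| := by
      intro s hs hsb
      have htb'' : t ≤ b := htb'.le
      rcases le_total s t with hst | hst
      · have h1 := hlip1 t ht htb'' s hs hsb hst
        have h2 := hσ_mono s hs t ht hst
        rw [abs_of_nonpos (by linarith), abs_of_nonpos (by linarith)]
        linarith
      · have h1 := hlip1 s hs hsb t ht htb'' hst
        have h2 := hσ_mono t ht s hs hst
        rw [abs_of_nonneg (by linarith), abs_of_nonneg (by linarith)]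
        linarith
    have hev : ∀ᶠ s in nhdsWithin t D, s ∈ D ∧ s ≤ b := by
      filter_upwards [self_mem_nhdsWithin,
        mem_nhdsWithin_of_mem_nhds (Iio_mem_nhds htb')] with s h1 h2
      exact ⟨h1, le_of_lt h2⟩
    have hten : Tendsto (fun s : ℝ => L * |s - t|) (nhdsWithin t D) (nhds 0) := by
      have h1 : Tendsto (fun s : ℝ => L * |s - t|) (nhds t) (nhds (L * |t - t|)) :=
        (continuous_const.mul ((continuous_id.sub continuous_const).abs)).tendsto t
      simpa using h1.mono_left nhdsWithin_le_nhds
    have hcont : Tendsto σ (nhdsWithin t D) (nhds (σ t)) := by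
      rw [tendsto_iff_dist_tendsto_zero]
      refine squeeze_zero' (Eventually.of_forall fun s => dist_nonneg) ?_ hten
      filter_upwards [hev] with s hs
      rw [Real.dist_eq]
      exact hlip s hs.1 hs.2
    have hO : (fun s => σ s - σ t) =O[nhdsWithin t D] (fun s => s - t) := by
      rw [Asymptotics.isBigO_iff]
      exact ⟨L, hev.mono fun s hs => by
        simpa [Real.norm_eq_abs] using hlip s hs.1 hs.2⟩
    have huS : σ t ∈ S := hσS t ht
    have hu_pos : 0 < h (σ t) := hpos (σ t)
    have o1 : (fun s => F (σ s) - F (σ t) - (σ s - σ t) * h (σ t))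
        =o[nhdsWithin t D] (fun s => s - t) := by
      have h1 := hasDerivAt_iff_isLittleO.mp (hF_deriv (σ t) huS)
      have h2 := h1.comp_tendsto hcont
      simp only [Function.comp_def, smul_eq_mul] at h2
      exact h2.trans_isBigO hO
    have o2 : (fun s => F s - F t - (s - t) * h t) =o[nhdsWithin t D] (fun s => s - t) := by
      have h1 := hasDerivWithinAt_iff_isLittleO.mp
        ((hF_deriv t ht.2).hasDerivWithinAt (s := D))
      simpa [smul_eq_mul] using h1
    have o1' : (fun s => F s - F t - (σ s - σ t) * h (σ t))
        =o[nhdsWithin t D] (fun s => s - t) := by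
      refine o1.congr' ?_ EventuallyEq.rfl
      filter_upwards [self_mem_nhdsWithin] with s hs
      rw [hEq s hs, hEq t ht]
      ring
    have o3 := o2.sub o1'
    have o4 : (fun s => σ s - σ t - (s - t) • (h t / h (σ t)))
        =o[nhdsWithin t D] (fun s => s - t) := by
      have o5 := o3.const_mul_left (h (σ t))⁻¹
      refine o5.congr' (Eventually.of_forall fun s => ?_) EventuallyEq.rfl
      have hne : h (σ t) ≠ 0 := hu_pos.ne'
      simp only [smul_eq_mul]
      field_simp
      ring
    exact hasDerivWithinAt_iff_isLittleO.mpr o4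
  refine ⟨hpart1, ?_, ?_⟩
  · intro t ht0 htr
    have ht : t ∈ D := ⟨ht0, htr⟩
    have hd := key t ht
    have hmain : HasDerivWithinAt (fun s => s - σ s) (1 - h t / h (σ t)) D t :=
      (hasDerivWithinAt_id t D).sub hd
    have hfe : (fun s : ℝ => s - σ s) = fun s : ℝ => τ s x := by
      funext s; simp [hσ_def]
    rw [hfe] at hmain
    simpa [hh_def, hσ_def] using hmain
  · have hσcont : ContinuousOn σ D := fun t ht => (key t ht).continuousWithinAt
    have hc1 : ContinuousOn h D := hhcont.mono hDS
    have hc2 : ContinuousOn (fun t => h (σ t)) D := hhcont.comp hσcont hσS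
    have hfin : ContinuousOn (fun t => 1 - h t / h (σ t)) D :=
      continuousOn_const.sub (hc1.div hc2 (fun t _ => (hpos (σ t)).ne'))
    simpa [hh_def, hσ_def] using hfin
end

section
/- Let (φ,δ) ∈ BUC_α × C(Ω) be such that for every x ∈ Ω with δ(x) > 0 one has δ(x) < ∫_{−∞}^{0} f(φ(s,·))(x) ds. Define φ̄(s,x) := φ(s,x) for s ≤ 0 and φ̄(s,x) := φ(0,x) for s ≥ 0. Then there exists a unique function γ : Ω → ℝ such that ∫_{−γ(x)}^{0} f(φ̄(s,·))(x) ds = δ(x) for every x ∈ Ω; moreover γ is bounded and continuous on Ω, i.e. γ ∈ C(Ω). -/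
open scoped NNReal
open MeasureTheory intervalIntegral Set

/-- for (φ,δ) ∈ BUC_α × C(Ω) with δ(x) < ∫_{−∞}^0 f(φ(s,·))(x) ds whenever
δ(x) > 0, there is a unique γ : Ω → ℝ with ∫_{−γ(x)}^0 f(φ̄(s,·))(x) ds = δ(x) for all x,
where φ̄ extends φ by φ(0,·) on [0,∞); moreover γ is bounded and continuous. -/
theorem stmt_6
    {n : ℕ} (hn : 1 ≤ n)
    (Ω : Set (EuclideanSpace ℝ (Fin n))) (hΩ : IsCompact Ω) [CompactSpace Ω]
    (f : C(Ω, ℝ) → C(Ω, ℝ)) (Kf : ℝ≥0) (hf_lip : LipschitzWith Kf f)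
    (hf_mono : ∀ u v : C(Ω, ℝ), u ≤ v → f v ≤ f u)
    (Mbar : ℝ) (hMbar : 0 < Mbar)
    (hf_bdd : ∀ (ψ : C(Ω, ℝ)) (x : Ω), 0 < f ψ x ∧ f ψ x ≤ Mbar)
    (α : ℝ) (hα : 0 ≤ α)
    (φ : ℝ → C(Ω, ℝ)) (hφcont : ContinuousOn φ (Set.Iic 0))
    (hφbdd : ∃ C : ℝ, ∀ t ≤ (0 : ℝ), ‖Real.exp (-(α * |t|)) • φ t‖ ≤ C)
    (hφuc : UniformContinuousOn (fun t : ℝ => Real.exp (-(α * |t|)) • φ t) (Set.Iic 0))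
    (δ : C(Ω, ℝ))
    (hδ : ∀ x : Ω, 0 < δ x → δ x < ∫ s in Set.Iic (0 : ℝ), f (φ s) x) :
    (∃! γ : Ω → ℝ, ∀ x : Ω,
      (∫ s in (-(γ x))..(0 : ℝ), f ((fun u : ℝ => if u ≤ 0 then φ u else φ 0) s) x) = δ x) ∧
    (∀ γ : Ω → ℝ,
      (∀ x : Ω,
        (∫ s in (-(γ x))..(0 : ℝ), f ((fun u : ℝ => if u ≤ 0 then φ u else φ 0) s) x) = δ x) →
      (∃ C : ℝ, ∀ x : Ω, |γ x| ≤ C) ∧ Continuous γ) := by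
  classical
  -- the extended history and the integrand
  set F : ℝ → C(Ω, ℝ) := fun s => f (if s ≤ 0 then φ s else φ 0) with hF
  have hFeq : ∀ s : ℝ, (if s ≤ 0 then φ s else φ 0) = φ (min s 0) := by
    intro s
    split_ifs with h
    · rw [min_eq_left h]
    · rw [min_eq_right (le_of_not_ge h)]
  have hFc : Continuous F := by
    have h1 : Continuous fun s : ℝ => φ (min s 0) :=
      hφcont.comp_continuous (continuous_id.min continuous_const)
        (fun u => min_le_right u 0)
    have : Continuous fun s : ℝ => (if s ≤ 0 then φ s else φ 0) := by
      simpa only [hFeq] using h1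
    exact hf_lip.continuous.comp this
  have hFpos : ∀ (s : ℝ) (x : Ω), 0 < F s x := fun s x => (hf_bdd _ x).1
  -- pointwise integral function
  set g : Ω → ℝ → ℝ := fun x t => ∫ s in (-t)..(0 : ℝ), F s x with hg
  have hFx_cont : ∀ x : Ω, Continuous fun s => F s x :=
    fun x => (continuous_eval_const x).comp hFc
  have h_int : ∀ (x : Ω) (a b : ℝ), IntervalIntegrable (fun s => F s x) volume a b :=
    fun x a b => (hFx_cont x).intervalIntegrable a b
  -- continuity in t
  have hgx_cont : ∀ x : Ω, Continuous (g x) := by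
    intro x
    have hP : Continuous fun u : ℝ => ∫ s in (0:ℝ)..u, F s x :=
      intervalIntegral.continuous_primitive (h_int x) 0
    have : (g x) = fun t => -(∫ s in (0:ℝ)..(-t), F s x) := by
      funext t
      exact intervalIntegral.integral_symm 0 (-t)
    rw [this]
    exact (hP.comp continuous_neg).neg
  -- strict monotonicity in t
  have hg_mono : ∀ x : Ω, StrictMono (g x) := by
    intro x t₁ t₂ h12
    have hadd : (∫ s in (-t₂)..(-t₁), F s x) + ∫ s in (-t₁)..(0:ℝ), F s x
        = ∫ s in (-t₂)..(0:ℝ), F s x :=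
      intervalIntegral.integral_add_adjacent_intervals (h_int x _ _) (h_int x _ _)
    have hpos : 0 < ∫ s in (-t₂)..(-t₁), F s x :=
      intervalIntegral.intervalIntegral_pos_of_pos (h_int x _ _)
        (fun s => hFpos s x) (by linarith)
    show g x t₁ < g x t₂
    simp only [hg]
    linarith
  -- existence of a solution for each x
  have hex : ∀ x : Ω, ∃ t : ℝ, g x t = δ x := by
    intro x
    rcases le_or_gt (δ x) 0 with hle | hpos
    · -- negative side: integrand is constant f (φ 0) x
      have hc : 0 < F 0 x := hFpos 0 x
      refine ⟨δ x / F 0 x, ?_⟩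
      have ht0 : δ x / F 0 x ≤ 0 := div_nonpos_iff.2 (Or.inr ⟨hle, hc.le⟩)
      have hcongr : EqOn (fun s => F s x) (fun _ : ℝ => F 0 x)
          (Set.uIcc (-(δ x / F 0 x)) 0) := by
        intro s hs
        have hs0 : 0 ≤ s := by
          rcases hs with ⟨h1, h2⟩
          rcases le_total (-(δ x / F 0 x)) 0 with h | h
          · have : -(δ x / F 0 x) = 0 := le_antisymm h (by linarith)
            simp only [min_def, max_def] at h1 h2
            split_ifs at h1 h2 <;> linarith
          · simp only [min_def, max_def] at h1
            split_ifs at h1 <;> linarith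
        show F s x = F 0 x
        simp only [hF]
        rcases eq_or_lt_of_le hs0 with h | h
        · rw [← h]
        · rw [if_neg (not_le.2 h), if_pos le_rfl]
      have : g x (δ x / F 0 x) = ∫ s in (-(δ x / F 0 x))..(0:ℝ), F 0 x := by
        simp only [hg]
        exact intervalIntegral.integral_congr hcongr
      rw [this, intervalIntegral.integral_const, smul_eq_mul]
      field_simp
      ring
    · -- positive side
      have hδint := hδ x hpos
      by_cases hInt : IntegrableOn (fun s => f (φ s) x) (Set.Iic (0:ℝ)) volume
      · have hU : (⋃ i : ℕ, Set.Ioc (-(i:ℝ)) 0) = Set.Iic (0:ℝ) := by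
          ext s
          simp only [Set.mem_iUnion, Set.mem_Ioc, Set.mem_Iic]
          constructor
          · rintro ⟨i, _, h2⟩; exact h2
          · intro hs
            obtain ⟨i, hi⟩ := exists_nat_gt (-s)
            exact ⟨i, by linarith, hs⟩
        have hmono : Monotone fun i : ℕ => Set.Ioc (-(i:ℝ)) 0 := by
          intro i j hij
          exact Set.Ioc_subset_Ioc_left (neg_le_neg (Nat.cast_le.2 hij))
        have htends := tendsto_setIntegral_of_monotone
          (fun i : ℕ => measurableSet_Ioc) hmono (by rw [hU]; exact hInt)
        rw [hU] at htends
        have hev : ∀ᶠ i : ℕ in Filter.atTop,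
            δ x < ∫ s in Set.Ioc (-(i:ℝ)) 0, f (φ s) x :=
          htends.eventually (eventually_gt_nhds hδint)
        obtain ⟨i, hi⟩ := hev.exists
        -- g x i exceeds δ x
        have hgi : g x (i:ℝ) = ∫ s in Set.Ioc (-(i:ℝ)) 0, f (φ s) x := by
          have h1 : g x (i:ℝ) = ∫ s in Set.Ioc (-(i:ℝ)) 0, F s x := by
            simp only [hg]
            rw [intervalIntegral.integral_of_le (neg_nonpos.2 (Nat.cast_nonneg i))]
          rw [h1]
          refine setIntegral_congr_fun measurableSet_Ioc ?_
          intro s hs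
          show F s x = f (φ s) x
          simp only [hF, if_pos hs.2]
        have hgi' : δ x < g x (i:ℝ) := by rw [hgi]; exact hi
        -- intermediate value theorem on [0, i]
        have h0 : g x 0 = 0 := by simp [hg]
        have hIcc : δ x ∈ Set.Icc (g x 0) (g x (i:ℝ)) :=
          ⟨by rw [h0]; exact hpos.le, hgi'.le⟩
        have := intermediate_value_Icc (by positivity : (0:ℝ) ≤ (i:ℝ))
          (hgx_cont x).continuousOn
        obtain ⟨t, _, ht⟩ := this hIcc
        exact ⟨t, ht⟩
      · exfalso
        rw [MeasureTheory.integral_undef hInt] at hδint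
        linarith
  choose γ hγ using hex
  -- the BUC-valued integral gives continuity in x
  have hg_xcont : ∀ t : ℝ, Continuous fun x : Ω => g x t := by
    intro t
    have hIB : IntervalIntegrable F volume (-t) 0 := hFc.intervalIntegrable _ _
    have hkey : (fun x : Ω => g x t) = fun x => (∫ s in (-t)..(0:ℝ), F s) x := by
      funext x
      simp only [hg]
      have heval : ∀ ψ : C(Ω, ℝ), ContinuousMap.evalCLM (R := ℝ) x ψ = ψ x :=
        fun ψ => rfl
      have h2 := (ContinuousLinearMap.intervalIntegral_comp_comm
        (ContinuousMap.evalCLM ℝ x) hIB)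
      simpa only [heval] using h2
    rw [hkey]
    exact (∫ s in (-t)..(0:ℝ), F s).continuous
  have hγcont : Continuous γ := by
    rw [continuous_iff_continuousAt]
    intro x₀
    rw [ContinuousAt, tendsto_order]
    constructor
    · intro a ha
      have h1 : g x₀ a < δ x₀ := by
        rw [← hγ x₀]; exact hg_mono x₀ ha
      have hopen : IsOpen {x : Ω | g x a < δ x} :=
        isOpen_lt (hg_xcont a) δ.continuous
      filter_upwards [hopen.mem_nhds h1] with x hx
      by_contra hcon
      push_neg at hcon
      have : g x (γ x) ≤ g x a := (hg_mono x).monotone hcon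
      rw [hγ x] at this
      exact absurd hx (not_lt.2 this)
    · intro b hb
      have h1 : δ x₀ < g x₀ b := by
        rw [← hγ x₀]; exact hg_mono x₀ hb
      have hopen : IsOpen {x : Ω | δ x < g x b} :=
        isOpen_lt δ.continuous (hg_xcont b)
      filter_upwards [hopen.mem_nhds h1] with x hx
      by_contra hcon
      push_neg at hcon
      have : g x b ≤ g x (γ x) := (hg_mono x).monotone hcon
      rw [hγ x] at this
      exact absurd hx (not_lt.2 this)
  have huniq : ∀ γ' : Ω → ℝ,
      (∀ x : Ω, (∫ s in (-(γ' x))..(0:ℝ),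
        f ((fun u : ℝ => if u ≤ 0 then φ u else φ 0) s) x) = δ x) → γ' = γ := by
    intro γ' hγ'
    funext x
    apply (hg_mono x).injective
    show g x (γ' x) = g x (γ x)
    rw [hγ x]
    exact hγ' x
  have hγeq : ∀ x : Ω, (∫ s in (-(γ x))..(0:ℝ),
      f ((fun u : ℝ => if u ≤ 0 then φ u else φ 0) s) x) = δ x := fun x => hγ x
  refine ⟨⟨γ, hγeq, huniq⟩, ?_⟩
  intro γ' hγ'
  have := huniq γ' hγ'
  subst this
  refine ⟨?_, hγcont⟩
  have hcomp : IsCompact (Set.range fun x : Ω => |γ' x|) :=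
    isCompact_range (continuous_abs.comp hγcont)
  obtain ⟨C, hC⟩ := hcomp.bddAbove
  exact ⟨C, fun x => hC (Set.mem_range_self x)⟩
end

section
/- Let τ(t,x) be, for each t ∈ [0,r) and x ∈ Ω, the unique nonnegative solution of ∫_{t−τ(t,x)}^{t} f(A(s,·))(x) ds = ∫_{−τ₀(x)}^{0} f(φ(s,·))(x) ds. Assume there exists M > 0 with sup_{t∈[0,r)} ‖A(t,·)‖_∞ ≤ M. Set τ₀^∞ := sup_{x∈Ω} τ₀(x), φ_max := sup_{t∈[−τ₀^∞,0]} ‖φ(t,·)‖_∞, and M₁ := max{M, φ_max}, and for a real constant c let f(c) denote f applied to the constant function with value c on Ω. Then for all t ∈ [0,r) and all x ∈ Ω one has τ_min ≤ τ(t,x) ≤ τ_max, where τ_min := inf_{x∈Ω}[τ₀(x) f(φ_max)(x)] / sup_{x∈Ω} f(−M₁)(x) and τ_max := sup_{x∈Ω}[τ₀(x) f(−φ_max)(x)] / inf_{x∈Ω} f(M₁)(x). -/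
open scoped NNReal
open MeasureTheory intervalIntegral Set

/-- a priori bounds for the delay: if ‖A(t,·)‖_∞ ≤ M on [0,r) then
τ_min ≤ τ(t,x) ≤ τ_max, with τ_min = inf_x[τ₀(x)f(φ_max)(x)]/sup_x f(−M₁)(x) and
τ_max = sup_x[τ₀(x)f(−φ_max)(x)]/inf_x f(M₁)(x), where M₁ = max{M,φ_max},
φ_max = sup_{t∈[−τ₀^∞,0]}‖φ(t,·)‖_∞ and τ₀^∞ = sup_x τ₀(x). -/
theorem stmt_8
    {n : ℕ} (hn : 1 ≤ n)
    (Ω : Set (EuclideanSpace ℝ (Fin n))) (hΩ : IsCompact Ω) [CompactSpace Ω] [Nonempty Ω]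
    (f : C(Ω, ℝ) → C(Ω, ℝ)) (Kf : ℝ≥0) (hf_lip : LipschitzWith Kf f)
    (hf_mono : ∀ u v : C(Ω, ℝ), u ≤ v → f v ≤ f u)
    (Mbar : ℝ) (hMbar : 0 < Mbar)
    (hf_bdd : ∀ (ψ : C(Ω, ℝ)) (x : Ω), 0 < f ψ x ∧ f ψ x ≤ Mbar)
    (φ : ℝ → C(Ω, ℝ)) (hφcont : ContinuousOn φ (Set.Iic 0))
    (τ₀ : C(Ω, ℝ)) (hτ₀ : ∀ x, 0 ≤ τ₀ x)
    (r : EReal) (hr : 0 < r)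
    (A : ℝ → C(Ω, ℝ)) (hAcont : ContinuousOn A {t : ℝ | (t : EReal) < r})
    (hA0 : ∀ t ≤ (0 : ℝ), A t = φ t)
    (τ : ℝ → Ω → ℝ)
    (hτ : ∀ t : ℝ, 0 ≤ t → (t : EReal) < r → ∀ x : Ω, 0 ≤ τ t x ∧
      (∫ s in (t - τ t x)..t, f (A s) x) = ∫ s in (-(τ₀ x))..(0 : ℝ), f (φ s) x)
    (M : ℝ) (hM : 0 < M)
    (hAbdd : ∀ t : ℝ, 0 ≤ t → (t : EReal) < r → ‖A t‖ ≤ M) :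
    let τ₀inf : ℝ := ⨆ x : Ω, τ₀ x
    let φmax : ℝ := sSup {c : ℝ | ∃ t ∈ Set.Icc (-τ₀inf) (0 : ℝ), c = ‖φ t‖}
    let M₁ : ℝ := max M φmax
    let τmin : ℝ := (⨅ x : Ω, τ₀ x * f (ContinuousMap.const Ω φmax) x) /
      (⨆ x : Ω, f (ContinuousMap.const Ω (-M₁)) x)
    let τmax : ℝ := (⨆ x : Ω, τ₀ x * f (ContinuousMap.const Ω (-φmax)) x) /
      (⨅ x : Ω, f (ContinuousMap.const Ω M₁) x)
    ∀ t : ℝ, 0 ≤ t → (t : EReal) < r → ∀ x : Ω,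
      τmin ≤ τ t x ∧ τ t x ≤ τmax := by
  intro τ₀inf φmax M₁ τmin τmax t ht0 htr x
  obtain ⟨hτnn, heq⟩ := hτ t ht0 htr x
  set a : ℝ := t - τ t x with ha
  have hat : a ≤ t := by simp [ha]; linarith
  -- τ₀ facts
  have hbddτ₀ : BddAbove (Set.range fun y : Ω => τ₀ y) :=
    (isCompact_range τ₀.continuous).bddAbove
  have hτ₀le : ∀ y : Ω, τ₀ y ≤ τ₀inf := fun y => le_ciSup hbddτ₀ y
  have hτ₀inf0 : (0 : ℝ) ≤ τ₀inf := le_trans (hτ₀ x) (hτ₀le x)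
  -- φmax facts
  have hSφ : {c : ℝ | ∃ s ∈ Set.Icc (-τ₀inf) (0 : ℝ), c = ‖φ s‖}
      = (fun s => ‖φ s‖) '' Set.Icc (-τ₀inf) 0 := by
    ext c; simp [eq_comm]
  have hbddφ : BddAbove {c : ℝ | ∃ s ∈ Set.Icc (-τ₀inf) (0 : ℝ), c = ‖φ s‖} := by
    rw [hSφ]
    exact (isCompact_Icc.image_of_continuousOn
      (continuous_norm.comp_continuousOn (hφcont.mono (Set.Icc_subset_Iic_self)))).bddAbove
  have hφmax : ∀ s ∈ Set.Icc (-τ₀inf) (0 : ℝ), ‖φ s‖ ≤ φmax := fun s hs =>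
    le_csSup hbddφ ⟨s, hs, rfl⟩
  have hφmax0 : (0 : ℝ) ≤ φmax :=
    le_trans (norm_nonneg _) (hφmax 0 ⟨neg_nonpos.mpr hτ₀inf0, le_refl 0⟩)
  have hMM₁ : M ≤ M₁ := le_max_left _ _
  have hφM₁ : φmax ≤ M₁ := le_max_right _ _
  -- continuity of integrands
  have hev : Continuous (fun g : C(Ω, ℝ) => g x) :=
    ContinuousEvalConst.continuous_eval_const x
  have hcontA : ContinuousOn (fun s => f (A s) x) {s : ℝ | (s : EReal) < r} :=
    (hev.comp hf_lip.continuous).comp_continuousOn hAcont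
  have hcontφ : ContinuousOn (fun s => f (φ s) x) (Set.Iic 0) :=
    (hev.comp hf_lip.continuous).comp_continuousOn hφcont
  have hsubr : ∀ {u v : ℝ}, v ≤ t → Set.Icc u v ⊆ {s : ℝ | (s : EReal) < r} := by
    intro u v hv s hs
    exact lt_of_le_of_lt (EReal.coe_le_coe_iff.mpr (le_trans hs.2 hv)) htr
  have hint : ∀ u v : ℝ, u ≤ v → v ≤ t →
      IntervalIntegrable (fun s => f (A s) x) volume u v := by
    intro u v huv hv
    apply ContinuousOn.intervalIntegrable
    rw [Set.uIcc_of_le huv]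
    exact hcontA.mono (hsubr hv)
  have hintφ : ∀ u v : ℝ, u ≤ v → v ≤ 0 →
      IntervalIntegrable (fun s => f (φ s) x) volume u v := by
    intro u v huv hv
    apply ContinuousOn.intervalIntegrable
    rw [Set.uIcc_of_le huv]
    exact hcontφ.mono (fun s hs => le_trans hs.2 hv)
  have hτ₀x0 : -τ₀ x ≤ 0 := neg_nonpos.mpr (hτ₀ x)
  -- Key step : a ≥ -τ₀ x
  have hkey : -τ₀ x ≤ a := by
    by_contra hcon
    push_neg at hcon
    have hb0 : -τ₀ x ≤ (0:ℝ) := hτ₀x0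
    have h1 : (∫ s in a..(-τ₀ x), f (A s) x) + ∫ s in (-τ₀ x)..t, f (A s) x
        = ∫ s in a..t, f (A s) x :=
      integral_add_adjacent_intervals (hint _ _ hcon.le (le_trans hb0 ht0))
        (hint _ _ (le_trans hb0 ht0) le_rfl)
    have h2 : (∫ s in (-τ₀ x)..(0:ℝ), f (A s) x) + ∫ s in (0:ℝ)..t, f (A s) x
        = ∫ s in (-τ₀ x)..t, f (A s) x :=
      integral_add_adjacent_intervals (hint _ _ hb0 ht0) (hint _ _ ht0 le_rfl)
    have h3 : (∫ s in (-τ₀ x)..(0:ℝ), f (A s) x)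
        = ∫ s in (-τ₀ x)..(0:ℝ), f (φ s) x := by
      apply intervalIntegral.integral_congr
      intro s hs
      rw [Set.uIcc_of_le hb0] at hs
      show f (A s) x = f (φ s) x
      rw [hA0 s hs.2]
    have h4 : 0 < ∫ s in a..(-τ₀ x), f (A s) x := by
      apply intervalIntegral.intervalIntegral_pos_of_pos_on
        (hint _ _ hcon.le (le_trans hb0 ht0))
      · intro s _; exact (hf_bdd (A s) x).1
      · exact hcon
    have h5 : 0 ≤ ∫ s in (0:ℝ)..t, f (A s) x := by
      apply intervalIntegral.integral_nonneg ht0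
      intro s _; exact (hf_bdd (A s) x).1.le
    rw [heq, ← h3] at h1
    linarith [h1, h2]
  -- pointwise bounds on [a,t]
  have hAle : ∀ s ∈ Set.Icc a t, (ContinuousMap.const Ω (-M₁) ≤ A s) ∧
      (A s ≤ ContinuousMap.const Ω M₁) := by
    intro s hs
    have habs : ∀ y : Ω, |A s y| ≤ M₁ := by
      intro y
      rcases le_or_gt 0 s with h0s | h0s
      · have := (A s).norm_coe_le_norm y
        have hsr : (s : EReal) < r :=
          lt_of_le_of_lt (EReal.coe_le_coe_iff.mpr hs.2) htr
        calc |A s y| = ‖A s y‖ := rfl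
          _ ≤ ‖A s‖ := (A s).norm_coe_le_norm y
          _ ≤ M := hAbdd s h0s hsr
          _ ≤ M₁ := hMM₁
      · rw [hA0 s h0s.le]
        have hsI : s ∈ Set.Icc (-τ₀inf) (0:ℝ) := by
          constructor
          · calc -τ₀inf ≤ -τ₀ x := neg_le_neg (hτ₀le x)
              _ ≤ a := hkey
              _ ≤ s := hs.1
          · exact h0s.le
        calc |φ s y| = ‖φ s y‖ := rfl
          _ ≤ ‖φ s‖ := (φ s).norm_coe_le_norm y
          _ ≤ φmax := hφmax s hsI
          _ ≤ M₁ := hφM₁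
    constructor
    · intro y; simpa using neg_le_of_abs_le (habs y)
    · intro y; simpa using le_of_abs_le (habs y)
  have hfA_lb : ∀ s ∈ Set.Icc a t, f (ContinuousMap.const Ω M₁) x ≤ f (A s) x :=
    fun s hs => hf_mono _ _ (hAle s hs).2 x
  have hfA_ub : ∀ s ∈ Set.Icc a t, f (A s) x ≤ f (ContinuousMap.const Ω (-M₁)) x :=
    fun s hs => hf_mono _ _ (hAle s hs).1 x
  -- pointwise bounds on [-τ₀x, 0]
  have hφle : ∀ s ∈ Set.Icc (-τ₀ x) (0:ℝ), (ContinuousMap.const Ω (-φmax) ≤ φ s) ∧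
      (φ s ≤ ContinuousMap.const Ω φmax) := by
    intro s hs
    have hsI : s ∈ Set.Icc (-τ₀inf) (0:ℝ) :=
      ⟨le_trans (neg_le_neg (hτ₀le x)) hs.1, hs.2⟩
    have habs : ∀ y : Ω, |φ s y| ≤ φmax := by
      intro y
      calc |φ s y| = ‖φ s y‖ := rfl
        _ ≤ ‖φ s‖ := (φ s).norm_coe_le_norm y
        _ ≤ φmax := hφmax s hsI
    constructor
    · intro y; simpa using neg_le_of_abs_le (habs y)
    · intro y; simpa using le_of_abs_le (habs y)
  have hfφ_lb : ∀ s ∈ Set.Icc (-τ₀ x) (0:ℝ),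
      f (ContinuousMap.const Ω φmax) x ≤ f (φ s) x :=
    fun s hs => hf_mono _ _ (hφle s hs).2 x
  have hfφ_ub : ∀ s ∈ Set.Icc (-τ₀ x) (0:ℝ),
      f (φ s) x ≤ f (ContinuousMap.const Ω (-φmax)) x :=
    fun s hs => hf_mono _ _ (hφle s hs).1 x
  -- integral bounds
  have hconst : ∀ (u v : ℝ) (c : ℝ), (∫ _ in u..v, c) = (v - u) * c := by
    intro u v c; rw [intervalIntegral.integral_const, smul_eq_mul]
  have hL_lb : τ t x * f (ContinuousMap.const Ω M₁) x ≤ ∫ s in a..t, f (A s) x := by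
    have := intervalIntegral.integral_mono_on hat
      (intervalIntegrable_const) (hint a t hat le_rfl) hfA_lb
    rwa [hconst, show t - a = τ t x by simp [ha]] at this
  have hL_ub : (∫ s in a..t, f (A s) x) ≤ τ t x * f (ContinuousMap.const Ω (-M₁)) x := by
    have := intervalIntegral.integral_mono_on hat
      (hint a t hat le_rfl) (intervalIntegrable_const) hfA_ub
    rwa [hconst, show t - a = τ t x by simp [ha]] at this
  have hI_lb : τ₀ x * f (ContinuousMap.const Ω φmax) x
      ≤ ∫ s in (-τ₀ x)..(0:ℝ), f (φ s) x := by
    have := intervalIntegral.integral_mono_on hτ₀x0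
      (intervalIntegrable_const) (hintφ _ _ hτ₀x0 le_rfl) hfφ_lb
    rwa [hconst, show (0:ℝ) - -τ₀ x = τ₀ x by ring] at this
  have hI_ub : (∫ s in (-τ₀ x)..(0:ℝ), f (φ s) x)
      ≤ τ₀ x * f (ContinuousMap.const Ω (-φmax)) x := by
    have := intervalIntegral.integral_mono_on hτ₀x0
      (hintφ _ _ hτ₀x0 le_rfl) (intervalIntegrable_const) hfφ_ub
    rwa [hconst, show (0:ℝ) - -τ₀ x = τ₀ x by ring] at this
  -- sup/inf facts
  have hi₁_le : (⨅ y : Ω, f (ContinuousMap.const Ω M₁) y) ≤ f (ContinuousMap.const Ω M₁) x :=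
    ciInf_le ⟨0, fun c ⟨y, hy⟩ => hy ▸ (hf_bdd _ y).1.le⟩ x
  have hi₁_pos : 0 < ⨅ y : Ω, f (ContinuousMap.const Ω M₁) y := by
    obtain ⟨x₀, -, h⟩ := isCompact_univ.exists_isMinOn Set.univ_nonempty
      (f (ContinuousMap.const Ω M₁)).continuous.continuousOn
    exact lt_of_lt_of_le (hf_bdd _ x₀).1 (le_ciInf fun y => h (Set.mem_univ y))
  have hs₁_ge : f (ContinuousMap.const Ω (-M₁)) x ≤ ⨆ y : Ω, f (ContinuousMap.const Ω (-M₁)) y :=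
    le_ciSup ⟨Mbar, fun c ⟨y, hy⟩ => hy ▸ (hf_bdd _ y).2⟩ x
  have hs₁_pos : 0 < ⨆ y : Ω, f (ContinuousMap.const Ω (-M₁)) y :=
    lt_of_lt_of_le (hf_bdd _ x).1 hs₁_ge
  have hS_ge : τ₀ x * f (ContinuousMap.const Ω (-φmax)) x
      ≤ ⨆ y : Ω, τ₀ y * f (ContinuousMap.const Ω (-φmax)) y := by
    apply le_ciSup (f := fun y : Ω => τ₀ y * f (ContinuousMap.const Ω (-φmax)) y)
    refine ⟨τ₀inf * Mbar, fun c ⟨y, hy⟩ => hy ▸ ?_⟩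
    exact mul_le_mul (hτ₀le y) (hf_bdd _ y).2 (hf_bdd _ y).1.le hτ₀inf0
  have hIinf_le : (⨅ y : Ω, τ₀ y * f (ContinuousMap.const Ω φmax) y)
      ≤ τ₀ x * f (ContinuousMap.const Ω φmax) x := by
    apply ciInf_le
    exact ⟨0, fun c ⟨y, hy⟩ => hy ▸ mul_nonneg (hτ₀ y) (hf_bdd _ y).1.le⟩
  constructor
  · -- τmin ≤ τ t x
    show (⨅ y : Ω, τ₀ y * f (ContinuousMap.const Ω φmax) y) /
      (⨆ y : Ω, f (ContinuousMap.const Ω (-M₁)) y) ≤ τ t x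
    rw [div_le_iff₀ hs₁_pos]
    calc (⨅ y : Ω, τ₀ y * f (ContinuousMap.const Ω φmax) y)
        ≤ τ₀ x * f (ContinuousMap.const Ω φmax) x := hIinf_le
      _ ≤ ∫ s in (-τ₀ x)..(0:ℝ), f (φ s) x := hI_lb
      _ = ∫ s in a..t, f (A s) x := heq.symm
      _ ≤ τ t x * f (ContinuousMap.const Ω (-M₁)) x := hL_ub
      _ ≤ τ t x * ⨆ y : Ω, f (ContinuousMap.const Ω (-M₁)) y :=
          mul_le_mul_of_nonneg_left hs₁_ge hτnn
  · -- τ t x ≤ τmax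
    show τ t x ≤ (⨆ y : Ω, τ₀ y * f (ContinuousMap.const Ω (-φmax)) y) /
      (⨅ y : Ω, f (ContinuousMap.const Ω M₁) y)
    rw [le_div_iff₀ hi₁_pos]
    calc τ t x * ⨅ y : Ω, f (ContinuousMap.const Ω M₁) y
        ≤ τ t x * f (ContinuousMap.const Ω M₁) x :=
          mul_le_mul_of_nonneg_left hi₁_le hτnn
      _ ≤ ∫ s in a..t, f (A s) x := hL_lb
      _ = ∫ s in (-τ₀ x)..(0:ℝ), f (φ s) x := heq
      _ ≤ τ₀ x * f (ContinuousMap.const Ω (-φmax)) x := hI_ub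
      _ ≤ ⨆ y : Ω, τ₀ y * f (ContinuousMap.const Ω (-φmax)) y := hS_ge
end

section
/- Let M₀ > 0, let φ, φ̃ ∈ Lip_α and τ₀, τ̃₀ ∈ C_+(Ω) satisfy ‖φ‖_{Lip_α} + ‖τ₀‖_∞ ≤ M₀ and ‖φ̃‖_{Lip_α} + ‖τ̃₀‖_∞ ≤ M₀. Let r ∈ (0,+∞] and let A, Ã ∈ C((−∞,r),C(Ω)) satisfy A(t,·) = φ(t,·) and Ã(t,·) = φ̃(t,·) for t ≤ 0, and assume M := max{sup_{t∈[0,r)}‖A(t,·)‖_∞, sup_{t∈[0,r)}‖Ã(t,·)‖_∞} < +∞. Define δ₀(x) := ∫_{−τ₀(x)}^{0} f(φ(s,·))(x) ds and δ̃₀(x) := ∫_{−τ̃₀(x)}^{0} f(φ̃(s,·))(x) ds, and let τ(t,x) and τ̃(t,x) be the unique nonnegative solutions of ∫_{t−τ(t,x)}^{t} f(A(s,·))(x) ds = δ₀(x) and ∫_{t−τ̃(t,x)}^{t} f(Ã(s,·))(x) ds = δ̃₀(x). Then there exists a constant L_τ > 0 such that for all t ∈ [0,r) and all x ∈ Ω,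 |τ(t,x) − τ̃(t,x)| ≤ L_τ [ sup_{s∈[−τ̄₀^∞,r)} ‖A(s,·) − Ã(s,·)‖_∞ + ‖δ₀ − δ̃₀‖_∞ ], where τ̄₀^∞ := max{sup_{x∈Ω} τ₀(x), sup_{x∈Ω} τ̃₀(x)}. -/
open scoped NNReal
open MeasureTheory intervalIntegral Set

/-- The weighted history `φ_α(t) = e^{−α|t|} φ(t)`. -/
noncomputable def weightedHist {Ω : Type*} [TopologicalSpace Ω]
    (α : ℝ) (φ : ℝ → C(Ω, ℝ)) : ℝ → C(Ω, ℝ) :=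
  fun t => Real.exp (-(α * |t|)) • φ t

/-- Membership in `Lip_α`: `φ_α` is bounded and Lipschitz from `(−∞,0]` to `C(Ω)`. -/
def MemLipAlpha {Ω : Type*} [TopologicalSpace Ω] [CompactSpace Ω]
    (α : ℝ) (φ : ℝ → C(Ω, ℝ)) : Prop :=
  ContinuousOn φ (Set.Iic 0) ∧
  (∃ C : ℝ, ∀ t ≤ (0 : ℝ), ‖weightedHist α φ t‖ ≤ C) ∧
  (∃ L : ℝ≥0, LipschitzOnWith L (weightedHist α φ) (Set.Iic 0))

/-- The norm of `Lip_α`: `‖φ_α‖_∞ + ‖φ_α‖_{Lip}`. -/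
noncomputable def lipAlphaNorm {Ω : Type*} [TopologicalSpace Ω] [CompactSpace Ω]
    (α : ℝ) (φ : ℝ → C(Ω, ℝ)) : ℝ :=
  sSup {c : ℝ | ∃ t ≤ (0 : ℝ), c = ‖weightedHist α φ t‖} +
  sSup {c : ℝ | ∃ t ≤ (0 : ℝ), ∃ s ≤ (0 : ℝ), t ≠ s ∧
    c = ‖weightedHist α φ t - weightedHist α φ s‖ / |t - s|}

lemma aux_delay_est (t a b δ δ' m KfS D Bb : ℝ) (g g' : ℝ → ℝ)
    (hm : 0 < m) (hab : b ≤ a) (hb : 0 ≤ b) (hbB : b ≤ Bb) (hKfS : 0 ≤ KfS)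
    (hInt1 : IntervalIntegrable g volume (t - a) (t - b))
    (hInt2 : IntervalIntegrable g volume (t - b) t)
    (hInt2' : IntervalIntegrable g' volume (t - b) t)
    (hEq : (∫ s in (t - a)..t, g s) = δ)
    (hEq' : (∫ s in (t - b)..t, g' s) = δ')
    (hlow : ∀ s ∈ Set.Icc (t - a) (t - b), m ≤ g s)
    (hdiff : ∀ s ∈ Set.Icc (t - b) t, |g' s - g s| ≤ KfS)
    (hD : |δ - δ'| ≤ D) :
    a - b ≤ (D + KfS * Bb) / m := by
  have hsplit : (∫ s in (t - a)..(t - b), g s) + (∫ s in (t - b)..t, g s)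
      = ∫ s in (t - a)..t, g s :=
    intervalIntegral.integral_add_adjacent_intervals hInt1 hInt2
  have hmono : m * (a - b) ≤ ∫ s in (t - a)..(t - b), g s := by
    have h := intervalIntegral.integral_mono_on (by linarith : t - a ≤ t - b)
      (intervalIntegrable_const) hInt1 hlow
    rw [intervalIntegral.integral_const, smul_eq_mul] at h
    nlinarith [h]
  have hsub : (∫ s in (t - b)..t, (g' s - g s))
      = (∫ s in (t - b)..t, g' s) - ∫ s in (t - b)..t, g s :=
    intervalIntegral.integral_sub hInt2' hInt2
  have hbnd : |∫ s in (t - b)..t, (g' s - g s)| ≤ KfS * b := by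
    have h1 : ∀ s ∈ Set.uIoc (t - b) t, ‖g' s - g s‖ ≤ KfS := by
      intro s hs
      rw [Set.uIoc_of_le (by linarith : t - b ≤ t)] at hs
      exact (Real.norm_eq_abs _) ▸ hdiff s ⟨hs.1.le, hs.2⟩
    have h2 := intervalIntegral.norm_integral_le_of_norm_le_const h1
    rw [Real.norm_eq_abs] at h2
    have h3 : |t - (t - b)| = b := by rw [abs_of_nonneg (by linarith)]; ring
    rw [h3] at h2; linarith
  have habs := abs_le.mp hbnd
  have habsD := abs_le.mp hD
  rw [le_div_iff₀ hm]
  nlinarith [habs.2, habsD.1, habs.1]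

lemma aux_delay_bounds (t a τx δ m : ℝ) (g : ℝ → ℝ)
    (hm : 0 < m) (ht : 0 ≤ t) (ha : 0 ≤ a) (hτx : 0 ≤ τx)
    (hpos : ∀ s, 0 < g s)
    (hlow : ∀ s ∈ Set.Icc (-τx) t, m ≤ g s)
    (hInt : ∀ u v : ℝ, u ≤ v → v ≤ t → IntervalIntegrable g volume u v)
    (hEq : (∫ s in (t - a)..t, g s) = δ)
    (hδeq : (∫ s in (-τx)..(0:ℝ), g s) = δ) :
    -τx ≤ t - a ∧ a ≤ δ / m + τx := by
  have h1 : -τx ≤ t - a := by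
    by_contra h
    push_neg at h
    have h1 : t - a ≤ -τx := h.le
    have hs1 : (∫ s in (t - a)..(-τx), g s) + (∫ s in (-τx)..t, g s)
        = ∫ s in (t - a)..t, g s :=
      intervalIntegral.integral_add_adjacent_intervals
        (hInt _ _ h1 (by linarith)) (hInt _ _ (by linarith) le_rfl)
    have hs2 : (∫ s in (-τx)..(0:ℝ), g s) + (∫ s in (0:ℝ)..t, g s)
        = ∫ s in (-τx)..t, g s :=
      intervalIntegral.integral_add_adjacent_intervals
        (hInt _ _ (by linarith) ht) (hInt _ _ ht le_rfl)
    have hpos1 : 0 < ∫ s in (t - a)..(-τx), g s :=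
      intervalIntegral.intervalIntegral_pos_of_pos_on (hInt _ _ h1 (by linarith))
        (fun s _ => hpos s) h
    have hpos2 : 0 ≤ ∫ s in (0:ℝ)..t, g s :=
      intervalIntegral.integral_nonneg ht (fun s _ => (hpos s).le)
    linarith [hEq, hδeq, hs1, hs2]
  refine ⟨h1, ?_⟩
  rcases le_or_gt 0 (t - a) with h0 | h0
  · have hmono : m * a ≤ ∫ s in (t - a)..t, g s := by
      have h := intervalIntegral.integral_mono_on (by linarith : t - a ≤ t)
        intervalIntegrable_const (hInt _ _ (by linarith) le_rfl)
        (fun s hs => hlow s ⟨by linarith [hs.1], hs.2⟩)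
      rw [intervalIntegral.integral_const, smul_eq_mul] at h
      nlinarith [h]
    have : a ≤ δ / m := by rw [le_div_iff₀ hm]; nlinarith [hmono, hEq]
    linarith
  · have hs1 : (∫ s in (t - a)..(0:ℝ), g s) + (∫ s in (0:ℝ)..t, g s)
        = ∫ s in (t - a)..t, g s :=
      intervalIntegral.integral_add_adjacent_intervals
        (hInt _ _ h0.le ht) (hInt _ _ ht le_rfl)
    have hpos1 : 0 ≤ ∫ s in (t - a)..(0:ℝ), g s :=
      intervalIntegral.integral_nonneg h0.le (fun s _ => (hpos s).le)
    have hmono : m * t ≤ ∫ s in (0:ℝ)..t, g s := by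
      have h := intervalIntegral.integral_mono_on ht
        intervalIntegrable_const (hInt _ _ ht le_rfl)
        (fun s hs => hlow s ⟨by linarith [hs.1], hs.2⟩)
      rw [intervalIntegral.integral_const, smul_eq_mul] at h
      nlinarith [h]
    have htb : t ≤ δ / m := by rw [le_div_iff₀ hm]; nlinarith [hmono, hEq, hs1, hpos1]
    linarith

lemma aux_lipAlphaNorm_nonneg {Ω : Type*} [TopologicalSpace Ω] [CompactSpace Ω]
    {α : ℝ} {φ : ℝ → C(Ω, ℝ)} : 0 ≤ lipAlphaNorm α φ := by
  unfold lipAlphaNorm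
  have h1 : 0 ≤ sSup {c : ℝ | ∃ t ≤ (0 : ℝ), c = ‖weightedHist α φ t‖} :=
    Real.sSup_nonneg (by rintro c ⟨t, ht, rfl⟩; positivity)
  have h2 : 0 ≤ sSup {c : ℝ | ∃ t ≤ (0 : ℝ), ∃ s ≤ (0 : ℝ), t ≠ s ∧
      c = ‖weightedHist α φ t - weightedHist α φ s‖ / |t - s|} :=
    Real.sSup_nonneg (by rintro c ⟨t, ht, s, hs, hne, rfl⟩; positivity)
  linarith

lemma aux_norm_le {Ω : Type*} [TopologicalSpace Ω] [CompactSpace Ω]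
    {α M₀ : ℝ} {φ : ℝ → C(Ω, ℝ)} (hφ : MemLipAlpha α φ)
    (hb : lipAlphaNorm α φ ≤ M₀) :
    ∀ s ≤ (0 : ℝ), ‖φ s‖ ≤ Real.exp (α * |s|) * M₀ := by
  intro s hs
  obtain ⟨C, hC⟩ := hφ.2.1
  have hbdd : BddAbove {c : ℝ | ∃ t ≤ (0 : ℝ), c = ‖weightedHist α φ t‖} :=
    ⟨C, by rintro c ⟨t, ht, rfl⟩; exact hC t ht⟩
  have hle : ‖weightedHist α φ s‖ ≤ sSup {c : ℝ | ∃ t ≤ (0 : ℝ), c = ‖weightedHist α φ t‖} :=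
    le_csSup hbdd ⟨s, hs, rfl⟩
  have h2 : 0 ≤ sSup {c : ℝ | ∃ t ≤ (0 : ℝ), ∃ s ≤ (0 : ℝ), t ≠ s ∧
      c = ‖weightedHist α φ t - weightedHist α φ s‖ / |t - s|} :=
    Real.sSup_nonneg (by rintro c ⟨t, ht, u, hu, hne, rfl⟩; positivity)
  have hM : ‖weightedHist α φ s‖ ≤ M₀ := by
    unfold lipAlphaNorm at hb; linarith
  have hnorm : ‖weightedHist α φ s‖ = Real.exp (-(α * |s|)) * ‖φ s‖ := by
    unfold weightedHist
    rw [show ‖Real.exp (-(α * |s|)) • φ s‖ = ‖Real.exp (-(α * |s|))‖ * ‖φ s‖ from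
      norm_smul (β := C(Ω, ℝ)) _ _, Real.norm_eq_abs, abs_of_pos (Real.exp_pos _)]
  have hφs : ‖φ s‖ = Real.exp (α * |s|) * ‖weightedHist α φ s‖ := by
    rw [hnorm, ← mul_assoc, ← Real.exp_add]
    simp
  rw [hφs]
  exact mul_le_mul_of_nonneg_left hM (Real.exp_pos _).le

set_option maxHeartbeats 1000000 in
/-- Lipschitz-type estimate for the state-dependent delays associated with
two histories/solutions: |τ(t,x) − τ̃(t,x)| ≤ L_τ [sup_{s∈[−τ̄₀^∞,r)}‖A(s,·)−Ã(s,·)‖_∞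
+ ‖δ₀ − δ̃₀‖_∞]. -/
theorem stmt_9
    {n : ℕ} (hn : 1 ≤ n)
    (Ω : Set (EuclideanSpace ℝ (Fin n))) (hΩ : IsCompact Ω) [CompactSpace Ω] [Nonempty Ω]
    (f : C(Ω, ℝ) → C(Ω, ℝ)) (Kf : ℝ≥0) (hf_lip : LipschitzWith Kf f)
    (hf_mono : ∀ u v : C(Ω, ℝ), u ≤ v → f v ≤ f u)
    (Mbar : ℝ) (hMbar : 0 < Mbar)
    (hf_bdd : ∀ (ψ : C(Ω, ℝ)) (x : Ω), 0 < f ψ x ∧ f ψ x ≤ Mbar)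
    (α : ℝ) (hα : 0 ≤ α)
    (M₀ : ℝ) (hM₀ : 0 < M₀)
    (φ φt : ℝ → C(Ω, ℝ)) (hφ : MemLipAlpha α φ) (hφt : MemLipAlpha α φt)
    (τ₀ τ₀t : C(Ω, ℝ)) (hτ₀ : ∀ x, 0 ≤ τ₀ x) (hτ₀t : ∀ x, 0 ≤ τ₀t x)
    (hbound : lipAlphaNorm α φ + ‖τ₀‖ ≤ M₀)
    (hboundt : lipAlphaNorm α φt + ‖τ₀t‖ ≤ M₀)
    (r : EReal) (hr : 0 < r)
    (A At : ℝ → C(Ω, ℝ))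
    (hAcont : ContinuousOn A {t : ℝ | (t : EReal) < r})
    (hAtcont : ContinuousOn At {t : ℝ | (t : EReal) < r})
    (hA0 : ∀ t ≤ (0 : ℝ), A t = φ t) (hAt0 : ∀ t ≤ (0 : ℝ), At t = φt t)
    (M : ℝ)
    (hAbdd : ∀ t : ℝ, 0 ≤ t → (t : EReal) < r → ‖A t‖ ≤ M ∧ ‖At t‖ ≤ M)
    (δ₀ δ₀t : Ω → ℝ)
    (hδ₀ : ∀ x : Ω, δ₀ x = ∫ s in (-(τ₀ x))..(0 : ℝ), f (φ s) x)
    (hδ₀t : ∀ x : Ω, δ₀t x = ∫ s in (-(τ₀t x))..(0 : ℝ), f (φt s) x)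
    (τ τt : ℝ → Ω → ℝ)
    (hτ : ∀ t : ℝ, 0 ≤ t → (t : EReal) < r → ∀ x : Ω, 0 ≤ τ t x ∧
      (∫ s in (t - τ t x)..t, f (A s) x) = δ₀ x)
    (hτt : ∀ t : ℝ, 0 ≤ t → (t : EReal) < r → ∀ x : Ω, 0 ≤ τt t x ∧
      (∫ s in (t - τt t x)..t, f (At s) x) = δ₀t x) :
    ∃ Lτ : ℝ, 0 < Lτ ∧ ∀ t : ℝ, 0 ≤ t → (t : EReal) < r → ∀ x : Ω,
      |τ t x - τt t x| ≤
        Lτ * (sSup {c : ℝ | ∃ s : ℝ, -(max (⨆ y : Ω, τ₀ y) (⨆ y : Ω, τ₀t y)) ≤ s ∧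
                (s : EReal) < r ∧ c = ‖A s - At s‖} +
              ⨆ y : Ω, |δ₀ y - δ₀t y|) := by
  classical
  set τb := max (⨆ y : Ω, τ₀ y) (⨆ y : Ω, τ₀t y) with hτb_def
  have hbdd₀ : BddAbove (Set.range fun y : Ω => τ₀ y) :=
    (isCompact_range (map_continuous τ₀)).bddAbove
  have hbdd₀t : BddAbove (Set.range fun y : Ω => τ₀t y) :=
    (isCompact_range (map_continuous τ₀t)).bddAbove
  have hτ₀le : ∀ x : Ω, τ₀ x ≤ τb :=
    fun x => le_trans (le_ciSup hbdd₀ x) (le_max_left _ _)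
  have hτ₀tle : ∀ x : Ω, τ₀t x ≤ τb :=
    fun x => le_trans (le_ciSup hbdd₀t x) (le_max_right _ _)
  obtain ⟨x₀⟩ := (inferInstance : Nonempty Ω)
  have hτb0 : 0 ≤ τb := le_trans (hτ₀ x₀) (hτ₀le x₀)
  have hnτ : ∀ x : Ω, τ₀ x ≤ ‖τ₀‖ :=
    fun x => le_trans (le_abs_self _)
      (by simpa [Real.norm_eq_abs] using τ₀.norm_coe_le_norm x)
  have hnτt : ∀ x : Ω, τ₀t x ≤ ‖τ₀t‖ :=
    fun x => le_trans (le_abs_self _)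
      (by simpa [Real.norm_eq_abs] using τ₀t.norm_coe_le_norm x)
  have hτ₀M : ‖τ₀‖ ≤ M₀ := by
    have := aux_lipAlphaNorm_nonneg (α := α) (φ := φ); linarith
  have hτ₀tM : ‖τ₀t‖ ≤ M₀ := by
    have := aux_lipAlphaNorm_nonneg (α := α) (φ := φt); linarith
  have hφle := aux_norm_le hφ (show lipAlphaNorm α φ ≤ M₀ by linarith [norm_nonneg τ₀])
  have hφtle := aux_norm_le hφt (show lipAlphaNorm α φt ≤ M₀ by linarith [norm_nonneg τ₀t])
  -- coe facts
  have hle_r : ∀ s t : ℝ, s ≤ t → (t : EReal) < r → (s : EReal) < r :=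
    fun s t hst ht => lt_of_le_of_lt (EReal.coe_le_coe_iff.mpr hst) ht
  have h0r : ((0 : ℝ) : EReal) < r := by rw [EReal.coe_zero]; exact hr
  have hneg_r : ∀ s : ℝ, s ≤ 0 → (s : EReal) < r := fun s hs => hle_r s 0 hs h0r
  -- uniform bound K
  set K := max M (Real.exp (α * τb) * M₀) with hK_def
  have hAK : ∀ s : ℝ, -τb ≤ s → (s : EReal) < r → ‖A s‖ ≤ K ∧ ‖At s‖ ≤ K := by
    intro s hs hsr
    rcases le_or_gt s 0 with h | h
    · rw [hA0 s h, hAt0 s h]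
      have habs : |s| ≤ τb := abs_le.mpr ⟨by linarith, by linarith⟩
      have hexp : Real.exp (α * |s|) * M₀ ≤ Real.exp (α * τb) * M₀ :=
        mul_le_mul_of_nonneg_right
          (Real.exp_le_exp.mpr (mul_le_mul_of_nonneg_left habs hα)) hM₀.le
      exact ⟨le_trans (le_trans (hφle s h) hexp) (le_max_right _ _),
             le_trans (le_trans (hφtle s h) hexp) (le_max_right _ _)⟩
    · obtain ⟨h1, h2⟩ := hAbdd s h.le hsr
      exact ⟨le_trans h1 (le_max_left _ _), le_trans h2 (le_max_left _ _)⟩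
  -- uniform lower bound m
  set cK : C(Ω, ℝ) := ContinuousMap.const _ K with hcK_def
  obtain ⟨x₁, -, hx₁min⟩ := IsCompact.exists_isMinOn (isCompact_univ (X := Ω))
    Set.univ_nonempty (Continuous.continuousOn (map_continuous (f cK)))
  have hx₁ : ∀ y : Ω, f cK x₁ ≤ f cK y := fun y => isMinOn_iff.mp hx₁min y (Set.mem_univ y)
  set m := f cK x₁ with hm_def
  have hm : 0 < m := (hf_bdd cK x₁).1
  have hflow : ∀ s : ℝ, -τb ≤ s → (s : EReal) < r → ∀ x : Ω, m ≤ f (A s) x := by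
    intro s hs hsr x
    have hle : A s ≤ cK := ContinuousMap.le_def.mpr (fun y => by
      calc A s y ≤ |A s y| := le_abs_self _
      _ ≤ ‖A s‖ := by simpa [Real.norm_eq_abs] using (A s).norm_coe_le_norm y
      _ ≤ K := (hAK s hs hsr).1)
    exact le_trans (hx₁ x) (ContinuousMap.le_def.mp (hf_mono _ _ hle) x)
  have hflowt : ∀ s : ℝ, -τb ≤ s → (s : EReal) < r → ∀ x : Ω, m ≤ f (At s) x := by
    intro s hs hsr x
    have hle : At s ≤ cK := ContinuousMap.le_def.mpr (fun y => by
      calc At s y ≤ |At s y| := le_abs_self _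
      _ ≤ ‖At s‖ := by simpa [Real.norm_eq_abs] using (At s).norm_coe_le_norm y
      _ ≤ K := (hAK s hs hsr).2)
    exact le_trans (hx₁ x) (ContinuousMap.le_def.mp (hf_mono _ _ hle) x)
  -- integrability
  have hsubset : ∀ u v : ℝ, u ≤ v → (v : EReal) < r →
      Set.uIcc u v ⊆ {s : ℝ | (s : EReal) < r} := by
    intro u v huv hv s hs
    rw [Set.uIcc_of_le huv] at hs
    exact hle_r s v hs.2 hv
  have hcontA : ∀ x : Ω, ContinuousOn (fun s => f (A s) x) {s : ℝ | (s : EReal) < r} :=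
    fun x => (continuous_eval_const x).comp_continuousOn
      (hf_lip.continuous.comp_continuousOn hAcont)
  have hcontAt : ∀ x : Ω, ContinuousOn (fun s => f (At s) x) {s : ℝ | (s : EReal) < r} :=
    fun x => (continuous_eval_const x).comp_continuousOn
      (hf_lip.continuous.comp_continuousOn hAtcont)
  have hIntA : ∀ (x : Ω) (u v : ℝ), u ≤ v → (v : EReal) < r →
      IntervalIntegrable (fun s => f (A s) x) volume u v :=
    fun x u v huv hv => ((hcontA x).mono (hsubset u v huv hv)).intervalIntegrable
  have hIntAt : ∀ (x : Ω) (u v : ℝ), u ≤ v → (v : EReal) < r →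
      IntervalIntegrable (fun s => f (At s) x) volume u v :=
    fun x u v huv hv => ((hcontAt x).mono (hsubset u v huv hv)).intervalIntegrable
  -- δ₀ in terms of A
  have hδA : ∀ x : Ω, δ₀ x = ∫ s in (-(τ₀ x))..(0 : ℝ), f (A s) x := by
    intro x
    rw [hδ₀ x]
    apply intervalIntegral.integral_congr
    intro s hs
    rw [Set.uIcc_of_le (by linarith [hτ₀ x] : -(τ₀ x) ≤ 0)] at hs
    show f (φ s) x = f (A s) x
    rw [hA0 s hs.2]
  have hδAt : ∀ x : Ω, δ₀t x = ∫ s in (-(τ₀t x))..(0 : ℝ), f (At s) x := by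
    intro x
    rw [hδ₀t x]
    apply intervalIntegral.integral_congr
    intro s hs
    rw [Set.uIcc_of_le (by linarith [hτ₀t x] : -(τ₀t x) ≤ 0)] at hs
    show f (φt s) x = f (At s) x
    rw [hAt0 s hs.2]
  -- bounds on δ₀
  have hδ₀bd : ∀ x : Ω, 0 ≤ δ₀ x ∧ δ₀ x ≤ Mbar * M₀ := by
    intro x
    rw [hδA x]
    constructor
    · exact intervalIntegral.integral_nonneg (by linarith [hτ₀ x])
        (fun s _ => (hf_bdd _ x).1.le)
    · have h := intervalIntegral.integral_mono_on (by linarith [hτ₀ x] : -(τ₀ x) ≤ 0)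
        (hIntA x _ _ (by linarith [hτ₀ x]) h0r) intervalIntegrable_const
        (fun s _ => (hf_bdd (A s) x).2)
      rw [intervalIntegral.integral_const, smul_eq_mul] at h
      nlinarith [h, hnτ x, hτ₀M, hMbar, hτ₀ x]
  have hδ₀tbd : ∀ x : Ω, 0 ≤ δ₀t x ∧ δ₀t x ≤ Mbar * M₀ := by
    intro x
    rw [hδAt x]
    constructor
    · exact intervalIntegral.integral_nonneg (by linarith [hτ₀t x])
        (fun s _ => (hf_bdd _ x).1.le)
    · have h := intervalIntegral.integral_mono_on (by linarith [hτ₀t x] : -(τ₀t x) ≤ 0)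
        (hIntAt x _ _ (by linarith [hτ₀t x]) h0r) intervalIntegrable_const
        (fun s _ => (hf_bdd (At s) x).2)
      rw [intervalIntegral.integral_const, smul_eq_mul] at h
      nlinarith [h, hnτt x, hτ₀tM, hMbar, hτ₀t x]
  -- S and D
  set S := sSup {c : ℝ | ∃ s : ℝ, -τb ≤ s ∧ (s : EReal) < r ∧ c = ‖A s - At s‖} with hS_def
  have hSbdd : BddAbove {c : ℝ | ∃ s : ℝ, -τb ≤ s ∧ (s : EReal) < r ∧ c = ‖A s - At s‖} := by
    refine ⟨2 * K, ?_⟩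
    rintro c ⟨s, hs1, hs2, rfl⟩
    have h := hAK s hs1 hs2
    calc ‖A s - At s‖ ≤ ‖A s‖ + ‖At s‖ := norm_sub_le _ _
    _ ≤ 2 * K := by linarith [h.1, h.2]
  have hS_ge : ∀ s : ℝ, -τb ≤ s → (s : EReal) < r → ‖A s - At s‖ ≤ S :=
    fun s h1 h2 => le_csSup hSbdd ⟨s, h1, h2, rfl⟩
  have hS0 : 0 ≤ S := le_trans (norm_nonneg _) (hS_ge 0 (by linarith) h0r)
  set D := ⨆ y : Ω, |δ₀ y - δ₀t y| with hD_def
  have hDbdd : BddAbove (Set.range fun y : Ω => |δ₀ y - δ₀t y|) := by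
    refine ⟨2 * (Mbar * M₀), ?_⟩
    rintro c ⟨y, rfl⟩
    have h1 := hδ₀bd y; have h2 := hδ₀tbd y
    rw [abs_le]
    constructor <;> nlinarith [h1.1, h1.2, h2.1, h2.2]
  have hD_ge : ∀ x : Ω, |δ₀ x - δ₀t x| ≤ D := fun x => le_ciSup hDbdd x
  have hD0 : 0 ≤ D := Real.iSup_nonneg fun y => abs_nonneg _
  -- bound B on the delays
  set B := Mbar * M₀ / m + M₀ with hB_def
  have hB0 : 0 < B := add_pos (div_pos (mul_pos hMbar hM₀) hm) hM₀
  have hτkey : ∀ t : ℝ, 0 ≤ t → (t : EReal) < r → ∀ x : Ω,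
      -(τ₀ x) ≤ t - τ t x ∧ τ t x ≤ B := by
    intro t ht htr x
    obtain ⟨ha, hEq⟩ := hτ t ht htr x
    have hres := aux_delay_bounds t (τ t x) (τ₀ x) (δ₀ x) m (fun s => f (A s) x)
      hm ht ha (hτ₀ x)
      (fun s => (hf_bdd _ x).1)
      (fun s hs => hflow s (by linarith [hs.1, hτ₀le x]) (hle_r s t hs.2 htr) x)
      (fun u v huv hv => hIntA x u v huv (hle_r v t hv htr))
      hEq (hδA x).symm
    refine ⟨hres.1, le_trans hres.2 ?_⟩
    have h1 : δ₀ x / m ≤ Mbar * M₀ / m := by gcongr; exact (hδ₀bd x).2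
    linarith [hnτ x, hτ₀M]
  have hτtkey : ∀ t : ℝ, 0 ≤ t → (t : EReal) < r → ∀ x : Ω,
      -(τ₀t x) ≤ t - τt t x ∧ τt t x ≤ B := by
    intro t ht htr x
    obtain ⟨ha, hEq⟩ := hτt t ht htr x
    have hres := aux_delay_bounds t (τt t x) (τ₀t x) (δ₀t x) m (fun s => f (At s) x)
      hm ht ha (hτ₀t x)
      (fun s => (hf_bdd _ x).1)
      (fun s hs => hflowt s (by linarith [hs.1, hτ₀tle x]) (hle_r s t hs.2 htr) x)
      (fun u v huv hv => hIntAt x u v huv (hle_r v t hv htr))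
      hEq (hδAt x).symm
    refine ⟨hres.1, le_trans hres.2 ?_⟩
    have h1 : δ₀t x / m ≤ Mbar * M₀ / m := by gcongr; exact (hδ₀tbd x).2
    linarith [hnτt x, hτ₀tM]
  -- the constant
  refine ⟨(1 + Kf * B) / m, div_pos (by nlinarith [hB0, Kf.coe_nonneg]) hm, ?_⟩
  intro t ht htr x
  obtain ⟨ha, hEqA⟩ := hτ t ht htr x
  obtain ⟨hb, hEqAt⟩ := hτt t ht htr x
  obtain ⟨hk1, hk2⟩ := hτkey t ht htr x
  obtain ⟨hk1t, hk2t⟩ := hτtkey t ht htr x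
  have hKfS0 : 0 ≤ (Kf : ℝ) * S := mul_nonneg Kf.coe_nonneg hS0
  have hdiffbd : ∀ s, -τb ≤ s → s ≤ t → |f (At s) x - f (A s) x| ≤ (Kf : ℝ) * S := by
    intro s hsτb hst
    have hsr := hle_r s t hst htr
    have h1 : |f (At s) x - f (A s) x| ≤ ‖f (At s) - f (A s)‖ := by
      have h := ContinuousMap.norm_coe_le_norm (f (At s) - f (A s)) x
      simpa [ContinuousMap.sub_apply, Real.norm_eq_abs] using h
    have h2 : ‖f (At s) - f (A s)‖ ≤ (Kf : ℝ) * ‖At s - A s‖ := by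
      have h := hf_lip.dist_le_mul (At s) (A s)
      simpa [dist_eq_norm] using h
    have h3 : ‖At s - A s‖ ≤ S := by rw [norm_sub_rev]; exact hS_ge s hsτb hsr
    have h4 := mul_le_mul_of_nonneg_left h3 Kf.coe_nonneg
    linarith
  have hfin : ((D + ((Kf : ℝ) * S) * B) / m) ≤ (1 + Kf * B) / m * (S + D) := by
    rw [div_mul_eq_mul_div]
    have hnum : D + ((Kf : ℝ) * S) * B ≤ (1 + (Kf : ℝ) * B) * (S + D) := by
      nlinarith [hS0, hD0, mul_nonneg (mul_nonneg Kf.coe_nonneg hB0.le) hD0]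
    exact div_le_div_of_nonneg_right hnum hm.le
  rcases le_total (τt t x) (τ t x) with hc | hc
  · have hmain := aux_delay_est t (τ t x) (τt t x) (δ₀ x) (δ₀t x) m ((Kf : ℝ) * S) D B
      (fun s => f (A s) x) (fun s => f (At s) x)
      hm hc hb hk2t hKfS0
      (hIntA x _ _ (by linarith) (hle_r _ t (by linarith) htr))
      (hIntA x _ _ (by linarith) htr)
      (hIntAt x _ _ (by linarith) htr)
      hEqA hEqAt
      (fun s hs => hflow s (by linarith [hs.1, hτ₀le x]) (hle_r s t (by linarith [hs.2]) htr) x)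
      (fun s hs => hdiffbd s (by linarith [hs.1, hτ₀tle x]) hs.2)
      (hD_ge x)
    rw [abs_of_nonneg (by linarith : (0:ℝ) ≤ τ t x - τt t x)]
    linarith [hfin, hmain]
  · have hmain := aux_delay_est t (τt t x) (τ t x) (δ₀t x) (δ₀ x) m ((Kf : ℝ) * S) D B
      (fun s => f (At s) x) (fun s => f (A s) x)
      hm hc ha hk2 hKfS0
      (hIntAt x _ _ (by linarith) (hle_r _ t (by linarith) htr))
      (hIntAt x _ _ (by linarith) htr)
      (hIntA x _ _ (by linarith) htr)
      hEqAt hEqA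
      (fun s hs => hflowt s (by linarith [hs.1, hτ₀tle x]) (hle_r s t (by linarith [hs.2]) htr) x)
      (fun s hs => by
        rw [abs_sub_comm]
        exact hdiffbd s (by linarith [hs.1, hτ₀le x]) hs.2)
      (by rw [abs_sub_comm]; exact hD_ge x)
    rw [abs_sub_comm, abs_of_nonneg (by linarith : (0:ℝ) ≤ τt t x - τ t x)]
    linarith [hfin, hmain]
end

section
/- Let t ≥ 0, let φ ∈ Lip_α, and let A ∈ C((−∞,t],C(Ω)) satisfy A(s,·) = φ(s,·) for s ≤ 0 and be Lipschitz continuous on [0,t]. Define A_t(θ,·) := A(t+θ,·) for θ ≤ 0, A_{t,α}(θ,·) := e^{−α|θ|}A_t(θ,·) and φ_α(θ,·) := e^{−α|θ|}φ(θ,·). Then the following three estimates hold: (i) sup_{θ≤0}‖A_{t,α}(θ,·)‖_∞ ≤ sup_{θ∈[0,t]}‖e^{α(θ−t)}A(θ,·)‖_∞ + e^{−αt} sup_{θ≤0}‖φ_α(θ,·)‖_∞; (ii) ‖A_{t,α}‖_{Lip((−∞,0],C(Ω))} ≤ ‖A_{t,α}‖_{Lip([−t,0],C(Ω))} + e^{−αt}‖φ_α‖_{Lip((−∞,0],C(Ω))};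 (iii) ‖A_t‖_{Lip_α} ≤ sup_{θ∈[0,t]}‖e^{α(θ−t)}A(θ,·)‖_∞ + ‖A_{t,α}‖_{Lip([−t,0],C(Ω))} + e^{−αt}‖φ‖_{Lip_α}; here ‖·‖_{Lip(I,C(Ω))} denotes the Lipschitz seminorm sup_{t,s∈I,t≠s}‖·(t)−·(s)‖_∞/|t−s|. -/
open scoped NNReal
open Set

/-- The Lipschitz seminorm of `χ` on a set `I`. -/
noncomputable def lipSeminormOn {Ω : Type*} [TopologicalSpace Ω] [CompactSpace Ω]
    (χ : ℝ → C(Ω, ℝ)) (I : Set ℝ) : ℝ :=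
  sSup {c : ℝ | ∃ t ∈ I, ∃ s ∈ I, t ≠ s ∧ c = ‖χ t - χ s‖ / |t - s|}

/-- `exp` is 1-Lipschitz on nonpositive reals. -/
lemma exp_lip_aux {x y : ℝ} (hx : x ≤ 0) (hy : y ≤ 0) :
    |Real.exp x - Real.exp y| ≤ |x - y| := by
  wlog h : x ≤ y generalizing x y
  · rw [abs_sub_comm, abs_sub_comm x y]; exact this hy hx (le_of_not_ge h)
  have h1 := Real.add_one_le_exp (x - y)
  have h2 : Real.exp y ≤ 1 := Real.exp_le_one_iff.mpr hy
  have h3 := Real.exp_pos y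
  have h4 : Real.exp x = Real.exp y * Real.exp (x - y) := by
    rw [← Real.exp_add]; ring_nf
  have h5 : Real.exp x ≤ Real.exp y := Real.exp_le_exp.mpr h
  rw [abs_of_nonpos (by linarith), abs_of_nonpos (by linarith)]
  nlinarith


lemma cm_norm_smul {Ω : Type*} [TopologicalSpace Ω] [CompactSpace Ω] (r : ℝ) (f : C(Ω, ℝ)) :
    ‖r • f‖ = |r| * ‖f‖ := by
  have h := norm_smul r f
  rwa [Real.norm_eq_abs] at h

lemma cm_split {Ω : Type*} [TopologicalSpace Ω] [CompactSpace Ω] (a b : ℝ) (f g : C(Ω, ℝ)) :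
    a • f - b • g = (a - b) • f + b • (f - g) := by
  ext x
  simp only [ContinuousMap.sub_apply, ContinuousMap.add_apply, ContinuousMap.smul_apply,
    smul_eq_mul]
  ring

lemma cm_smul_sub {Ω : Type*} [TopologicalSpace Ω] [CompactSpace Ω] (r : ℝ) (f g : C(Ω, ℝ)) :
    r • f - r • g = r • (f - g) := by
  ext x
  simp [ContinuousMap.sub_apply, ContinuousMap.smul_apply, smul_sub]

set_option maxHeartbeats 2000000 in
/-- the three estimates (4.1)–(4.3) for the weighted history segment
`A_{t,α}(θ) = e^{−α|θ|}A(t+θ)`. -/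
theorem stmt_11
    {n : ℕ} (hn : 1 ≤ n)
    (Ω : Set (EuclideanSpace ℝ (Fin n))) (hΩ : IsCompact Ω) [CompactSpace Ω]
    (α : ℝ) (hα : 0 ≤ α)
    (t : ℝ) (ht : 0 ≤ t)
    (φ : ℝ → C(Ω, ℝ)) (hφ : MemLipAlpha α φ)
    (A : ℝ → C(Ω, ℝ)) (hAcont : ContinuousOn A (Set.Iic t))
    (hA0 : ∀ s ≤ (0 : ℝ), A s = φ s)
    (K : ℝ≥0) (hALip : LipschitzOnWith K A (Set.Icc 0 t)) :
    (sSup {c : ℝ | ∃ θ ≤ (0 : ℝ), c = ‖weightedHist α (fun u : ℝ => A (t + u)) θ‖} ≤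
        sSup {c : ℝ | ∃ θ ∈ Set.Icc (0 : ℝ) t, c = ‖Real.exp (α * (θ - t)) • A θ‖} +
        Real.exp (-(α * t)) *
          sSup {c : ℝ | ∃ θ ≤ (0 : ℝ), c = ‖weightedHist α φ θ‖}) ∧
    (lipSeminormOn (weightedHist α (fun u : ℝ => A (t + u))) (Set.Iic 0) ≤
        lipSeminormOn (weightedHist α (fun u : ℝ => A (t + u))) (Set.Icc (-t) 0) +
        Real.exp (-(α * t)) * lipSeminormOn (weightedHist α φ) (Set.Iic 0)) ∧
    (lipAlphaNorm α (fun u : ℝ => A (t + u)) ≤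
        sSup {c : ℝ | ∃ θ ∈ Set.Icc (0 : ℝ) t, c = ‖Real.exp (α * (θ - t)) • A θ‖} +
        lipSeminormOn (weightedHist α (fun u : ℝ => A (t + u))) (Set.Icc (-t) 0) +
        Real.exp (-(α * t)) * lipAlphaNorm α φ) := by
  obtain ⟨-, ⟨C, hC⟩, ⟨L, hL⟩⟩ := hφ
  set B : ℝ → C(Ω, ℝ) := weightedHist α (fun u : ℝ => A (t + u)) with hBdef
  set wφ : ℝ → C(Ω, ℝ) := weightedHist α φ with hwφdef
  set E : ℝ := Real.exp (-(α * t)) with hEdef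
  have hE0 : 0 < E := Real.exp_pos _
  -- bound for A on [0, t]
  obtain ⟨M, hM⟩ := (isCompact_Icc : IsCompact (Icc (0:ℝ) t)).exists_bound_of_continuousOn
    (hAcont.mono (Icc_subset_Iic_self))
  have hM0 : 0 ≤ M := le_trans (norm_nonneg _) (hM 0 ⟨le_rfl, ht⟩)
  -- pointwise description of B
  have hwr : ∀ θ ≤ (0:ℝ), B θ = Real.exp (α * θ) • A (t + θ) := by
    intro θ hθ
    have h : -(α * |θ|) = α * θ := by rw [abs_of_nonpos hθ]; ring
    simp only [hBdef, weightedHist, h]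
  have hBφ : ∀ θ ≤ -t, B θ = E • wφ (t + θ) := by
    intro θ hθ
    have hθ0 : θ ≤ 0 := by linarith
    have h1 : Real.exp (α * θ) = E * Real.exp (-(α * |t + θ|)) := by
      rw [hEdef, ← Real.exp_add, abs_of_nonpos (by linarith : t + θ ≤ 0)]
      congr 1; ring
    rw [hwr θ hθ0, hA0 (t + θ) (by linarith)]
    simp only [hwφdef, weightedHist, smul_smul, h1]
  -- the four sSup quantities
  set N1 : ℝ := sSup {c : ℝ | ∃ θ ∈ Set.Icc (0 : ℝ) t, c = ‖Real.exp (α * (θ - t)) • A θ‖}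
    with hN1def
  set Nφ : ℝ := sSup {c : ℝ | ∃ θ ≤ (0 : ℝ), c = ‖wφ θ‖} with hNφdef
  set L1 : ℝ := lipSeminormOn B (Set.Icc (-t) 0) with hL1def
  set Lφ : ℝ := lipSeminormOn wφ (Set.Iic 0) with hLφdef
  -- bounded-above facts
  have hS1bdd : BddAbove {c : ℝ | ∃ θ ∈ Set.Icc (0 : ℝ) t, c = ‖Real.exp (α * (θ - t)) • A θ‖} := by
    refine ⟨M, ?_⟩
    rintro c ⟨θ, hθ, rfl⟩
    rw [cm_norm_smul, abs_of_pos (Real.exp_pos _)]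
    have h1 : Real.exp (α * (θ - t)) ≤ 1 :=
      Real.exp_le_one_iff.mpr (mul_nonpos_of_nonneg_of_nonpos hα (by linarith [hθ.2]))
    have h2 := hM θ hθ
    nlinarith [norm_nonneg (A θ), Real.exp_pos (α * (θ - t))]
  have hSφbdd : BddAbove {c : ℝ | ∃ θ ≤ (0 : ℝ), c = ‖wφ θ‖} := by
    refine ⟨C, ?_⟩; rintro c ⟨θ, hθ, rfl⟩; exact hC θ hθ
  have hLφbdd : BddAbove {c : ℝ | ∃ u ∈ Set.Iic (0:ℝ), ∃ v ∈ Set.Iic (0:ℝ), u ≠ v ∧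
      c = ‖wφ u - wφ v‖ / |u - v|} := by
    refine ⟨L, ?_⟩
    rintro c ⟨u, hu, v, hv, hne, rfl⟩
    rw [div_le_iff₀ (abs_pos.mpr (sub_ne_zero.mpr hne))]
    have := hL.dist_le_mul u hu v hv
    rw [dist_eq_norm, Real.dist_eq] at this
    exact this
  -- explicit Lipschitz bound for B on [-t, 0]
  have hBexp : ∀ u ∈ Set.Icc (-t) (0:ℝ), ∀ v ∈ Set.Icc (-t) (0:ℝ),
      ‖B u - B v‖ ≤ (α * M + K) * |u - v| := by
    intro u hu v hv
    rw [hwr u hu.2, hwr v hv.2]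
    rw [cm_split]
    have h1 : ‖(Real.exp (α * u) - Real.exp (α * v)) • A (t + u)‖ ≤ α * M * |u - v| := by
      rw [cm_norm_smul]
      have he : |Real.exp (α * u) - Real.exp (α * v)| ≤ α * |u - v| := by
        have := exp_lip_aux (mul_nonpos_of_nonneg_of_nonpos hα hu.2)
          (mul_nonpos_of_nonneg_of_nonpos hα hv.2)
        calc |Real.exp (α * u) - Real.exp (α * v)| ≤ |α * u - α * v| := this
          _ = α * |u - v| := by rw [← mul_sub, abs_mul, abs_of_nonneg hα]
      have hAn : ‖A (t + u)‖ ≤ M := hM (t + u) ⟨by linarith [hu.1], by linarith [hu.2]⟩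
      nlinarith [norm_nonneg (A (t + u)), abs_nonneg (Real.exp (α * u) - Real.exp (α * v)),
        abs_nonneg (u - v)]
    have h2 : ‖Real.exp (α * v) • (A (t + u) - A (t + v))‖ ≤ (K : ℝ) * |u - v| := by
      rw [cm_norm_smul, abs_of_pos (Real.exp_pos _)]
      have hd := hALip.dist_le_mul (t + u) ⟨by linarith [hu.1], by linarith [hu.2]⟩
        (t + v) ⟨by linarith [hv.1], by linarith [hv.2]⟩
      rw [dist_eq_norm, Real.dist_eq] at hd
      have habs : |t + u - (t + v)| = |u - v| := by congr 1; ring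
      rw [habs] at hd
      have hev : Real.exp (α * v) ≤ 1 := Real.exp_le_one_iff.mpr
        (mul_nonpos_of_nonneg_of_nonpos hα hv.2)
      nlinarith [norm_nonneg (A (t + u) - A (t + v)), Real.exp_pos (α * v)]
    calc ‖_ + _‖ ≤ _ + _ := norm_add_le _ _
      _ ≤ α * M * |u - v| + (K : ℝ) * |u - v| := add_le_add h1 h2
      _ = (α * M + K) * |u - v| := by ring
  have hLB1bdd : BddAbove {c : ℝ | ∃ u ∈ Set.Icc (-t) (0:ℝ), ∃ v ∈ Set.Icc (-t) (0:ℝ), u ≠ v ∧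
      c = ‖B u - B v‖ / |u - v|} := by
    refine ⟨α * M + K, ?_⟩
    rintro c ⟨u, hu, v, hv, hne, rfl⟩
    rw [div_le_iff₀ (abs_pos.mpr (sub_ne_zero.mpr hne))]
    exact hBexp u hu v hv
  -- nonnegativity
  have hN10 : 0 ≤ N1 := Real.sSup_nonneg (by rintro c ⟨θ, hθ, rfl⟩; exact norm_nonneg _)
  have hNφ0 : 0 ≤ Nφ := Real.sSup_nonneg (by rintro c ⟨θ, hθ, rfl⟩; exact norm_nonneg _)
  have hL10 : 0 ≤ L1 := Real.sSup_nonneg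
    (by rintro c ⟨u, hu, v, hv, hne, rfl⟩
        exact div_nonneg (norm_nonneg _) (abs_nonneg _))
  have hLφ0 : 0 ≤ Lφ := Real.sSup_nonneg
    (by rintro c ⟨u, hu, v, hv, hne, rfl⟩
        exact div_nonneg (norm_nonneg _) (abs_nonneg _))
  -- key sup bounds
  have hN1mem : ∀ θ ∈ Set.Icc (-t) (0:ℝ), ‖B θ‖ ≤ N1 := by
    intro θ hθ
    rw [hwr θ hθ.2]
    have h : α * θ = α * ((t + θ) - t) := by ring
    rw [h]
    exact le_csSup hS1bdd ⟨t + θ, ⟨by linarith [hθ.1], by linarith [hθ.2]⟩, rfl⟩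
  have hNφmem : ∀ u ≤ (0:ℝ), ‖wφ u‖ ≤ Nφ := fun u hu => le_csSup hSφbdd ⟨u, hu, rfl⟩
  -- Lipschitz bounds from the sups
  have hlipφ : ∀ u ≤ (0:ℝ), ∀ v ≤ (0:ℝ), ‖wφ u - wφ v‖ ≤ Lφ * |u - v| := by
    intro u hu v hv
    rcases eq_or_ne u v with rfl | hne
    · simp
    · have h := le_csSup hLφbdd ⟨u, hu, v, hv, hne, rfl⟩
      rw [div_le_iff₀ (abs_pos.mpr (sub_ne_zero.mpr hne))] at h
      exact h
  have hlipB1 : ∀ u ∈ Set.Icc (-t) (0:ℝ), ∀ v ∈ Set.Icc (-t) (0:ℝ),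
      ‖B u - B v‖ ≤ L1 * |u - v| := by
    intro u hu v hv
    rcases eq_or_ne u v with rfl | hne
    · simp
    · have h := le_csSup hLB1bdd ⟨u, hu, v, hv, hne, rfl⟩
      rw [div_le_iff₀ (abs_pos.mpr (sub_ne_zero.mpr hne))] at h
      exact h
  have hlipB2 : ∀ u ≤ -t, ∀ v ≤ -t, ‖B u - B v‖ ≤ E * Lφ * |u - v| := by
    intro u hu v hv
    rw [hBφ u hu, hBφ v hv, cm_smul_sub, cm_norm_smul, abs_of_pos hE0]
    have h := hlipφ (t + u) (by linarith) (t + v) (by linarith)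
    have habs : |t + u - (t + v)| = |u - v| := by congr 1; ring
    rw [habs] at h
    calc E * ‖wφ (t + u) - wφ (t + v)‖ ≤ E * (Lφ * |u - v|) :=
        mul_le_mul_of_nonneg_left h hE0.le
      _ = E * Lφ * |u - v| := by ring
  -- part (i)
  have part1 : sSup {c : ℝ | ∃ θ ≤ (0:ℝ), c = ‖B θ‖} ≤ N1 + E * Nφ := by
    apply Real.sSup_le
    · rintro c ⟨θ, hθ, rfl⟩
      by_cases h : -t ≤ θ
      · have := hN1mem θ ⟨h, hθ⟩
        nlinarith
      · push_neg at h
        rw [hBφ θ h.le, cm_norm_smul, abs_of_pos hE0]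
        have := hNφmem (t + θ) (by linarith)
        nlinarith
    · positivity
  -- key: global Lipschitz bound
  have key : ∀ u v : ℝ, u ≤ v → v ≤ 0 → ‖B u - B v‖ ≤ (L1 + E * Lφ) * |u - v| := by
    intro u v huv hv0
    have hu0 : u ≤ 0 := le_trans huv hv0
    by_cases h1 : -t ≤ u
    · have := hlipB1 u ⟨h1, hu0⟩ v ⟨le_trans h1 huv, hv0⟩
      nlinarith [abs_nonneg (u - v), mul_nonneg hE0.le hLφ0]
    · push_neg at h1
      by_cases h2 : v ≤ -t
      · have := hlipB2 u (by linarith) v h2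
        nlinarith [abs_nonneg (u - v)]
      · push_neg at h2
        have hA1 := hlipB2 u (by linarith) (-t) le_rfl
        have hA2 := hlipB1 (-t) ⟨le_rfl, by linarith⟩ v ⟨h2.le, hv0⟩
        have tri : ‖B u - B v‖ ≤ ‖B u - B (-t)‖ + ‖B (-t) - B v‖ := by
          have := dist_triangle (B u) (B (-t)) (B v)
          simpa [dist_eq_norm] using this
        rw [abs_of_nonpos (by linarith : u - (-t) ≤ 0)] at hA1
        rw [abs_of_nonpos (by linarith : -t - v ≤ 0)] at hA2
        rw [abs_of_nonpos (by linarith : u - v ≤ 0)]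
        have e1 : E * Lφ * -(u - (-t)) ≤ E * Lφ * -(u - v) :=
          mul_le_mul_of_nonneg_left (by linarith) (mul_nonneg hE0.le hLφ0)
        have e2 : L1 * -(-t - v) ≤ L1 * -(u - v) :=
          mul_le_mul_of_nonneg_left (by linarith) hL10
        nlinarith
  -- part (ii)
  have part2 : lipSeminormOn B (Set.Iic 0) ≤ L1 + E * Lφ := by
    apply Real.sSup_le
    · rintro c ⟨u, hu, v, hv, hne, rfl⟩
      rw [div_le_iff₀ (abs_pos.mpr (sub_ne_zero.mpr hne))]
      rcases le_total u v with h | h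
      · exact key u v h hv
      · rw [norm_sub_rev, abs_sub_comm]
        exact key v u h hu
    · positivity
  refine ⟨part1, part2, ?_⟩
  -- part (iii)
  have e1 : lipAlphaNorm α (fun u : ℝ => A (t + u))
      = sSup {c : ℝ | ∃ θ ≤ (0:ℝ), c = ‖B θ‖} + lipSeminormOn B (Set.Iic 0) := rfl
  have e2 : lipAlphaNorm α φ = Nφ + Lφ := rfl
  rw [e1, e2]
  have : E * (Nφ + Lφ) = E * Nφ + E * Lφ := by ring
  linarith [part1, part2]
end

section
/- Let φ ∈ Lip_α and τ₀ ∈ C_+(Ω), and let r ∈ (0,+∞) be finite. Then system (1.1) with initial distribution (φ,τ₀) admits at most one solution (A,τ) ∈ C((−∞,r],C(Ω)) × C([0,r],C(Ω)); that is, if (A¹,τ¹) and (A²,τ²) are two solutions on [0,r] with the same initial distribution (φ,τ₀), then A¹(t,x) = A²(t,x) and τ¹(t,x) = τ²(t,x) for all t ∈ [0,r] and x ∈ Ω. -/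
open scoped NNReal
open MeasureTheory intervalIntegral Set

/-- `F : C(Ω)² × C(Ω×Ω) → C(Ω)` is Lipschitz continuous on bounded sets. -/
def LipschitzOnBoundedSets {Ω : Type*} [TopologicalSpace Ω] [CompactSpace Ω]
    (F : C(Ω, ℝ) → C(Ω, ℝ) → C(Ω × Ω, ℝ) → C(Ω, ℝ)) : Prop :=
  ∀ M : ℝ, 0 < M → ∃ L : ℝ, 0 < L ∧
    ∀ u v : C(Ω, ℝ), ∀ w : C(Ω × Ω, ℝ), ∀ u' v' : C(Ω, ℝ), ∀ w' : C(Ω × Ω, ℝ),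
      ‖u‖ ≤ M → ‖v‖ ≤ M → ‖w‖ ≤ M → ‖u'‖ ≤ M → ‖v'‖ ≤ M → ‖w'‖ ≤ M →
      ‖F u v w - F u' v' w'‖ ≤ L * (‖u - u'‖ + ‖v - v'‖ + ‖w - w'‖)

/-- A solution of system (1.1) on [0,r] with initial distribution (φ,τ₀):
a pair of continuous maps `A : (−∞,r] → C(Ω)` and `τ : [0,r] → C₊(Ω)` such that
`A = φ` on `(−∞,0]`, `A(t,x) = φ(0,x) + ∫₀ᵗ F(A(l,·), τ(l,·), A(l−τ(l))(·,·))(x) dl`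
for `t ∈ [0,r]` (where `A(l−τ(l))(x,y) = A(l−τ(l,x),y)`), and
`∫_{t−τ(t,x)}^{t} f(A(s,·))(x) ds = ∫_{−τ₀(x)}^{0} f(φ(s,·))(x) ds` on `[0,r]`. -/
def IsSolutionOn {Ω : Type*} [TopologicalSpace Ω] [CompactSpace Ω]
    (F : C(Ω, ℝ) → C(Ω, ℝ) → C(Ω × Ω, ℝ) → C(Ω, ℝ))
    (f : C(Ω, ℝ) → C(Ω, ℝ))
    (φ : ℝ → C(Ω, ℝ)) (τ₀ : C(Ω, ℝ)) (r : ℝ)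
    (A : ℝ → C(Ω, ℝ)) (τ : ℝ → C(Ω, ℝ)) : Prop :=
  ContinuousOn A (Set.Iic r) ∧
  ContinuousOn τ (Set.Icc 0 r) ∧
  (∀ t ∈ Set.Icc (0 : ℝ) r, ∀ x : Ω, 0 ≤ τ t x) ∧
  (∀ t ≤ (0 : ℝ), A t = φ t) ∧
  (∃ w : ℝ → C(Ω × Ω, ℝ),
    (∀ l ∈ Set.Icc (0 : ℝ) r, ∀ x y : Ω, w l (x, y) = A (l - τ l x) y) ∧
    (∀ t ∈ Set.Icc (0 : ℝ) r, ∀ x : Ω,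
      A t x = φ 0 x + ∫ l in (0 : ℝ)..t, F (A l) (τ l) (w l) x)) ∧
  (∀ t ∈ Set.Icc (0 : ℝ) r, ∀ x : Ω,
    (∫ s in (t - τ t x)..t, f (A s) x) = ∫ s in (-(τ₀ x))..(0 : ℝ), f (φ s) x)

private lemma uIcc_subset_Iic' {a b c : ℝ} (ha : a ≤ c) (hb : b ≤ c) :
    Set.uIcc a b ⊆ Set.Iic c := fun s hs => le_trans hs.2 (sup_le ha hb)

private lemma div_le_div_of_nonneg_right' {a b c : ℝ} (h : a ≤ b) (hc : 0 < c) :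
    a / c ≤ b / c := by
  gcongr

private lemma exp_sub_exp_le' {a b M : ℝ} (ha : 0 ≤ a) (haM : a ≤ M) (hb : 0 ≤ b) (hbM : b ≤ M) :
    |Real.exp a - Real.exp b| ≤ Real.exp M * |a - b| := by
  wlog h : b ≤ a generalizing a b
  · rw [abs_sub_comm, abs_sub_comm a b]; exact this hb hbM ha haM (le_of_not_ge h)
  have hexp : Real.exp b = Real.exp a * Real.exp (b - a) := by
    rw [← Real.exp_add]; ring_nf
  have hineq : b - a + 1 ≤ Real.exp (b - a) := Real.add_one_le_exp _
  have hmono : Real.exp a ≤ Real.exp M := Real.exp_le_exp.mpr haM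
  have hpos : 0 < Real.exp a := Real.exp_pos a
  have hge : Real.exp b ≤ Real.exp a := Real.exp_le_exp.mpr h
  rw [abs_of_nonneg (sub_nonneg.mpr hge), abs_of_nonneg (sub_nonneg.mpr h)]
  nlinarith

private lemma eq_of_intervalIntegral_pos_eq_zero' {g : ℝ → ℝ} {c a b : ℝ}
    (hg : ContinuousOn g (Set.Iic c)) (hpos : ∀ s, 0 < g s)
    (ha : a ≤ c) (hb : b ≤ c) (h : (∫ s in a..b, g s) = 0) : a = b := by
  by_contra hne
  have hint : IntervalIntegrable g MeasureTheory.volume a b :=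
    (hg.mono (uIcc_subset_Iic' ha hb)).intervalIntegrable
  rcases lt_or_gt_of_ne hne with hlt | hlt
  · have := intervalIntegral_pos_of_pos_on hint (fun x _ => hpos x) hlt
    linarith
  · have h2 := intervalIntegral_pos_of_pos_on hint.symm (fun x _ => hpos x) hlt
    rw [intervalIntegral.integral_symm] at h2
    linarith

set_option maxHeartbeats 4000000 in
/-- uniqueness of solutions of system (1.1) on a finite interval [0,r]. -/
theorem stmt_12
    {n : ℕ} (hn : 1 ≤ n)
    (Ω : Set (EuclideanSpace ℝ (Fin n))) (hΩ : IsCompact Ω) [CompactSpace Ω]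
    (f : C(Ω, ℝ) → C(Ω, ℝ)) (Kf : ℝ≥0) (hf_lip : LipschitzWith Kf f)
    (hf_mono : ∀ u v : C(Ω, ℝ), u ≤ v → f v ≤ f u)
    (Mbar : ℝ) (hMbar : 0 < Mbar)
    (hf_bdd : ∀ (ψ : C(Ω, ℝ)) (x : Ω), 0 < f ψ x ∧ f ψ x ≤ Mbar)
    (F : C(Ω, ℝ) → C(Ω, ℝ) → C(Ω × Ω, ℝ) → C(Ω, ℝ))
    (hF : LipschitzOnBoundedSets F)
    (α : ℝ) (hα : 0 ≤ α)
    (φ : ℝ → C(Ω, ℝ)) (hφ : MemLipAlpha α φ)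
    (τ₀ : C(Ω, ℝ)) (hτ₀ : ∀ x, 0 ≤ τ₀ x)
    (r : ℝ) (hr : 0 < r)
    (A₁ A₂ τ₁ τ₂ : ℝ → C(Ω, ℝ))
    (h₁ : IsSolutionOn F f φ τ₀ r A₁ τ₁)
    (h₂ : IsSolutionOn F f φ τ₀ r A₂ τ₂) :
    ∀ t ∈ Set.Icc (0 : ℝ) r, A₁ t = A₂ t ∧ τ₁ t = τ₂ t := by
  rcases isEmpty_or_nonempty Ω with hΩe | hΩne
  · intro t ht
    constructor <;> ext x <;> exact isEmptyElim x
  obtain ⟨hA₁c, hτ₁c, hτ₁pos, hA₁φ, ⟨w₁, hw₁, hInt₁⟩, hTc₁⟩ := h₁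
  obtain ⟨hA₂c, hτ₂c, hτ₂pos, hA₂φ, ⟨w₂, hw₂, hInt₂⟩, hTc₂⟩ := h₂
  obtain ⟨hφc, ⟨Cb, hCb⟩, ⟨Lφ, hLφ⟩⟩ := hφ
  -- bound on the delays
  obtain ⟨T₁, hT₁b⟩ := isCompact_Icc.exists_bound_of_continuousOn hτ₁c
  obtain ⟨T₂, hT₂b⟩ := isCompact_Icc.exists_bound_of_continuousOn hτ₂c
  set T : ℝ := max (max T₁ T₂) 0 with hTdef
  have hT0 : 0 ≤ T := le_max_right _ _
  have hτ₁T : ∀ l ∈ Icc (0:ℝ) r, ∀ x : Ω, τ₁ l x ≤ T := by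
    intro l hl x
    calc τ₁ l x ≤ |τ₁ l x| := le_abs_self _
    _ ≤ ‖τ₁ l‖ := (τ₁ l).norm_coe_le_norm x
    _ ≤ T₁ := hT₁b l hl
    _ ≤ T := le_trans (le_max_left _ _) (le_max_left _ _)
  have hτ₂T : ∀ l ∈ Icc (0:ℝ) r, ∀ x : Ω, τ₂ l x ≤ T := by
    intro l hl x
    calc τ₂ l x ≤ |τ₂ l x| := le_abs_self _
    _ ≤ ‖τ₂ l‖ := (τ₂ l).norm_coe_le_norm x
    _ ≤ T₂ := hT₂b l hl
    _ ≤ T := le_trans (le_max_right _ _) (le_max_left _ _)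
  have hτ₁normT : ∀ l ∈ Icc (0:ℝ) r, ‖τ₁ l‖ ≤ T :=
    fun l hl => le_trans (hT₁b l hl) (le_trans (le_max_left _ _) (le_max_left _ _))
  have hτ₂normT : ∀ l ∈ Icc (0:ℝ) r, ‖τ₂ l‖ ≤ T :=
    fun l hl => le_trans (hT₂b l hl) (le_trans (le_max_right _ _) (le_max_left _ _))
  have hJ : Icc (-T) r ⊆ Iic r := fun s hs => hs.2
  have hIccJ : Icc (0:ℝ) r ⊆ Icc (-T) r := Icc_subset_Icc (by linarith) le_rfl
  have hIccIic : Icc (0:ℝ) r ⊆ Iic r := fun s hs => hs.2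
  have hdel₁ : ∀ l ∈ Icc (0:ℝ) r, ∀ x : Ω, l - τ₁ l x ∈ Icc (-T) r :=
    fun l hl x => ⟨by have := hτ₁T l hl x; have := hl.1; linarith,
      by have := hτ₁pos l hl x; have := hl.2; linarith⟩
  have hdel₂ : ∀ l ∈ Icc (0:ℝ) r, ∀ x : Ω, l - τ₂ l x ∈ Icc (-T) r :=
    fun l hl x => ⟨by have := hτ₂T l hl x; have := hl.1; linarith,
      by have := hτ₂pos l hl x; have := hl.2; linarith⟩
  -- bound on A₁, A₂ over [-T, r]
  obtain ⟨c₁, hc₁⟩ := isCompact_Icc.exists_bound_of_continuousOn (hA₁c.mono hJ)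
  obtain ⟨c₂, hc₂⟩ := isCompact_Icc.exists_bound_of_continuousOn (hA₂c.mono hJ)
  set c : ℝ := max (max c₁ c₂) 0 with hcdef
  have hc0 : 0 ≤ c := le_max_right _ _
  have hcA₁ : ∀ s ∈ Icc (-T) r, ‖A₁ s‖ ≤ c :=
    fun s hs => le_trans (hc₁ s hs) (le_trans (le_max_left _ _) (le_max_left _ _))
  have hcA₂ : ∀ s ∈ Icc (-T) r, ‖A₂ s‖ ≤ c :=
    fun s hs => le_trans (hc₂ s hs) (le_trans (le_max_right _ _) (le_max_left _ _))
  -- positive lower bound m for f (A i s) x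
  have hmm : ∃ m : ℝ, 0 < m ∧ ∀ s ∈ Icc (-T) r, ∀ x : Ω, m ≤ f (A₁ s) x := by
    set ψ : C(Ω, ℝ) := ContinuousMap.const _ c with hψdef
    obtain ⟨x₀, -, hx₀⟩ := isCompact_univ.exists_isMinOn univ_nonempty
      ((f ψ).continuous.continuousOn : ContinuousOn (f ψ) univ)
    rw [isMinOn_iff] at hx₀
    refine ⟨f ψ x₀, (hf_bdd ψ x₀).1, fun s hs x => ?_⟩
    have hψle : A₁ s ≤ ψ := by
      intro y
      calc A₁ s y ≤ |A₁ s y| := le_abs_self _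
        _ ≤ ‖A₁ s‖ := (A₁ s).norm_coe_le_norm y
        _ ≤ c := hcA₁ s hs
    exact le_trans (hx₀ x (mem_univ x)) (hf_mono (A₁ s) ψ hψle x)
  obtain ⟨m, hm, hmf⟩ := hmm
  -- continuity of evaluated f ∘ A i
  have hfA₁ : ∀ x : Ω, ContinuousOn (fun s => f (A₁ s) x) (Iic r) := by
    intro x
    exact ((ContinuousEvalConst.continuous_eval_const x).comp hf_lip.continuous).comp_continuousOn hA₁c
  have hfA₂ : ∀ x : Ω, ContinuousOn (fun s => f (A₂ s) x) (Iic r) := by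
    intro x
    exact ((ContinuousEvalConst.continuous_eval_const x).comp hf_lip.continuous).comp_continuousOn hA₂c
  -- continuity of the w's
  have hw₁c : ContinuousOn w₁ (Icc 0 r) := by
    have hAuc : UniformContinuousOn A₁ (Icc (-T) r) :=
      isCompact_Icc.uniformContinuousOn_of_continuous (hA₁c.mono hJ)
    rw [Metric.uniformContinuousOn_iff] at hAuc
    intro l₀ hl₀
    rw [Metric.continuousWithinAt_iff]
    intro ε hε
    obtain ⟨δA, hδA, hA⟩ := hAuc (ε/2) (by positivity)
    have hτcw := hτ₁c l₀ hl₀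
    rw [Metric.continuousWithinAt_iff] at hτcw
    obtain ⟨δτ, hδτ, hτ⟩ := hτcw (δA/2) (by positivity)
    refine ⟨min δτ (δA/2), by positivity, fun l hl hdist => ?_⟩
    have h1 : dist (w₁ l) (w₁ l₀) ≤ ε/2 := by
      rw [ContinuousMap.dist_le (by positivity)]
      rintro ⟨x, y⟩
      rw [hw₁ l hl x y, hw₁ l₀ hl₀ x y]
      have hkey : dist (A₁ (l - τ₁ l x)) (A₁ (l₀ - τ₁ l₀ x)) < ε/2 := by
        apply hA _ (hdel₁ l hl x) _ (hdel₁ l₀ hl₀ x)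
        have hd1 : dist (τ₁ l x) (τ₁ l₀ x) ≤ dist (τ₁ l) (τ₁ l₀) :=
          ContinuousMap.dist_apply_le_dist x
        have hd2 : dist (τ₁ l) (τ₁ l₀) < δA/2 :=
          hτ hl (lt_of_lt_of_le hdist (min_le_left _ _))
        have hll : dist l l₀ < δA/2 := lt_of_lt_of_le hdist (min_le_right _ _)
        rw [Real.dist_eq] at hll
        have hd1' : |τ₁ l x - τ₁ l₀ x| ≤ dist (τ₁ l) (τ₁ l₀) := by
          rw [← Real.dist_eq]; exact hd1
        have heq : l - τ₁ l x - (l₀ - τ₁ l₀ x) = (l - l₀) + (τ₁ l₀ x - τ₁ l x) := by ring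
        calc |l - τ₁ l x - (l₀ - τ₁ l₀ x)| = |(l - l₀) + (τ₁ l₀ x - τ₁ l x)| := by rw [heq]
          _ ≤ |l - l₀| + |τ₁ l₀ x - τ₁ l x| := abs_add_le _ _
          _ = |l - l₀| + |τ₁ l x - τ₁ l₀ x| := by rw [abs_sub_comm (τ₁ l₀ x)]
          _ < δA/2 + δA/2 := add_lt_add hll (lt_of_le_of_lt hd1' hd2)
          _ = δA := by ring
      exact le_of_lt (lt_of_le_of_lt (ContinuousMap.dist_apply_le_dist y) hkey)
    linarith
  have hw₂c : ContinuousOn w₂ (Icc 0 r) := by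
    have hAuc : UniformContinuousOn A₂ (Icc (-T) r) :=
      isCompact_Icc.uniformContinuousOn_of_continuous (hA₂c.mono hJ)
    rw [Metric.uniformContinuousOn_iff] at hAuc
    intro l₀ hl₀
    rw [Metric.continuousWithinAt_iff]
    intro ε hε
    obtain ⟨δA, hδA, hA⟩ := hAuc (ε/2) (by positivity)
    have hτcw := hτ₂c l₀ hl₀
    rw [Metric.continuousWithinAt_iff] at hτcw
    obtain ⟨δτ, hδτ, hτ⟩ := hτcw (δA/2) (by positivity)
    refine ⟨min δτ (δA/2), by positivity, fun l hl hdist => ?_⟩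
    have h1 : dist (w₂ l) (w₂ l₀) ≤ ε/2 := by
      rw [ContinuousMap.dist_le (by positivity)]
      rintro ⟨x, y⟩
      rw [hw₂ l hl x y, hw₂ l₀ hl₀ x y]
      have hkey : dist (A₂ (l - τ₂ l x)) (A₂ (l₀ - τ₂ l₀ x)) < ε/2 := by
        apply hA _ (hdel₂ l hl x) _ (hdel₂ l₀ hl₀ x)
        have hd1 : dist (τ₂ l x) (τ₂ l₀ x) ≤ dist (τ₂ l) (τ₂ l₀) :=
          ContinuousMap.dist_apply_le_dist x
        have hd2 : dist (τ₂ l) (τ₂ l₀) < δA/2 :=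
          hτ hl (lt_of_lt_of_le hdist (min_le_left _ _))
        have hll : dist l l₀ < δA/2 := lt_of_lt_of_le hdist (min_le_right _ _)
        rw [Real.dist_eq] at hll
        have hd1' : |τ₂ l x - τ₂ l₀ x| ≤ dist (τ₂ l) (τ₂ l₀) := by
          rw [← Real.dist_eq]; exact hd1
        have heq : l - τ₂ l x - (l₀ - τ₂ l₀ x) = (l - l₀) + (τ₂ l₀ x - τ₂ l x) := by ring
        calc |l - τ₂ l x - (l₀ - τ₂ l₀ x)| = |(l - l₀) + (τ₂ l₀ x - τ₂ l x)| := by rw [heq]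
          _ ≤ |l - l₀| + |τ₂ l₀ x - τ₂ l x| := abs_add_le _ _
          _ = |l - l₀| + |τ₂ l x - τ₂ l₀ x| := by rw [abs_sub_comm (τ₂ l₀ x)]
          _ < δA/2 + δA/2 := add_lt_add hll (lt_of_le_of_lt hd1' hd2)
          _ = δA := by ring
      exact le_of_lt (lt_of_le_of_lt (ContinuousMap.dist_apply_le_dist y) hkey)
    linarith
  -- norm bounds on w's
  have hwb₁ : ∀ l ∈ Icc (0:ℝ) r, ‖w₁ l‖ ≤ c := by
    intro l hl
    rw [ContinuousMap.norm_le _ hc0]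
    rintro ⟨x, y⟩
    rw [hw₁ l hl x y]
    exact le_trans ((A₁ (l - τ₁ l x)).norm_coe_le_norm y) (hcA₁ _ (hdel₁ l hl x))
  have hwb₂ : ∀ l ∈ Icc (0:ℝ) r, ‖w₂ l‖ ≤ c := by
    intro l hl
    rw [ContinuousMap.norm_le _ hc0]
    rintro ⟨x, y⟩
    rw [hw₂ l hl x y]
    exact le_trans ((A₂ (l - τ₂ l x)).norm_coe_le_norm y) (hcA₂ _ (hdel₂ l hl x))
  -- Lipschitz data for F
  set M : ℝ := max c T + 1 with hMdef
  have hM : 0 < M := by positivity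
  obtain ⟨L, hL0, hLip⟩ := hF M hM
  -- the integrands
  set G₁ : ℝ → C(Ω, ℝ) := fun l => F (A₁ l) (τ₁ l) (w₁ l) with hG₁def
  set G₂ : ℝ → C(Ω, ℝ) := fun l => F (A₂ l) (τ₂ l) (w₂ l) with hG₂def
  have hcM : c ≤ M := by rw [hMdef]; linarith [le_max_left c T]
  have hTM : T ≤ M := by rw [hMdef]; linarith [le_max_right c T]
  have hMA₁ : ∀ l ∈ Icc (0:ℝ) r, ‖A₁ l‖ ≤ M :=
    fun l hl => le_trans (hcA₁ l (hIccJ hl)) hcM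
  have hMA₂ : ∀ l ∈ Icc (0:ℝ) r, ‖A₂ l‖ ≤ M :=
    fun l hl => le_trans (hcA₂ l (hIccJ hl)) hcM
  have hMτ₁ : ∀ l ∈ Icc (0:ℝ) r, ‖τ₁ l‖ ≤ M :=
    fun l hl => le_trans (hτ₁normT l hl) hTM
  have hMτ₂ : ∀ l ∈ Icc (0:ℝ) r, ‖τ₂ l‖ ≤ M :=
    fun l hl => le_trans (hτ₂normT l hl) hTM
  have hMw₁ : ∀ l ∈ Icc (0:ℝ) r, ‖w₁ l‖ ≤ M :=
    fun l hl => le_trans (hwb₁ l hl) hcM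
  have hMw₂ : ∀ l ∈ Icc (0:ℝ) r, ‖w₂ l‖ ≤ M :=
    fun l hl => le_trans (hwb₂ l hl) hcM
  have hG₁c : ContinuousOn G₁ (Icc 0 r) := by
    intro l₀ hl₀
    have key : ∀ l ∈ Icc (0:ℝ) r, ‖G₁ l - G₁ l₀‖ ≤
        L * (‖A₁ l - A₁ l₀‖ + ‖τ₁ l - τ₁ l₀‖ + ‖w₁ l - w₁ l₀‖) :=
      fun l hl => hLip _ _ _ _ _ _ (hMA₁ l hl) (hMτ₁ l hl) (hMw₁ l hl)
        (hMA₁ l₀ hl₀) (hMτ₁ l₀ hl₀) (hMw₁ l₀ hl₀)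
    have hA' : Filter.Tendsto (fun l => ‖A₁ l - A₁ l₀‖) (nhdsWithin l₀ (Icc 0 r)) (nhds 0) :=
      tendsto_iff_norm_sub_tendsto_zero.mp ((hA₁c.mono hIccIic) l₀ hl₀)
    have hτ' : Filter.Tendsto (fun l => ‖τ₁ l - τ₁ l₀‖) (nhdsWithin l₀ (Icc 0 r)) (nhds 0) :=
      tendsto_iff_norm_sub_tendsto_zero.mp (hτ₁c l₀ hl₀)
    have hw' : Filter.Tendsto (fun l => ‖w₁ l - w₁ l₀‖) (nhdsWithin l₀ (Icc 0 r)) (nhds 0) :=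
      tendsto_iff_norm_sub_tendsto_zero.mp (hw₁c l₀ hl₀)
    have hbound : Filter.Tendsto
        (fun l => L * (‖A₁ l - A₁ l₀‖ + ‖τ₁ l - τ₁ l₀‖ + ‖w₁ l - w₁ l₀‖))
        (nhdsWithin l₀ (Icc 0 r)) (nhds 0) := by
      have h0 := ((hA'.add hτ').add hw').const_mul L
      simpa using h0
    have hG' : Filter.Tendsto (fun l => ‖G₁ l - G₁ l₀‖) (nhdsWithin l₀ (Icc 0 r)) (nhds 0) :=
      squeeze_zero' (Filter.Eventually.of_forall fun l => norm_nonneg _)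
        (Filter.eventually_of_mem self_mem_nhdsWithin key) hbound
    exact tendsto_iff_norm_sub_tendsto_zero.mpr hG'
  have hG₂c : ContinuousOn G₂ (Icc 0 r) := by
    intro l₀ hl₀
    have key : ∀ l ∈ Icc (0:ℝ) r, ‖G₂ l - G₂ l₀‖ ≤
        L * (‖A₂ l - A₂ l₀‖ + ‖τ₂ l - τ₂ l₀‖ + ‖w₂ l - w₂ l₀‖) :=
      fun l hl => hLip _ _ _ _ _ _ (hMA₂ l hl) (hMτ₂ l hl) (hMw₂ l hl)
        (hMA₂ l₀ hl₀) (hMτ₂ l₀ hl₀) (hMw₂ l₀ hl₀)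
    have hA' : Filter.Tendsto (fun l => ‖A₂ l - A₂ l₀‖) (nhdsWithin l₀ (Icc 0 r)) (nhds 0) :=
      tendsto_iff_norm_sub_tendsto_zero.mp ((hA₂c.mono hIccIic) l₀ hl₀)
    have hτ' : Filter.Tendsto (fun l => ‖τ₂ l - τ₂ l₀‖) (nhdsWithin l₀ (Icc 0 r)) (nhds 0) :=
      tendsto_iff_norm_sub_tendsto_zero.mp (hτ₂c l₀ hl₀)
    have hw' : Filter.Tendsto (fun l => ‖w₂ l - w₂ l₀‖) (nhdsWithin l₀ (Icc 0 r)) (nhds 0) :=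
      tendsto_iff_norm_sub_tendsto_zero.mp (hw₂c l₀ hl₀)
    have hbound : Filter.Tendsto
        (fun l => L * (‖A₂ l - A₂ l₀‖ + ‖τ₂ l - τ₂ l₀‖ + ‖w₂ l - w₂ l₀‖))
        (nhdsWithin l₀ (Icc 0 r)) (nhds 0) := by
      have h0 := ((hA'.add hτ').add hw').const_mul L
      simpa using h0
    have hG' : Filter.Tendsto (fun l => ‖G₂ l - G₂ l₀‖) (nhdsWithin l₀ (Icc 0 r)) (nhds 0) :=
      squeeze_zero' (Filter.Eventually.of_forall fun l => norm_nonneg _)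
        (Filter.eventually_of_mem self_mem_nhdsWithin key) hbound
    exact tendsto_iff_norm_sub_tendsto_zero.mpr hG'
  have hG₁x : ∀ x : Ω, ContinuousOn (fun l => G₁ l x) (Icc 0 r) :=
    fun x => (ContinuousEvalConst.continuous_eval_const x).comp_continuousOn hG₁c
  have hG₂x : ∀ x : Ω, ContinuousOn (fun l => G₂ l x) (Icc 0 r) :=
    fun x => (ContinuousEvalConst.continuous_eval_const x).comp_continuousOn hG₂c
  -- difference of A values is an integral of the difference of G's
  have hdiff : ∀ t ∈ Icc (0:ℝ) r, ∀ x : Ω,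
      A₁ t x - A₂ t x = ∫ l in (0:ℝ)..t, (G₁ l x - G₂ l x) := by
    intro t ht x
    rw [hInt₁ t ht x, hInt₂ t ht x]
    have hi₁ : IntervalIntegrable (fun l => G₁ l x) volume 0 t :=
      ((hG₁x x).mono (uIcc_subset_Icc (left_mem_Icc.mpr (le_trans ht.1 ht.2)) ht)).intervalIntegrable
    have hi₂ : IntervalIntegrable (fun l => G₂ l x) volume 0 t :=
      ((hG₂x x).mono (uIcc_subset_Icc (left_mem_Icc.mpr (le_trans ht.1 ht.2)) ht)).intervalIntegrable
    rw [intervalIntegral.integral_sub hi₁ hi₂]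
    ring
  -- A₂ is Lipschitz on [-T, r]
  have hALip : ∃ Λ : ℝ, 0 ≤ Λ ∧ ∀ s ∈ Icc (-T) r, ∀ t ∈ Icc (-T) r,
      ‖A₂ t - A₂ s‖ ≤ Λ * |t - s| := by
    obtain ⟨MG₀, hMG₀⟩ := isCompact_Icc.exists_bound_of_continuousOn hG₂c
    set MG : ℝ := max MG₀ 0 with hMGdef
    have hMG0 : 0 ≤ MG := le_max_right _ _
    have hMG : ∀ l ∈ Icc (0:ℝ) r, ‖G₂ l‖ ≤ MG := fun l hl => le_trans (hMG₀ l hl) (le_max_left _ _)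
    have hLip1 : ∀ s ∈ Icc (0:ℝ) r, ∀ t ∈ Icc (0:ℝ) r, ‖A₂ t - A₂ s‖ ≤ MG * |t - s| := by
      intro s hs t ht
      rw [ContinuousMap.norm_le _ (by positivity)]
      intro x
      have heq : A₂ t x - A₂ s x = ∫ l in s..t, G₂ l x := by
        have h0s : IntervalIntegrable (fun l => G₂ l x) volume 0 s :=
          ((hG₂x x).mono (uIcc_subset_Icc (left_mem_Icc.mpr (le_trans hs.1 hs.2)) hs)).intervalIntegrable
        have hst : IntervalIntegrable (fun l => G₂ l x) volume s t :=
          ((hG₂x x).mono (uIcc_subset_Icc hs ht)).intervalIntegrable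
        have hadj := intervalIntegral.integral_add_adjacent_intervals h0s hst
        rw [hInt₂ t ht x, hInt₂ s hs x, ← hadj]; ring
      have : ‖(A₂ t - A₂ s) x‖ = ‖A₂ t x - A₂ s x‖ := by simp
      rw [this, heq]
      apply intervalIntegral.norm_integral_le_of_norm_le_const
      intro l hlI
      have hlmem : l ∈ Icc (0:ℝ) r := uIcc_subset_Icc hs ht (Set.Ioc_subset_Icc_self hlI)
      exact le_trans ((G₂ l).norm_coe_le_norm x) (hMG l hlmem)
    set Cb' : ℝ := max Cb 0 with hCb'def
    have hCb'0 : 0 ≤ Cb' := le_max_right _ _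
    set E : ℝ := Real.exp (α * T) with hEdef
    set Λ₂ : ℝ := E * (Lφ + α * Cb') with hΛ₂def
    have hΛ₂0 : 0 ≤ Λ₂ := by positivity
    have hφeq : ∀ u : ℝ, φ u = Real.exp (α * |u|) • weightedHist α φ u := by
      intro u
      rw [weightedHist, smul_smul, ← Real.exp_add]
      simp
    have hLip2 : ∀ s ∈ Icc (-T) (0:ℝ), ∀ t ∈ Icc (-T) (0:ℝ),
        ‖A₂ t - A₂ s‖ ≤ Λ₂ * |t - s| := by
      intro s hs t ht
      have habs_t : |t| ≤ T := abs_le.mpr ⟨ht.1, le_trans ht.2 hT0⟩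
      have habs_s : |s| ≤ T := abs_le.mpr ⟨hs.1, le_trans hs.2 hT0⟩
      have hαt : α * |t| ≤ α * T := mul_le_mul_of_nonneg_left habs_t hα
      have hαs : α * |s| ≤ α * T := mul_le_mul_of_nonneg_left habs_s hα
      have het : Real.exp (α * |t|) ≤ E := Real.exp_le_exp.mpr hαt
      rw [hA₂φ s hs.2, hA₂φ t ht.2, hφeq t, hφeq s]
      have hsplit : Real.exp (α*|t|) • weightedHist α φ t - Real.exp (α*|s|) • weightedHist α φ s
          = Real.exp (α*|t|) • (weightedHist α φ t - weightedHist α φ s)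
            + (Real.exp (α*|t|) - Real.exp (α*|s|)) • weightedHist α φ s := by
        rw [smul_sub, sub_smul]; abel
      rw [hsplit]
      have hwdist : ‖weightedHist α φ t - weightedHist α φ s‖ ≤ Lφ * |t - s| := by
        have := hLφ.dist_le_mul t ht.2 s hs.2
        rw [dist_eq_norm, Real.dist_eq] at this
        exact this
      have hediff : |Real.exp (α*|t|) - Real.exp (α*|s|)| ≤ E * (α * |t - s|) := by
        have h1 := exp_sub_exp_le' (by positivity) hαt (by positivity) hαs
        rw [← hEdef] at h1
        refine le_trans h1 ?_
        have h2 : |(α * |t|) - (α * |s|)| ≤ α * |t - s| := by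
          rw [← mul_sub, abs_mul, abs_of_nonneg hα]
          exact mul_le_mul_of_nonneg_left (abs_abs_sub_abs_le_abs_sub t s) hα
        exact mul_le_mul_of_nonneg_left h2 (Real.exp_pos _).le
      have hws : ‖weightedHist α φ s‖ ≤ Cb' := le_trans (hCb s hs.2) (le_max_left _ _)
      calc ‖Real.exp (α*|t|) • (weightedHist α φ t - weightedHist α φ s)
            + (Real.exp (α*|t|) - Real.exp (α*|s|)) • weightedHist α φ s‖
          ≤ ‖Real.exp (α*|t|) • (weightedHist α φ t - weightedHist α φ s)‖
            + ‖(Real.exp (α*|t|) - Real.exp (α*|s|)) • weightedHist α φ s‖ := norm_add_le _ _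
        _ ≤ E * (Lφ * |t - s|) + (E * (α * |t - s|)) * Cb' := by
            have e1 : ‖Real.exp (α*|t|) • (weightedHist α φ t - weightedHist α φ s)‖
                ≤ E * (Lφ * |t - s|) := by
              rw [norm_smul (Real.exp (α*|t|)) (weightedHist α φ t - weightedHist α φ s),
                Real.norm_eq_abs, abs_of_pos (Real.exp_pos _)]
              exact mul_le_mul het hwdist (norm_nonneg _) (by positivity)
            have e2 : ‖(Real.exp (α*|t|) - Real.exp (α*|s|)) • weightedHist α φ s‖
                ≤ (E * (α * |t - s|)) * Cb' := by
              rw [norm_smul (Real.exp (α*|t|) - Real.exp (α*|s|)) (weightedHist α φ s),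
                Real.norm_eq_abs]
              exact mul_le_mul hediff hws (norm_nonneg _) (by positivity)
            linarith
        _ = Λ₂ * |t - s| := by rw [hΛ₂def]; push_cast; ring
    refine ⟨max MG Λ₂, le_trans hMG0 (le_max_left _ _), ?_⟩
    have hMGΛ : MG ≤ max MG Λ₂ := le_max_left _ _
    have hΛ₂Λ : Λ₂ ≤ max MG Λ₂ := le_max_right _ _
    have hΛ0' : 0 ≤ max MG Λ₂ := le_trans hMG0 hMGΛ
    have hcross : ∀ s ∈ Icc (-T) r, ∀ t ∈ Icc (-T) r, s ≤ 0 → 0 ≤ t →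
        ‖A₂ t - A₂ s‖ ≤ max MG Λ₂ * |t - s| := by
      intro s hs t ht hs0 h0t
      have h1 := hLip1 0 ⟨le_rfl, hr.le⟩ t ⟨h0t, ht.2⟩
      have h2 := hLip2 s ⟨hs.1, hs0⟩ 0 ⟨neg_nonpos.mpr hT0, le_rfl⟩
      have htri : ‖A₂ t - A₂ s‖ ≤ ‖A₂ t - A₂ 0‖ + ‖A₂ 0 - A₂ s‖ := by
        have hre : A₂ t - A₂ s = (A₂ t - A₂ 0) + (A₂ 0 - A₂ s) := by abel
        rw [hre]; exact norm_add_le _ _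
      have ht0 : |t - 0| = t := by rw [sub_zero, abs_of_nonneg h0t]
      have h0s : |(0:ℝ) - s| = -s := by rw [zero_sub, abs_neg, abs_of_nonpos hs0]
      have hts : |t - s| = t - s := abs_of_nonneg (by linarith)
      rw [ht0] at h1
      rw [h0s] at h2
      rw [hts]
      nlinarith [mul_le_mul_of_nonneg_right hMGΛ h0t,
        mul_le_mul_of_nonneg_right hΛ₂Λ (neg_nonneg.mpr hs0)]
    intro s hs t ht
    rcases le_total 0 s with h0s | hs0
    · rcases le_total 0 t with h0t | ht0
      · exact le_trans (hLip1 s ⟨h0s, hs.2⟩ t ⟨h0t, ht.2⟩)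
          (mul_le_mul_of_nonneg_right hMGΛ (abs_nonneg _))
      · rw [norm_sub_rev, abs_sub_comm]
        exact hcross t ht s hs ht0 h0s
    · rcases le_total 0 t with h0t | ht0
      · exact hcross s hs t ht hs0 h0t
      · exact le_trans (hLip2 s ⟨hs.1, hs0⟩ t ⟨ht.1, ht0⟩)
          (mul_le_mul_of_nonneg_right hΛ₂Λ (abs_nonneg _))
  obtain ⟨Λ, hΛ0, hALip⟩ := hALip
  set D : ℝ := Kf * r / m with hDdef
  have hD0 : 0 ≤ D := by positivity
  -- key estimate for the delays
  have hEτ : ∀ B : ℝ, 0 ≤ B → ∀ t ∈ Icc (0:ℝ) r,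
      (∀ s ∈ Icc (0:ℝ) r, s ≤ t → ‖A₁ s - A₂ s‖ ≤ B) →
      ∀ x : Ω, |τ₁ t x - τ₂ t x| ≤ D * B := by
    intro B hB t ht hbd x
    set a : ℝ := t - τ₁ t x with hadef
    set b : ℝ := t - τ₂ t x with hbdef
    have haJ : a ∈ Icc (-T) r := hdel₁ t ht x
    have hbJ : b ∈ Icc (-T) r := hdel₂ t ht x
    have hat : a ≤ t := by rw [hadef]; linarith [hτ₁pos t ht x]
    have hbt : b ≤ t := by rw [hbdef]; linarith [hτ₂pos t ht x]
    have hint₁ : ∀ u v : ℝ, u ≤ r → v ≤ r →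
        IntervalIntegrable (fun s => f (A₁ s) x) volume u v :=
      fun u v hu hv => ((hfA₁ x).mono (uIcc_subset_Iic' hu hv)).intervalIntegrable
    have hint₂ : ∀ u v : ℝ, u ≤ r → v ≤ r →
        IntervalIntegrable (fun s => f (A₂ s) x) volume u v :=
      fun u v hu hv => ((hfA₂ x).mono (uIcc_subset_Iic' hu hv)).intervalIntegrable
    have hI : (∫ s in a..b, f (A₁ s) x) = ∫ s in b..t, (f (A₂ s) x - f (A₁ s) x) := by
      have h1 : (∫ s in a..b, f (A₁ s) x) + (∫ s in b..t, f (A₁ s) x)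
          = ∫ s in a..t, f (A₁ s) x :=
        intervalIntegral.integral_add_adjacent_intervals
          (hint₁ a b haJ.2 hbJ.2) (hint₁ b t hbJ.2 ht.2)
      have h2 : (∫ s in a..t, f (A₁ s) x) = ∫ s in b..t, f (A₂ s) x := by
        rw [hadef, hbdef, hTc₁ t ht x, hTc₂ t ht x]
      rw [intervalIntegral.integral_sub (hint₂ b t hbJ.2 ht.2) (hint₁ b t hbJ.2 ht.2)]
      linarith
    have hKfB : (0:ℝ) ≤ Kf * B := by positivity
    have hptw : ∀ s, 0 ≤ s → s ≤ t → ‖f (A₂ s) x - f (A₁ s) x‖ ≤ Kf * B := by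
      intro s h0 hst
      have hs' : s ∈ Icc (0:ℝ) r := ⟨h0, le_trans hst ht.2⟩
      have h1 : dist (f (A₂ s)) (f (A₁ s)) ≤ Kf * dist (A₂ s) (A₁ s) := hf_lip.dist_le_mul _ _
      have h2 : |f (A₂ s) x - f (A₁ s) x| ≤ dist (f (A₂ s)) (f (A₁ s)) := by
        rw [← Real.dist_eq]; exact ContinuousMap.dist_apply_le_dist x
      have h3 : dist (A₂ s) (A₁ s) ≤ B := by
        rw [dist_comm, dist_eq_norm]; exact hbd s hs' hst
      rw [Real.norm_eq_abs]
      calc |f (A₂ s) x - f (A₁ s) x| ≤ Kf * dist (A₂ s) (A₁ s) := le_trans h2 h1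
        _ ≤ Kf * B := by
            exact mul_le_mul_of_nonneg_left h3 Kf.coe_nonneg
    have hRbound : |∫ s in b..t, (f (A₂ s) x - f (A₁ s) x)| ≤ Kf * B * r := by
      rcases le_total b 0 with hb0 | hb0
      · have hzero : (∫ s in b..(0:ℝ), (f (A₂ s) x - f (A₁ s) x)) = 0 := by
          rw [intervalIntegral.integral_congr (g := fun _ => (0:ℝ)) ?_,
            intervalIntegral.integral_zero]
          intro s hs
          have hs0 : s ≤ 0 := le_trans hs.2 (by rw [sup_eq_right.mpr hb0])
          simp [hA₁φ s hs0, hA₂φ s hs0]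
        have hsplit : (∫ s in b..t, (f (A₂ s) x - f (A₁ s) x))
            = (∫ s in b..(0:ℝ), (f (A₂ s) x - f (A₁ s) x))
              + ∫ s in (0:ℝ)..t, (f (A₂ s) x - f (A₁ s) x) :=
          (intervalIntegral.integral_add_adjacent_intervals
            ((hint₂ b 0 hbJ.2 (by linarith)).sub (hint₁ b 0 hbJ.2 (by linarith)))
            ((hint₂ 0 t (by linarith) ht.2).sub (hint₁ 0 t (by linarith) ht.2))).symm
        rw [hsplit, hzero, zero_add]
        have hnb := intervalIntegral.norm_integral_le_of_norm_le_const
          (C := Kf * B) (f := fun s => f (A₂ s) x - f (A₁ s) x) (a := (0:ℝ)) (b := t) ?_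
        · rw [Real.norm_eq_abs] at hnb
          refine le_trans hnb ?_
          have : |t - 0| = t := by rw [sub_zero, abs_of_nonneg ht.1]
          rw [this]
          exact mul_le_mul_of_nonneg_left ht.2 hKfB
        · intro s hsI
          rw [uIoc_of_le ht.1] at hsI
          exact hptw s hsI.1.le hsI.2
      · have hnb := intervalIntegral.norm_integral_le_of_norm_le_const
          (C := Kf * B) (f := fun s => f (A₂ s) x - f (A₁ s) x) (a := b) (b := t) ?_
        · rw [Real.norm_eq_abs] at hnb
          refine le_trans hnb ?_
          have : |t - b| = t - b := abs_of_nonneg (by linarith)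
          rw [this]
          have : t - b ≤ r := by linarith [ht.2]
          exact mul_le_mul_of_nonneg_left this hKfB
        · intro s hsI
          rw [uIoc_of_le hbt] at hsI
          exact hptw s (le_trans hb0 hsI.1.le) hsI.2
    have hlow : ∀ u v : ℝ, u ∈ Icc (-T) r → v ∈ Icc (-T) r → u ≤ v → v ≤ t →
        m * (v - u) ≤ ∫ s in u..v, f (A₁ s) x := by
      intro u v hu hv huv hvt
      have hci : IntervalIntegrable (fun s => f (A₁ s) x) volume u v := hint₁ u v hu.2 hv.2
      have hmono := intervalIntegral.integral_mono_on huv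
        (_root_.intervalIntegrable_const (c := m)) hci
        (fun s hs => hmf s ⟨le_trans hu.1 hs.1, le_trans hs.2 hv.2⟩ x)
      rw [intervalIntegral.integral_const, smul_eq_mul] at hmono
      linarith
    have hDB : D * B = Kf * B * r / m := by rw [hDdef]; push_cast; ring
    have habs : |τ₁ t x - τ₂ t x| ≤ D * B := by
      have hba : τ₁ t x - τ₂ t x = b - a := by rw [hadef, hbdef]; ring
      rw [hba, hDB, abs_sub_le_iff]
      constructor
      · rcases le_total b a with h | h
        · have h0 : (0:ℝ) ≤ Kf * B * r / m := by positivity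
          linarith
        · have h1 := hlow a b haJ hbJ h hbt
          have h2 : (∫ s in a..b, f (A₁ s) x) ≤ Kf * B * r := by
            rw [hI]; exact le_trans (le_abs_self _) hRbound
          rw [le_div_iff₀ hm]
          nlinarith
      · rcases le_total a b with h | h
        · have h0 : (0:ℝ) ≤ Kf * B * r / m := by positivity
          linarith
        · have h1 := hlow b a hbJ haJ h hat
          have h2 : (∫ s in b..a, f (A₁ s) x) ≤ Kf * B * r := by
            rw [intervalIntegral.integral_symm, hI]
            calc -(∫ s in b..t, (f (A₂ s) x - f (A₁ s) x)) ≤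
                |∫ s in b..t, (f (A₂ s) x - f (A₁ s) x)| := neg_le_abs _
              _ ≤ Kf * B * r := hRbound
          rw [le_div_iff₀ hm]
          nlinarith
    exact habs
  -- estimate for the w's
  have hEw : ∀ B : ℝ, 0 ≤ B → ∀ l ∈ Icc (0:ℝ) r,
      (∀ s ∈ Icc (0:ℝ) r, s ≤ l → ‖A₁ s - A₂ s‖ ≤ B) →
      ‖w₁ l - w₂ l‖ ≤ (1 + Λ * D) * B := by
    intro B hB l hl hbd
    have hτd := hEτ B hB l hl hbd
    rw [ContinuousMap.norm_le _ (by positivity)]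
    rintro ⟨x, y⟩
    have happ : (w₁ l - w₂ l) (x, y) = A₁ (l - τ₁ l x) y - A₂ (l - τ₂ l x) y := by
      rw [ContinuousMap.sub_apply, hw₁ l hl x y, hw₂ l hl x y]
    rw [happ]
    have hs₁J := hdel₁ l hl x
    have hs₂J := hdel₂ l hl x
    have h1 : ‖A₁ (l - τ₁ l x) y - A₂ (l - τ₁ l x) y‖ ≤ B := by
      rcases le_total (l - τ₁ l x) 0 with h | h
      · rw [hA₁φ _ h, hA₂φ _ h]
        simpa using hB
      · have hmem : l - τ₁ l x ∈ Icc (0:ℝ) r := ⟨h, hs₁J.2⟩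
        have hle : l - τ₁ l x ≤ l := by linarith [hτ₁pos l hl x]
        have hnn := hbd _ hmem hle
        calc ‖A₁ (l - τ₁ l x) y - A₂ (l - τ₁ l x) y‖
            = ‖(A₁ (l - τ₁ l x) - A₂ (l - τ₁ l x)) y‖ := by simp
          _ ≤ ‖A₁ (l - τ₁ l x) - A₂ (l - τ₁ l x)‖ :=
              ContinuousMap.norm_coe_le_norm _ y
          _ ≤ B := hnn
    have h2 : ‖A₂ (l - τ₁ l x) y - A₂ (l - τ₂ l x) y‖ ≤ Λ * (D * B) := by
      have hLipA := hALip (l - τ₂ l x) hs₂J (l - τ₁ l x) hs₁J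
      have habs : |l - τ₁ l x - (l - τ₂ l x)| = |τ₁ l x - τ₂ l x| := by
        have : l - τ₁ l x - (l - τ₂ l x) = -(τ₁ l x - τ₂ l x) := by ring
        rw [this, abs_neg]
      calc ‖A₂ (l - τ₁ l x) y - A₂ (l - τ₂ l x) y‖
          = ‖(A₂ (l - τ₁ l x) - A₂ (l - τ₂ l x)) y‖ := by simp
        _ ≤ ‖A₂ (l - τ₁ l x) - A₂ (l - τ₂ l x)‖ := ContinuousMap.norm_coe_le_norm _ y
        _ ≤ Λ * |l - τ₁ l x - (l - τ₂ l x)| := hLipA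
        _ = Λ * |τ₁ l x - τ₂ l x| := by rw [habs]
        _ ≤ Λ * (D * B) := mul_le_mul_of_nonneg_left (hτd x) hΛ0
    calc ‖A₁ (l - τ₁ l x) y - A₂ (l - τ₂ l x) y‖
        ≤ ‖A₁ (l - τ₁ l x) y - A₂ (l - τ₁ l x) y‖
          + ‖A₂ (l - τ₁ l x) y - A₂ (l - τ₂ l x) y‖ := by
          have hre : A₁ (l - τ₁ l x) y - A₂ (l - τ₂ l x) y
              = (A₁ (l - τ₁ l x) y - A₂ (l - τ₁ l x) y)
                + (A₂ (l - τ₁ l x) y - A₂ (l - τ₂ l x) y) := by ring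
          rw [hre]; exact norm_add_le _ _
      _ ≤ B + Λ * (D * B) := add_le_add h1 h2
      _ = (1 + Λ * D) * B := by ring
  set Cc : ℝ := L * (2 + D + Λ * D) with hCcdef
  have hCc0 : 0 ≤ Cc := by positivity
  clear_value Cc
  have hEG : ∀ B : ℝ, 0 ≤ B → ∀ l ∈ Icc (0:ℝ) r,
      (∀ s ∈ Icc (0:ℝ) r, s ≤ l → ‖A₁ s - A₂ s‖ ≤ B) →
      ‖G₁ l - G₂ l‖ ≤ Cc * B := by
    intro B hB l hl hbd
    have h := hLip (A₁ l) (τ₁ l) (w₁ l) (A₂ l) (τ₂ l) (w₂ l)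
      (hMA₁ l hl) (hMτ₁ l hl) (hMw₁ l hl) (hMA₂ l hl) (hMτ₂ l hl) (hMw₂ l hl)
    have hA : ‖A₁ l - A₂ l‖ ≤ B := hbd l hl le_rfl
    have hτ : ‖τ₁ l - τ₂ l‖ ≤ D * B := by
      rw [ContinuousMap.norm_le _ (by positivity)]
      intro x
      have : (τ₁ l - τ₂ l) x = τ₁ l x - τ₂ l x := ContinuousMap.sub_apply _ _ _
      rw [this, Real.norm_eq_abs]
      exact hEτ B hB l hl hbd x
    have hw : ‖w₁ l - w₂ l‖ ≤ (1 + Λ * D) * B := hEw B hB l hl hbd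
    calc ‖G₁ l - G₂ l‖ ≤ L * (‖A₁ l - A₂ l‖ + ‖τ₁ l - τ₂ l‖ + ‖w₁ l - w₂ l‖) := h
      _ ≤ L * (B + D * B + (1 + Λ * D) * B) := by
          have hsum : ‖A₁ l - A₂ l‖ + ‖τ₁ l - τ₂ l‖ + ‖w₁ l - w₂ l‖
              ≤ B + D * B + (1 + Λ * D) * B := by linarith
          exact mul_le_mul_of_nonneg_left hsum hL0.le
      _ = Cc * B := by rw [hCcdef]; ring
  -- global bound K
  obtain ⟨K₀, hK₀⟩ := isCompact_Icc.exists_bound_of_continuousOn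
    (((hA₁c.mono hIccIic).sub (hA₂c.mono hIccIic)) : ContinuousOn (fun l => A₁ l - A₂ l) (Icc 0 r))
  set K : ℝ := max K₀ 0 with hKdef
  have hK0 : 0 ≤ K := le_max_right _ _
  have hK : ∀ l ∈ Icc (0:ℝ) r, ‖A₁ l - A₂ l‖ ≤ K :=
    fun l hl => le_trans (hK₀ l hl) (le_max_left _ _)
  -- the Gronwall-type induction
  have hInd : ∀ k : ℕ, ∀ t ∈ Icc (0:ℝ) r, ‖A₁ t - A₂ t‖ ≤ K * (Cc * t) ^ k / (Nat.factorial k) := by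
    intro k
    induction k with
    | zero =>
      intro t ht
      simpa using hK t ht
    | succ k ih =>
      intro t ht
      have ht0 : (0:ℝ) ≤ t := ht.1
      have hbnd0 : (0:ℝ) ≤ K * (Cc * t) ^ (k+1) / (Nat.factorial (k+1)) := by positivity
      rw [ContinuousMap.norm_le _ hbnd0]
      intro x
      have happ : (A₁ t - A₂ t) x = A₁ t x - A₂ t x := ContinuousMap.sub_apply _ _ _
      rw [happ, hdiff t ht x]
      have hmono : ∀ l ∈ Icc (0:ℝ) t, ‖G₁ l x - G₂ l x‖
          ≤ Cc * (K * (Cc * l) ^ k / (Nat.factorial k)) := by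
        intro l hlt
        have hl' : l ∈ Icc (0:ℝ) r := ⟨hlt.1, le_trans hlt.2 ht.2⟩
        have hbl : ∀ s ∈ Icc (0:ℝ) r, s ≤ l → ‖A₁ s - A₂ s‖
            ≤ K * (Cc * l) ^ k / (Nat.factorial k) := by
          intro s hs hsl
          refine le_trans (ih s hs) ?_
          have hpow : (Cc * s) ^ k ≤ (Cc * l) ^ k := by
            apply pow_le_pow_left₀ (mul_nonneg hCc0 hs.1)
            exact mul_le_mul_of_nonneg_left hsl hCc0
          have hfa : (0:ℝ) < (Nat.factorial k : ℝ) := by positivity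
          have hnum : K * (Cc * s) ^ k ≤ K * (Cc * l) ^ k :=
            mul_le_mul_of_nonneg_left hpow hK0
          exact div_le_div_of_nonneg_right' hnum hfa
        have hBl0 : (0:ℝ) ≤ K * (Cc * l) ^ k / (Nat.factorial k) := by
          have := hlt.1; positivity
        calc ‖G₁ l x - G₂ l x‖ = ‖(G₁ l - G₂ l) x‖ := by simp
          _ ≤ ‖G₁ l - G₂ l‖ := ContinuousMap.norm_coe_le_norm _ x
          _ ≤ Cc * (K * (Cc * l) ^ k / (Nat.factorial k)) := hEG _ hBl0 l hl' hbl
      have hiG : IntervalIntegrable (fun l => ‖G₁ l x - G₂ l x‖) volume 0 t := by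
        apply ContinuousOn.intervalIntegrable
        apply ContinuousOn.norm
        exact ((hG₁x x).sub (hG₂x x)).mono
          (uIcc_subset_Icc (left_mem_Icc.mpr (le_trans ht.1 ht.2)) ht)
      have hiB : IntervalIntegrable
          (fun l => Cc * (K * (Cc * l) ^ k / (Nat.factorial k))) volume 0 t := by
        apply Continuous.intervalIntegrable
        exact continuous_const.mul
          ((continuous_const.mul ((continuous_const.mul continuous_id).pow k)).div_const _)
      calc ‖∫ l in (0:ℝ)..t, (G₁ l x - G₂ l x)‖
          ≤ ∫ l in (0:ℝ)..t, ‖G₁ l x - G₂ l x‖ :=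
            intervalIntegral.norm_integral_le_integral_norm ht.1
        _ ≤ ∫ l in (0:ℝ)..t, Cc * (K * (Cc * l) ^ k / (Nat.factorial k)) :=
            intervalIntegral.integral_mono_on ht.1 hiG hiB hmono
        _ = K * (Cc * t) ^ (k+1) / (Nat.factorial (k+1)) := by
            have hcong : ∀ l : ℝ, Cc * (K * (Cc * l) ^ k / (Nat.factorial k))
                = (Cc ^ (k+1) * K / (Nat.factorial k)) * l ^ k := by
              intro l
              rw [mul_pow]
              field_simp
              ring
            simp only [hcong]
            rw [intervalIntegral.integral_const_mul, integral_pow]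
            have hz : (0:ℝ) ^ (k+1) = 0 := zero_pow (Nat.succ_ne_zero k)
            rw [hz, sub_zero, Nat.factorial_succ, mul_pow]
            have hk0 : ((Nat.factorial k : ℝ)) ≠ 0 := by positivity
            have hk1 : ((k:ℝ) + 1) ≠ 0 := by positivity
            push_cast
            field_simp
  -- equality of the A's
  have hAeqIcc : ∀ t ∈ Icc (0:ℝ) r, A₁ t = A₂ t := by
    intro t ht
    have hlim : Filter.Tendsto (fun k : ℕ => K * (Cc * t) ^ k / (Nat.factorial k))
        Filter.atTop (nhds 0) := by
      have h0 := (FloorSemiring.tendsto_pow_div_factorial_atTop (Cc * t)).const_mul K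
      simpa [mul_div_assoc] using h0
    have hle : ‖A₁ t - A₂ t‖ ≤ 0 :=
      ge_of_tendsto hlim (Filter.Eventually.of_forall fun k => hInd k t ht)
    rw [← sub_eq_zero]
    exact norm_le_zero_iff.mp hle
  have hAeq : ∀ s : ℝ, s ≤ r → A₁ s = A₂ s := by
    intro s hs
    rcases le_or_gt s 0 with h0 | h0
    · rw [hA₁φ s h0, hA₂φ s h0]
    · exact hAeqIcc s ⟨h0.le, hs⟩
  -- equality of the delays
  intro t ht
  refine ⟨hAeqIcc t ht, ?_⟩
  ext x
  have hat : t - τ₁ t x ≤ t := by linarith [hτ₁pos t ht x]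
  have hbt : t - τ₂ t x ≤ t := by linarith [hτ₂pos t ht x]
  have har : t - τ₁ t x ≤ r := le_trans hat ht.2
  have hbr : t - τ₂ t x ≤ r := le_trans hbt ht.2
  have hint₁ : ∀ u v : ℝ, u ≤ r → v ≤ r →
      IntervalIntegrable (fun s => f (A₁ s) x) volume u v :=
    fun u v hu hv => ((hfA₁ x).mono (uIcc_subset_Iic' hu hv)).intervalIntegrable
  have hg : (∫ s in (t - τ₂ t x)..t, f (A₂ s) x) = ∫ s in (t - τ₂ t x)..t, f (A₁ s) x := by
    apply intervalIntegral.integral_congr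
    intro s hs
    have hsr : s ≤ r := (uIcc_subset_Iic' hbr ht.2) hs
    show f (A₂ s) x = f (A₁ s) x
    rw [hAeq s hsr]
  have h12 : (∫ s in (t - τ₁ t x)..t, f (A₁ s) x) = ∫ s in (t - τ₂ t x)..t, f (A₁ s) x := by
    rw [hTc₁ t ht x, ← hg, hTc₂ t ht x]
  have hzero : (∫ s in (t - τ₁ t x)..(t - τ₂ t x), f (A₁ s) x) = 0 := by
    have hadj := intervalIntegral.integral_add_adjacent_intervals
      (hint₁ (t - τ₁ t x) (t - τ₂ t x) har hbr) (hint₁ (t - τ₂ t x) t hbr ht.2)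
    linarith [h12, hadj]
  have heq := eq_of_intervalIntegral_pos_eq_zero' (hfA₁ x)
    (fun s => (hf_bdd (A₁ s) x).1) har hbr hzero
  linarith
end

section
/- In the setting of the local existence theorem (with M₀ > 0, M > M₀, r = r(M₀,M) > 0, (φ,τ₀) ∈ Lip_α × C_+(Ω) with ‖φ‖_{Lip_α} + ‖τ₀‖_∞ ≤ M₀, and (A,τ) the unique solution of system (1.1) on [0,r] with ‖A(t,·)‖_∞ ≤ M for t ∈ [0,r]), one has A_t ∈ Lip_α for every t ∈ [0,r], where A_t(θ,·) := A(t+θ,·) for θ ≤ 0; moreover there exists a constant M̂ = M̂(M, τ_max, α) > M, depending only on M, on the a priori upper bound τ_max for the delay, and on α, such that ‖A_t‖_{Lip_α} ≤ M̂ for all t ∈ [0,r]. -/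
open scoped NNReal
open MeasureTheory intervalIntegral Set

theorem exp_lip_aux_s14 {a b : ℝ} (ha : a ≤ 0) (hb : b ≤ 0) :
    |Real.exp a - Real.exp b| ≤ |a - b| := by
  wlog h : a ≤ b
  · rw [abs_sub_comm, abs_sub_comm a b]; exact this hb ha (le_of_not_ge h)
  · have hab : Real.exp a = Real.exp (a - b) * Real.exp b := by
      rw [← Real.exp_add]; ring_nf
    rw [abs_of_nonpos (by simp [Real.exp_le_exp, h] : Real.exp a - Real.exp b ≤ 0),
      abs_of_nonpos (by linarith)]
    nlinarith [Real.add_one_le_exp (a - b), Real.exp_pos b, Real.exp_le_one_iff.2 hb]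

theorem norm_smul_cm {X : Type*} [TopologicalSpace X] [CompactSpace X] (c : ℝ) (g : C(X, ℝ)) :
    ‖c • g‖ = |c| * ‖g‖ := by
  have := norm_smul c g
  rwa [Real.norm_eq_abs] at this

set_option maxHeartbeats 2000000 in
/-- in the setting of the local existence theorem, A_t ∈ Lip_α for every
t ∈ [0,r], and there is a constant M̂ > M (depending on M, the a priori delay bound
τ_max, and α) such that ‖A_t‖_{Lip_α} ≤ M̂ for all t ∈ [0,r]. -/

theorem stmt_14
    {n : ℕ} (hn : 1 ≤ n)
    (Ω : Set (EuclideanSpace ℝ (Fin n))) (hΩ : IsCompact Ω) [CompactSpace Ω]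
    (f : C(Ω, ℝ) → C(Ω, ℝ)) (Kf : ℝ≥0) (hf_lip : LipschitzWith Kf f)
    (hf_mono : ∀ u v : C(Ω, ℝ), u ≤ v → f v ≤ f u)
    (Mbar : ℝ) (hMbar : 0 < Mbar)
    (hf_bdd : ∀ (ψ : C(Ω, ℝ)) (x : Ω), 0 < f ψ x ∧ f ψ x ≤ Mbar)
    (F : C(Ω, ℝ) → C(Ω, ℝ) → C(Ω × Ω, ℝ) → C(Ω, ℝ))
    (hF : LipschitzOnBoundedSets F)
    (α : ℝ) (hα : 0 ≤ α)
    (M₀ M : ℝ) (hM₀ : 0 < M₀) (hM : M₀ < M)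
    (r : ℝ) (hr : 0 < r)
    (φ : ℝ → C(Ω, ℝ)) (hφ : MemLipAlpha α φ)
    (τ₀ : C(Ω, ℝ)) (hτ₀ : ∀ x, 0 ≤ τ₀ x)
    (hinit : lipAlphaNorm α φ + ‖τ₀‖ ≤ M₀)
    (A τ : ℝ → C(Ω, ℝ)) (hsol : IsSolutionOn F f φ τ₀ r A τ)
    (hAbdd : ∀ t ∈ Set.Icc (0 : ℝ) r, ‖A t‖ ≤ M)
    (τmax : ℝ) (hτmax : ∀ t ∈ Set.Icc (0 : ℝ) r, ∀ x : Ω, τ t x ≤ τmax) :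
    ∃ Mhat : ℝ, M < Mhat ∧
      ∀ t ∈ Set.Icc (0 : ℝ) r,
        MemLipAlpha α (fun θ : ℝ => A (t + θ)) ∧
        lipAlphaNorm α (fun θ : ℝ => A (t + θ)) ≤ Mhat := by
  classical
  obtain ⟨hAc, hτc, hτnn, hAφ, ⟨w, hw, hAint⟩, -⟩ := hsol
  obtain ⟨hφc, ⟨Cφ, hCφ⟩, ⟨Lφ, hLφ⟩⟩ := hφ
  have hMpos : 0 < M := lt_trans hM₀ hM
  set τ' : ℝ := max τmax 0 with hτ'def
  have hτ'0 : 0 ≤ τ' := le_max_right _ _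
  set Cφ' : ℝ := max Cφ 0 with hCφ'def
  have hCφ'0 : 0 ≤ Cφ' := le_max_right _ _
  set MA : ℝ := max M (Real.exp (α * τ') * Cφ') with hMAdef
  have hMMA : M ≤ MA := le_max_left _ _
  have hMA0 : 0 ≤ MA := le_trans (le_of_lt hMpos) hMMA
  -- bound for φ in terms of the weighted norm
  have hφbd : ∀ s : ℝ, s ≤ 0 → -τ' ≤ s → ‖φ s‖ ≤ MA := by
    intro s hs0 hs1
    have hid : φ s = Real.exp (α * |s|) • weightedHist α φ s := by
      simp only [weightedHist, smul_smul, ← Real.exp_add]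
      rw [show α * |s| + -(α * |s|) = 0 by ring, Real.exp_zero, one_smul]
    have h1 : ‖weightedHist α φ s‖ ≤ Cφ' := le_trans (hCφ s hs0) (le_max_left _ _)
    have h2 : Real.exp (α * |s|) ≤ Real.exp (α * τ') := by
      apply Real.exp_le_exp.2
      apply mul_le_mul_of_nonneg_left _ hα
      rw [abs_of_nonpos hs0]; linarith
    calc ‖φ s‖ = ‖Real.exp (α * |s|) • weightedHist α φ s‖ := by rw [← hid]
      _ = Real.exp (α * |s|) * ‖weightedHist α φ s‖ := by
          rw [norm_smul_cm, Real.abs_exp]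
      _ ≤ Real.exp (α * τ') * Cφ' := by
          apply mul_le_mul h2 h1 (norm_nonneg _) (le_of_lt (Real.exp_pos _))
      _ ≤ MA := le_max_right _ _
  have hAbd : ∀ s : ℝ, -τ' ≤ s → s ≤ r → ‖A s‖ ≤ MA := by
    intro s hs1 hs2
    rcases le_or_gt s 0 with h | h
    · rw [hAφ s h]; exact hφbd s h hs1
    · exact le_trans (hAbdd s ⟨le_of_lt h, hs2⟩) hMMA
  have hτbd : ∀ l ∈ Set.Icc (0 : ℝ) r, ‖τ l‖ ≤ τ' := by
    intro l hl
    rw [ContinuousMap.norm_le _ hτ'0]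
    intro x
    rw [Real.norm_eq_abs, abs_of_nonneg (hτnn l hl x)]
    exact le_trans (hτmax l hl x) (le_max_left _ _)
  have hwmem : ∀ l ∈ Set.Icc (0 : ℝ) r, ∀ x : Ω,
      -τ' ≤ l - τ l x ∧ l - τ l x ≤ r := by
    intro l hl x
    have h1 := hτmax l hl x
    have h2 := hτnn l hl x
    constructor
    · have : τ l x ≤ τ' := le_trans h1 (le_max_left _ _)
      linarith [hl.1]
    · linarith [hl.2]
  have hwbd : ∀ l ∈ Set.Icc (0 : ℝ) r, ‖w l‖ ≤ MA := by
    intro l hl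
    rw [ContinuousMap.norm_le _ hMA0]
    rintro ⟨x, y⟩
    rw [hw l hl x y]
    exact le_trans (ContinuousMap.norm_coe_le_norm _ y)
      (hAbd _ (hwmem l hl x).1 (hwmem l hl x).2)
  set M' : ℝ := max (max MA τ') 1 with hM'def
  have hM'1 : (1 : ℝ) ≤ M' := le_max_right _ _
  have hMAM' : MA ≤ M' := le_trans (le_max_left _ _) (le_max_left _ _)
  have hτ'M' : τ' ≤ M' := le_trans (le_max_right _ _) (le_max_left _ _)
  obtain ⟨L, hL, hFlip⟩ := hF M' (lt_of_lt_of_le one_pos hM'1)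
  set B : ℝ := ‖F 0 0 0‖ + 3 * (L * M') with hBdef
  have hB0 : 0 ≤ B := by
    have := norm_nonneg (F 0 0 0)
    nlinarith
  have hz : ‖(0 : C(Ω, ℝ))‖ ≤ M' := by simp; linarith
  have hz2 : ‖(0 : C(Ω × Ω, ℝ))‖ ≤ M' := by simp; linarith
  have hgbd : ∀ l ∈ Set.Icc (0 : ℝ) r, ‖F (A l) (τ l) (w l)‖ ≤ B := by
    intro l hl
    have hAl : ‖A l‖ ≤ M' := le_trans (hAbd l (le_trans (neg_nonpos.2 hτ'0) hl.1) hl.2) hMAM'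
    have hτl : ‖τ l‖ ≤ M' := le_trans (hτbd l hl) hτ'M'
    have hwl : ‖w l‖ ≤ M' := le_trans (hwbd l hl) hMAM'
    have key := hFlip (A l) (τ l) (w l) 0 0 0 hAl hτl hwl hz hz hz2
    simp only [sub_zero] at key
    have h2 : ‖F (A l) (τ l) (w l)‖ ≤ ‖F (A l) (τ l) (w l) - F 0 0 0‖ + ‖F 0 0 0‖ := by
      calc ‖F (A l) (τ l) (w l)‖ = ‖(F (A l) (τ l) (w l) - F 0 0 0) + F 0 0 0‖ := by rw [sub_add_cancel]
        _ ≤ _ := norm_add_le _ _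
    have h3 : ‖A l‖ + ‖τ l‖ + ‖w l‖ ≤ 3 * M' := by linarith
    have h4 : L * (‖A l‖ + ‖τ l‖ + ‖w l‖) ≤ L * (3 * M') :=
      mul_le_mul_of_nonneg_left h3 (le_of_lt hL)
    rw [hBdef]; nlinarith
  -- continuity of the restricted maps
  have hAr : Continuous (fun s : (Set.Iic r) => A (s : ℝ)) :=
    continuousOn_iff_continuous_restrict.1 hAc
  have hτr : Continuous (fun l : (Set.Icc (0 : ℝ) r) => τ (l : ℝ)) :=
    continuousOn_iff_continuous_restrict.1 hτc
  have hA2 : Continuous (fun l : (Set.Icc (0 : ℝ) r) => A (l : ℝ)) :=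
    continuousOn_iff_continuous_restrict.1 (hAc.mono (fun x hx => hx.2))
  have hwcont : ContinuousOn w (Set.Icc 0 r) := by
    rw [continuousOn_iff_continuous_restrict]
    apply ContinuousMap.continuous_of_continuous_uncurry
    have hσre : Continuous (fun q : (Set.Icc (0 : ℝ) r) × (Ω × Ω) =>
        ((q.1 : ℝ) - τ (q.1 : ℝ) q.2.1)) := by
      apply Continuous.sub
      · exact continuous_subtype_val.comp continuous_fst
      · exact (hτr.comp continuous_fst).eval (continuous_fst.comp continuous_snd)
    have hmem : ∀ q : (Set.Icc (0 : ℝ) r) × (Ω × Ω),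
        ((q.1 : ℝ) - τ (q.1 : ℝ) q.2.1) ∈ Set.Iic r := by
      intro q
      exact Set.mem_Iic.2 (hwmem (q.1 : ℝ) q.1.2 q.2.1).2
    have key : Continuous (fun q : (Set.Icc (0 : ℝ) r) × (Ω × Ω) =>
        A ((q.1 : ℝ) - τ (q.1 : ℝ) q.2.1) q.2.2) :=
      (hAr.comp (hσre.subtype_mk hmem)).eval (continuous_snd.comp continuous_snd)
    exact key.congr (fun q => (hw (q.1 : ℝ) q.1.2 q.2.1 q.2.2).symm)
  have hw2 : Continuous (fun l : (Set.Icc (0 : ℝ) r) => w (l : ℝ)) :=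
    continuousOn_iff_continuous_restrict.1 hwcont
  have hgc : Continuous (fun l : (Set.Icc (0 : ℝ) r) =>
      F (A (l : ℝ)) (τ (l : ℝ)) (w (l : ℝ))) := by
    rw [continuous_iff_continuousAt]
    intro l₀
    rw [ContinuousAt, tendsto_iff_norm_sub_tendsto_zero]
    apply squeeze_zero (g := fun l : (Set.Icc (0 : ℝ) r) =>
        L * (‖A (l : ℝ) - A (l₀ : ℝ)‖ + ‖τ (l : ℝ) - τ (l₀ : ℝ)‖ + ‖w (l : ℝ) - w (l₀ : ℝ)‖))
      (fun l => norm_nonneg _)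
    · intro l
      apply hFlip
      · exact le_trans (hAbd _ (le_trans (neg_nonpos.2 hτ'0) l.2.1) l.2.2) hMAM'
      · exact le_trans (hτbd _ l.2) hτ'M'
      · exact le_trans (hwbd _ l.2) hMAM'
      · exact le_trans (hAbd _ (le_trans (neg_nonpos.2 hτ'0) l₀.2.1) l₀.2.2) hMAM'
      · exact le_trans (hτbd _ l₀.2) hτ'M'
      · exact le_trans (hwbd _ l₀.2) hMAM'
    · have hcont : Continuous (fun l : (Set.Icc (0 : ℝ) r) =>
          L * (‖A (l : ℝ) - A (l₀ : ℝ)‖ + ‖τ (l : ℝ) - τ (l₀ : ℝ)‖ + ‖w (l : ℝ) - w (l₀ : ℝ)‖)) :=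
        continuous_const.mul (((hA2.sub continuous_const).norm.add
          ((hτr.sub continuous_const).norm)).add ((hw2.sub continuous_const).norm))
      have := hcont.tendsto l₀
      simpa using this
  have hgcont : ContinuousOn (fun l => F (A l) (τ l) (w l)) (Set.Icc 0 r) :=
    continuousOn_iff_continuous_restrict.2 hgc
  have hgx : ∀ x : Ω, ContinuousOn (fun l => F (A l) (τ l) (w l) x) (Set.Icc 0 r) := by
    intro x
    exact (continuous_eval_const x).comp_continuousOn hgcont
  -- Lipschitz bound for A on [0, r]
  have hALip : ∀ s t : ℝ, 0 ≤ s → s ≤ t → t ≤ r → ‖A t - A s‖ ≤ B * (t - s) := by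
    intro s t hs hst htr
    rw [ContinuousMap.norm_le _ (mul_nonneg hB0 (by linarith))]
    intro x
    have hsub1 : Set.uIcc (0 : ℝ) t ⊆ Set.Icc 0 r := by
      rw [Set.uIcc_of_le (by linarith)]
      exact Set.Icc_subset_Icc_right htr
    have hsub2 : Set.uIcc (0 : ℝ) s ⊆ Set.Icc 0 r := by
      rw [Set.uIcc_of_le hs]
      exact Set.Icc_subset_Icc_right (by linarith)
    have h1 : IntervalIntegrable (fun l => F (A l) (τ l) (w l) x) MeasureTheory.volume 0 t :=
      ((hgx x).mono hsub1).intervalIntegrable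
    have h2 : IntervalIntegrable (fun l => F (A l) (τ l) (w l) x) MeasureTheory.volume 0 s :=
      ((hgx x).mono hsub2).intervalIntegrable
    have e1 := hAint t ⟨le_trans hs hst, htr⟩ x
    have e2 := hAint s ⟨hs, le_trans hst htr⟩ x
    have hdiff : A t x - A s x = ∫ l in s..t, F (A l) (τ l) (w l) x := by
      rw [e1, e2]
      rw [← intervalIntegral.integral_interval_sub_left h1 h2]
      ring
    rw [ContinuousMap.sub_apply, hdiff]
    have hb : ∀ l ∈ Set.uIoc s t, ‖F (A l) (τ l) (w l) x‖ ≤ B := by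
      intro l hl
      rw [Set.uIoc_of_le hst] at hl
      have hl' : l ∈ Set.Icc (0 : ℝ) r := ⟨le_trans hs (le_of_lt hl.1), le_trans hl.2 htr⟩
      exact le_trans (ContinuousMap.norm_coe_le_norm _ x) (hgbd l hl')
    have := intervalIntegral.norm_integral_le_of_norm_le_const hb
    rwa [abs_of_nonneg (by linarith : (0:ℝ) ≤ t - s)] at this
  -- the constants
  set K : ℝ := (Lφ : ℝ) + (α * MA + B) with hKdef
  have hK0 : 0 ≤ K := by positivity
  set CB : ℝ := max Cφ' M with hCBdef
  have hCB0 : 0 ≤ CB := le_trans (le_of_lt hMpos) (le_max_right _ _)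
  refine ⟨M + 1 + (CB + K), by linarith, ?_⟩
  intro t ht
  obtain ⟨ht0, htr⟩ := ht
  have hexp_t : Real.exp (-(α * t)) ≤ 1 :=
    Real.exp_le_one_iff.2 (by nlinarith)
  -- identity on the far past
  have hid : ∀ θ : ℝ, θ ≤ 0 → t + θ ≤ 0 →
      weightedHist α (fun θ : ℝ => A (t + θ)) θ =
        Real.exp (-(α * t)) • weightedHist α φ (t + θ) := by
    intro θ hθ h2
    simp only [weightedHist, hAφ (t + θ) h2, smul_smul, ← Real.exp_add]
    congr 2
    rw [abs_of_nonpos hθ, abs_of_nonpos h2]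
    ring
  -- boundedness
  have hbd : ∀ θ : ℝ, θ ≤ 0 → ‖weightedHist α (fun θ : ℝ => A (t + θ)) θ‖ ≤ CB := by
    intro θ hθ
    rcases le_or_gt (t + θ) 0 with h | h
    · rw [hid θ hθ h, norm_smul_cm, Real.abs_exp]
      calc Real.exp (-(α * t)) * ‖weightedHist α φ (t + θ)‖
          ≤ 1 * Cφ' := mul_le_mul hexp_t (le_trans (hCφ _ h) (le_max_left _ _))
            (norm_nonneg _) one_pos.le
        _ ≤ CB := by rw [one_mul]; exact le_max_left _ _
    · simp only [weightedHist]
      rw [norm_smul_cm, Real.abs_exp]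
      have h1 : Real.exp (-(α * |θ|)) ≤ 1 :=
        Real.exp_le_one_iff.2 (neg_nonpos.2 (by positivity))
      have h2 : ‖A (t + θ)‖ ≤ M := hAbdd (t + θ) ⟨le_of_lt h, by linarith⟩
      calc Real.exp (-(α * |θ|)) * ‖A (t + θ)‖ ≤ 1 * M :=
            mul_le_mul h1 h2 (norm_nonneg _) one_pos.le
        _ ≤ CB := by rw [one_mul]; exact le_max_right _ _
  -- Lipschitz estimates
  have hc1 : ∀ θ θ' : ℝ, θ ≤ θ' → θ' ≤ -t →
      ‖weightedHist α (fun θ : ℝ => A (t + θ)) θ -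
        weightedHist α (fun θ : ℝ => A (t + θ)) θ'‖ ≤ K * (θ' - θ) := by
    intro θ θ' h1 h2
    have hθ'0 : θ' ≤ 0 := by linarith
    have hθ0 : θ ≤ 0 := by linarith
    have ha : t + θ ≤ 0 := by linarith
    have hb2 : t + θ' ≤ 0 := by linarith
    rw [hid θ hθ0 ha, hid θ' hθ'0 hb2]
    have hsub : Real.exp (-(α * t)) • weightedHist α φ (t + θ) -
        Real.exp (-(α * t)) • weightedHist α φ (t + θ') =
        Real.exp (-(α * t)) • (weightedHist α φ (t + θ) - weightedHist α φ (t + θ')) :=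
      (smul_sub _ _ _).symm
    rw [hsub, norm_smul_cm, Real.abs_exp]
    have hlip' : dist (weightedHist α φ (t + θ)) (weightedHist α φ (t + θ')) ≤
        (Lφ : ℝ) * dist (t + θ) (t + θ') := by
      have := hLφ.dist_le_mul _ (Set.mem_Iic.2 ha) _ (Set.mem_Iic.2 hb2)
      exact this
    rw [dist_eq_norm, Real.dist_eq] at hlip'
    have habs : |t + θ - (t + θ')| = θ' - θ := by
      rw [abs_of_nonpos (by linarith)]; ring
    rw [habs] at hlip'
    calc Real.exp (-(α * t)) * ‖weightedHist α φ (t + θ) - weightedHist α φ (t + θ')‖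
        ≤ 1 * ((Lφ : ℝ) * (θ' - θ)) := mul_le_mul hexp_t hlip' (norm_nonneg _) one_pos.le
      _ ≤ K * (θ' - θ) := by
          rw [one_mul]
          apply mul_le_mul_of_nonneg_right _ (by linarith)
          rw [hKdef]
          linarith [mul_nonneg hα hMA0, hB0]
  have hc2 : ∀ θ θ' : ℝ, -t ≤ θ → θ ≤ θ' → θ' ≤ 0 →
      ‖weightedHist α (fun θ : ℝ => A (t + θ)) θ -
        weightedHist α (fun θ : ℝ => A (t + θ)) θ'‖ ≤ K * (θ' - θ) := by
    intro θ θ' h1 h2 h3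
    have hθ0 : θ ≤ 0 := by linarith
    set e1 : ℝ := Real.exp (-(α * |θ|)) with he1
    set e2 : ℝ := Real.exp (-(α * |θ'|)) with he2
    have hsplit : weightedHist α (fun θ : ℝ => A (t + θ)) θ -
        weightedHist α (fun θ : ℝ => A (t + θ)) θ' =
        (e1 - e2) • A (t + θ) + e2 • (A (t + θ) - A (t + θ')) := by
      simp only [weightedHist]
      rw [← he1, ← he2]
      have h1' : (e1 - e2) • A (t + θ) = e1 • A (t + θ) - e2 • A (t + θ) := sub_smul _ _ _
      have h2' : e2 • (A (t + θ) - A (t + θ')) = e2 • A (t + θ) - e2 • A (t + θ') :=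
        smul_sub _ _ _
      rw [h1', h2']
      abel
    rw [hsplit]
    have hee : |e1 - e2| ≤ α * (θ' - θ) := by
      have := exp_lip_aux_s14 (a := -(α * |θ|)) (b := -(α * |θ'|))
        (neg_nonpos.2 (by positivity)) (neg_nonpos.2 (by positivity))
      rw [← he1, ← he2] at this
      apply le_trans this
      rw [abs_of_nonpos hθ0, abs_of_nonpos h3]
      rw [show -(α * - θ) - -(α * - θ') = α * (θ - θ') by ring,
        abs_mul, abs_of_nonneg hα, abs_of_nonpos (by linarith)]
      nlinarith
    have hAb1 : ‖A (t + θ)‖ ≤ MA :=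
      hAbd (t + θ) (by linarith) (by linarith)
    have hAb2 : ‖A (t + θ) - A (t + θ')‖ ≤ B * (θ' - θ) := by
      rw [norm_sub_rev]
      have := hALip (t + θ) (t + θ') (by linarith) (by linarith) (by linarith)
      rwa [show t + θ' - (t + θ) = θ' - θ by ring] at this
    have he2le : e2 ≤ 1 := Real.exp_le_one_iff.2 (neg_nonpos.2 (by positivity))
    have he2pos : 0 < e2 := Real.exp_pos _
    calc ‖(e1 - e2) • A (t + θ) + e2 • (A (t + θ) - A (t + θ'))‖
        ≤ ‖(e1 - e2) • A (t + θ)‖ + ‖e2 • (A (t + θ) - A (t + θ'))‖ := norm_add_le _ _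
      _ = |e1 - e2| * ‖A (t + θ)‖ + e2 * ‖A (t + θ) - A (t + θ')‖ := by
          rw [norm_smul_cm, norm_smul_cm, abs_of_pos he2pos]
      _ ≤ (α * (θ' - θ)) * MA + 1 * (B * (θ' - θ)) := by
          apply add_le_add
          · exact mul_le_mul hee hAb1 (norm_nonneg _) (by nlinarith)
          · exact mul_le_mul he2le hAb2 (norm_nonneg _) one_pos.le
      _ ≤ K * (θ' - θ) := by
          rw [hKdef]
          have hLφ0 : (0:ℝ) ≤ (Lφ : ℝ) := Lφ.coe_nonneg
          nlinarith
  have hkey : ∀ θ θ' : ℝ, θ ≤ θ' → θ' ≤ 0 →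
      ‖weightedHist α (fun θ : ℝ => A (t + θ)) θ -
        weightedHist α (fun θ : ℝ => A (t + θ)) θ'‖ ≤ K * (θ' - θ) := by
    intro θ θ' h1 h2
    by_cases hcase1 : θ' ≤ -t
    · exact hc1 θ θ' h1 hcase1
    · by_cases hcase2 : -t ≤ θ
      · exact hc2 θ θ' hcase2 h1 h2
      · push_neg at hcase1 hcase2
        have step1 := hc1 θ (-t) (le_of_lt hcase2) (le_refl _)
        have step2 := hc2 (-t) θ' (le_refl _) (le_of_lt hcase1) h2
        calc ‖weightedHist α (fun θ : ℝ => A (t + θ)) θ -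
              weightedHist α (fun θ : ℝ => A (t + θ)) θ'‖
            = ‖(weightedHist α (fun θ : ℝ => A (t + θ)) θ -
                weightedHist α (fun θ : ℝ => A (t + θ)) (-t)) +
                (weightedHist α (fun θ : ℝ => A (t + θ)) (-t) -
                weightedHist α (fun θ : ℝ => A (t + θ)) θ')‖ := by
              rw [sub_add_sub_cancel]
          _ ≤ _ + _ := norm_add_le _ _
          _ ≤ K * (-t - θ) + K * (θ' - -t) := add_le_add step1 step2
          _ = K * (θ' - θ) := by ring
  constructor
  · refine ⟨?_, ⟨CB, hbd⟩, ⟨K.toNNReal, ?_⟩⟩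
    · apply hAc.comp (continuous_const.add continuous_id).continuousOn
      intro θ hθ
      simp only [Set.mem_Iic, id, Pi.add_apply] at *
      linarith
    · apply LipschitzOnWith.of_dist_le_mul
      intro θ hθ θ' hθ'
      rw [Real.coe_toNNReal _ hK0, dist_eq_norm, Real.dist_eq]
      rcases le_total θ θ' with h | h
      · rw [abs_of_nonpos (by linarith)]
        have := hkey θ θ' h hθ'
        linarith [hkey θ θ' h hθ']
      · rw [abs_of_nonneg (by linarith), norm_sub_rev]
        linarith [hkey θ' θ h hθ]
  · have hS1 : sSup {c : ℝ | ∃ θ ≤ (0 : ℝ), c =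
        ‖weightedHist α (fun θ : ℝ => A (t + θ)) θ‖} ≤ CB := by
      apply Real.sSup_le _ hCB0
      rintro c ⟨θ, hθ, rfl⟩
      exact hbd θ hθ
    have hS2 : sSup {c : ℝ | ∃ θ ≤ (0 : ℝ), ∃ θ' ≤ (0 : ℝ), θ ≠ θ' ∧ c =
        ‖weightedHist α (fun θ : ℝ => A (t + θ)) θ -
          weightedHist α (fun θ : ℝ => A (t + θ)) θ'‖ / |θ - θ'|} ≤ K := by
      apply Real.sSup_le _ hK0
      rintro c ⟨θ, hθ, θ', hθ', hne, rfl⟩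
      rw [div_le_iff₀ (abs_pos.2 (sub_ne_zero.2 hne))]
      rcases le_total θ θ' with h | h
      · rw [abs_of_nonpos (by linarith)]
        have := hkey θ θ' h hθ'
        nlinarith [hkey θ θ' h hθ']
      · rw [abs_of_nonneg (by linarith), norm_sub_rev]
        nlinarith [hkey θ' θ h hθ]
    have : lipAlphaNorm α (fun θ : ℝ => A (t + θ)) ≤ CB + K := by
      unfold lipAlphaNorm
      exact add_le_add hS1 hS2
    linarith
end
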